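/- arXiv:1408.2786 — 7 statements merged into one kernel-verified Lean document; each statement's English description precedes it below -/
import Mathlib

section
/- Abel's generalization of the binomial theorem: for all real numbers u, v and every natural number n ≥ 1, (u+v)·(u+v+n)^(n-1) = ∑_{k=0}^{n} C(n,k) · u·(u+k)^(k-1) · v·(v+(n-k))^(n-k-1). -/
open Finset

lemma findiff : ∀ n : ℕ, ∀ j < n, ∀ x : ℝ,
    ∑ k ∈ Finset.range (n+1), (-1:ℝ)^k * (n.choose k) * (x + k)^j = 0 := by
  intro n
  induction n with
  | zero => intro j hj; omega
  | succ n ih =>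
    intro j hj x
    have key : ∑ k ∈ Finset.range (n+2), (-1:ℝ)^k * ((n+1).choose k) * (x+k)^j
        = ∑ k ∈ Finset.range (n+1), (-1:ℝ)^k * (n.choose k) * ((x+k)^j - (x+1+k)^j) := by
      rw [Finset.sum_range_succ' (fun k => (-1:ℝ)^k * ((n+1).choose k) * (x+k)^j) (n+1)]
      have hsplit : ∀ k ∈ Finset.range (n+1),
          (-1:ℝ)^(k+1) * ((n+1).choose (k+1)) * (x+(k+1:ℕ))^j
          = -((-1:ℝ)^k * (n.choose k) * (x+1+k)^j)
            + (-1:ℝ)^(k+1) * (n.choose (k+1)) * (x+(k+1:ℕ))^j := by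
        intro k hk
        rw [Nat.choose_succ_succ]
        push_cast
        ring
      rw [Finset.sum_congr rfl hsplit, Finset.sum_add_distrib]
      have h2 : ∑ k ∈ Finset.range (n+1), (-1:ℝ)^(k+1) * (n.choose (k+1)) * (x+(k+1:ℕ))^j
          = ∑ k ∈ Finset.range (n+2), (-1:ℝ)^k * (n.choose k) * (x+k)^j
            - (-1:ℝ)^0 * (n.choose 0) * (x+(0:ℕ))^j := by
        rw [Finset.sum_range_succ' (fun k => (-1:ℝ)^k * (n.choose k) * (x+k)^j) (n+1)]
        ring
      have h3 : ∑ k ∈ Finset.range (n+2), (-1:ℝ)^k * (n.choose k) * (x+k)^j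
          = ∑ k ∈ Finset.range (n+1), (-1:ℝ)^k * (n.choose k) * (x+k)^j := by
        rw [Finset.sum_range_succ]
        simp
      have h4 : ∑ k ∈ Finset.range (n+1), (-1:ℝ)^k * (n.choose k) * ((x+k)^j - (x+1+k)^j)
          = ∑ k ∈ Finset.range (n+1), (-1:ℝ)^k * (n.choose k) * (x+k)^j
            - ∑ k ∈ Finset.range (n+1), (-1:ℝ)^k * (n.choose k) * (x+1+k)^j := by
        rw [← Finset.sum_sub_distrib]
        exact Finset.sum_congr rfl fun k _ => by ring
      rw [h2, h3, h4]
      have h5 : ∑ k ∈ Finset.range (n+1), -((-1:ℝ)^k * (n.choose k) * (x+1+k)^j)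
          = -∑ k ∈ Finset.range (n+1), (-1:ℝ)^k * (n.choose k) * (x+1+k)^j :=
        Finset.sum_neg_distrib _
      rw [h5]
      simp
      ring
    rw [key]
    have exp : ∀ k ∈ Finset.range (n+1), (-1:ℝ)^k * (n.choose k) * ((x+k)^j - (x+1+k)^j)
        = ∑ i ∈ Finset.range j, -((j.choose i : ℝ) * ((-1:ℝ)^k * (n.choose k) * (x+k)^i)) := by
      intro k hk
      have hq : (x+1+(k:ℝ))^j
          = (∑ i ∈ Finset.range j, (x+(k:ℝ))^i * 1^(j-i) * (j.choose i)) + (x+(k:ℝ))^j := by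
        rw [show x+1+(k:ℝ) = (x+(k:ℝ)) + 1 by ring, add_pow, Finset.sum_range_succ]
        simp
      rw [hq]
      have hsub : (x+(k:ℝ))^j - ((∑ i ∈ Finset.range j, (x+(k:ℝ))^i * 1^(j-i) * (j.choose i)) + (x+(k:ℝ))^j)
          = -(∑ i ∈ Finset.range j, (x+(k:ℝ))^i * 1^(j-i) * (j.choose i)) := by ring
      rw [hsub, mul_neg, Finset.mul_sum, ← Finset.sum_neg_distrib]
      exact Finset.sum_congr rfl fun i _ => by simp; ring
    rw [Finset.sum_congr rfl exp, Finset.sum_comm]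
    apply Finset.sum_eq_zero
    intro i hi
    simp only [Finset.mem_range] at hi hj
    have hz : ∑ k ∈ Finset.range (n+1), (-1:ℝ)^k * (n.choose k) * (x+k)^i = 0 :=
      ih i (by omega) x
    calc ∑ k ∈ Finset.range (n+1), -((j.choose i : ℝ) * ((-1:ℝ)^k * (n.choose k) * (x+k)^i))
        = -((j.choose i : ℝ) * ∑ k ∈ Finset.range (n+1), (-1:ℝ)^k * (n.choose k) * (x+k)^i) := by
          rw [Finset.mul_sum, Finset.sum_neg_distrib]
      _ = 0 := by rw [hz]; ring

lemma abel1 : ∀ (n : ℕ) (x y : ℝ),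
    ∑ k ∈ Finset.range (n+1), (n.choose k : ℝ) *
      (if k = 0 then 1 else x * (x + (k:ℝ))^(k-1)) * (y + ((n-k:ℕ):ℝ))^(n-k)
    = (x + y + (n:ℝ))^n := by
  intro n
  induction n with
  | zero => intro x y; simp
  | succ n ih =>
    intro x y
    set A : ℕ → ℝ := fun k => if k = 0 then 1 else x * (x + (k:ℝ))^(k-1) with hA
    -- derivative of each summand
    have hterm : ∀ (z : ℝ), ∀ k ∈ Finset.range (n+2),
        HasDerivAt (fun y : ℝ => (((n+1).choose k : ℝ) * A k) * (y + ((n+1-k:ℕ):ℝ))^(n+1-k))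
          ((((n+1).choose k : ℝ) * A k) *
            (((n+1-k:ℕ):ℝ) * (z + ((n+1-k:ℕ):ℝ))^(n+1-k-1) * 1)) z := by
      intro z k _
      exact (((hasDerivAt_id z).add_const _).pow _).const_mul _
    have hsum : ∀ z : ℝ, HasDerivAt
        (fun y : ℝ => ∑ k ∈ Finset.range (n+2),
          (((n+1).choose k : ℝ) * A k) * (y + ((n+1-k:ℕ):ℝ))^(n+1-k))
        (∑ k ∈ Finset.range (n+2), (((n+1).choose k : ℝ) * A k) *
            (((n+1-k:ℕ):ℝ) * (z + ((n+1-k:ℕ):ℝ))^(n+1-k-1) * 1)) z :=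
      fun z => HasDerivAt.fun_sum (hterm z)
    have hpow : ∀ z : ℝ, HasDerivAt (fun y : ℝ => (x + y + ((n+1:ℕ):ℝ))^(n+1))
        (((n+1:ℕ):ℝ) * (x + z + ((n+1:ℕ):ℝ))^(n+1-1) * 1) z :=
      fun z => (((hasDerivAt_id z).const_add x).add_const _).pow _
    have hD : ∀ z : ℝ, (∑ k ∈ Finset.range (n+2), (((n+1).choose k : ℝ) * A k) *
          (((n+1-k:ℕ):ℝ) * (z + ((n+1-k:ℕ):ℝ))^(n+1-k-1) * 1))
        = ((n+1:ℕ):ℝ) * (x + z + ((n+1:ℕ):ℝ))^(n+1-1) * 1 := by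
      intro z
      rw [Finset.sum_range_succ]
      have hlast : (((n+1).choose (n+1) : ℝ) * A (n+1)) *
          (((n+1-(n+1):ℕ):ℝ) * (z + ((n+1-(n+1):ℕ):ℝ))^(n+1-(n+1)-1) * 1) = 0 := by
        simp
      rw [hlast, add_zero]
      have hcong : ∀ k ∈ Finset.range (n+1),
          (((n+1).choose k : ℝ) * A k) *
            (((n+1-k:ℕ):ℝ) * (z + ((n+1-k:ℕ):ℝ))^(n+1-k-1) * 1)
          = ((n+1:ℕ):ℝ) * ((n.choose k : ℝ) * A k * ((z+1) + ((n-k:ℕ):ℝ))^(n-k)) := by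
        intro k hk
        simp only [Finset.mem_range] at hk
        have e2 : n+1-k = (n-k)+1 := by omega
        rw [e2]
        have e2' : (n-k)+1-1 = n-k := by omega
        rw [e2']
        have e3 : (((n+1).choose k : ℕ):ℝ) * (((n-k)+1 : ℕ):ℝ)
            = ((n+1:ℕ):ℝ) * ((n.choose k : ℕ):ℝ) := by
          rw [← Nat.cast_mul, ← Nat.cast_mul]
          congr 1
          rw [← e2, ← Nat.choose_mul_succ_eq, Nat.mul_comm]
        push_cast at e3 ⊢
        linear_combination (A k * (z + 1 + ((n-k:ℕ):ℝ))^(n-k)) * e3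
      rw [Finset.sum_congr rfl hcong, ← Finset.mul_sum, ih x (z+1)]
      push_cast
      ring_nf
    -- F is constant
    have hF : ∀ z : ℝ, HasDerivAt (fun y : ℝ =>
        (∑ k ∈ Finset.range (n+2),
          (((n+1).choose k : ℝ) * A k) * (y + ((n+1-k:ℕ):ℝ))^(n+1-k))
        - (x + y + ((n+1:ℕ):ℝ))^(n+1)) 0 z := by
      intro z
      have h := (hsum z).sub (hpow z)
      rw [hD z, sub_self] at h
      exact h
    have hconst := is_const_of_deriv_eq_zero (f := fun y : ℝ =>
        (∑ k ∈ Finset.range (n+2),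
          (((n+1).choose k : ℝ) * A k) * (y + ((n+1-k:ℕ):ℝ))^(n+1-k))
        - (x + y + ((n+1:ℕ):ℝ))^(n+1))
      (fun z => (hF z).differentiableAt) (fun z => (hF z).deriv)
      y (-x - ((n+1:ℕ):ℝ))
    -- evaluate at y₀
    have hzero :
        (∑ k ∈ Finset.range (n+2), (((n+1).choose k : ℝ) * A k) *
          ((-x - ((n+1:ℕ):ℝ)) + ((n+1-k:ℕ):ℝ))^(n+1-k))
        - (x + (-x - ((n+1:ℕ):ℝ)) + ((n+1:ℕ):ℝ))^(n+1) = 0 := by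
      have hp0 : (x + (-x - ((n+1:ℕ):ℝ)) + ((n+1:ℕ):ℝ))^(n+1) = 0 := by
        rw [show x + (-x - ((n+1:ℕ):ℝ)) + ((n+1:ℕ):ℝ) = 0 by ring]
        simp
      rw [hp0, sub_zero]
      have hrw : ∀ k ∈ Finset.range (n+2),
          (((n+1).choose k : ℝ) * A k) *
            ((-x - ((n+1:ℕ):ℝ)) + ((n+1-k:ℕ):ℝ))^(n+1-k)
          = (x * (-1:ℝ)^(n+1)) * ((-1:ℝ)^k * (((n+1).choose k : ℝ)) * (x + (k:ℝ))^n) := by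
        intro k hk
        simp only [Finset.mem_range] at hk
        have hy : (-x - ((n+1:ℕ):ℝ)) + ((n+1-k:ℕ):ℝ) = -(x + (k:ℝ)) := by
          rw [Nat.cast_sub (by omega)]
          push_cast
          ring
        rw [hy, neg_pow]
        rcases Nat.eq_zero_or_pos k with hk0 | hk1
        · subst hk0
          simp only [hA, if_pos rfl, Nat.sub_zero, Nat.cast_zero, add_zero,
            Nat.choose_zero_right, Nat.cast_one, pow_zero]
          rw [pow_succ]
          ring
        · have hif : A k = x * (x + (k:ℝ))^(k-1) := by
            simp [hA, Nat.pos_iff_ne_zero.mp hk1]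
          rw [hif]
          have hpowadd : (x+(k:ℝ))^(k-1) * (x+(k:ℝ))^(n+1-k) = (x+(k:ℝ))^n := by
            rw [← pow_add]
            congr 1
            omega
          have hsgn : ((-1:ℝ)^k) * ((-1:ℝ)^k) = 1 := by
            rw [← pow_add]
            exact Even.neg_one_pow ⟨k, rfl⟩
          have hs : (-1:ℝ)^(n+1) = (-1:ℝ)^(n+1-k) * (-1:ℝ)^k := by
            rw [← pow_add]
            congr 1
            omega
          rw [hs]
          linear_combination ((((n+1).choose k : ℝ)) * x * (-1:ℝ)^(n+1-k)) * hpowadd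
            - (x * (-1:ℝ)^(n+1-k) * (((n+1).choose k : ℝ)) * (x+(k:ℝ))^n) * hsgn
      rw [Finset.sum_congr rfl hrw, ← Finset.mul_sum, findiff (n+1) n (by omega) x,
        mul_zero]
    rw [hzero] at hconst
    have : ∀ k, (((n+1).choose k : ℝ) * A k) * (y + ((n+1-k:ℕ):ℝ))^(n+1-k)
        = ((n+1).choose k : ℝ) * A k * (y + ((n+1-k:ℕ):ℝ))^(n+1-k) := fun k => by ring
    have hgoal := sub_eq_zero.mp hconst
    push_cast at hgoal ⊢
    convert hgoal using 2

/-- Abel's generalization of the binomial theorem. -/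
theorem abel_binomial (u v : ℝ) (n : ℕ) (hn : 1 ≤ n) :
    (u + v) * (u + v + (n : ℝ)) ^ (n - 1) =
      ∑ k ∈ Finset.range (n + 1), (n.choose k : ℝ) *
        (if k = 0 then 1 else u * (u + (k : ℝ)) ^ (k - 1)) *
        (if k = n then 1 else v * (v + ((n - k : ℕ) : ℝ)) ^ (n - k - 1)) := by
  have h1 := abel1 n u v
  have h2 := abel1 (n-1) u (v+1)
  have hsplit : ∀ k ∈ Finset.range (n+1),
      (n.choose k : ℝ) * (if k = 0 then 1 else u * (u + (k:ℝ))^(k-1)) *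
        (if k = n then 1 else v * (v + ((n-k:ℕ):ℝ))^(n-k-1))
      = (n.choose k : ℝ) * (if k = 0 then 1 else u * (u + (k:ℝ))^(k-1)) *
          (v + ((n-k:ℕ):ℝ))^(n-k)
        - ((n-k:ℕ):ℝ) * ((n.choose k : ℝ) *
            (if k = 0 then 1 else u * (u + (k:ℝ))^(k-1)) *
            (v + ((n-k:ℕ):ℝ))^(n-k-1)) := by
    intro k hk
    simp only [Finset.mem_range] at hk
    by_cases hkn : k = n
    · subst hkn
      simp
    · rw [if_neg hkn]
      have hp : (v + ((n-k:ℕ):ℝ))^(n-k)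
          = (v + ((n-k:ℕ):ℝ))^(n-k-1) * (v + ((n-k:ℕ):ℝ)) := by
        rw [← pow_succ]
        congr 1
        omega
      rw [hp]
      have hc : ((n-k:ℕ):ℝ) = (n:ℝ) - (k:ℝ) := by
        rw [Nat.cast_sub (by omega)]
      rw [hc]
      ring
  rw [Finset.sum_congr rfl hsplit, Finset.sum_sub_distrib, h1]
  have hs2 : ∑ k ∈ Finset.range (n+1), ((n-k:ℕ):ℝ) * ((n.choose k : ℝ) *
        (if k = 0 then 1 else u * (u + (k:ℝ))^(k-1)) * (v + ((n-k:ℕ):ℝ))^(n-k-1))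
      = (n:ℝ) * (u + (v+1) + ((n-1:ℕ):ℝ))^(n-1) := by
    rw [Finset.sum_range_succ]
    have hlast : ((n-n:ℕ):ℝ) * ((n.choose n : ℝ) *
        (if n = 0 then 1 else u * (u + (n:ℝ))^(n-1)) * (v + ((n-n:ℕ):ℝ))^(n-n-1)) = 0 := by
      simp
    rw [hlast, add_zero]
    have hrange : Finset.range n = Finset.range ((n-1)+1) := by congr 1; omega
    rw [hrange]
    have hcong : ∀ k ∈ Finset.range ((n-1)+1),
        ((n-k:ℕ):ℝ) * ((n.choose k : ℝ) *
          (if k = 0 then 1 else u * (u + (k:ℝ))^(k-1)) * (v + ((n-k:ℕ):ℝ))^(n-k-1))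
        = (n:ℝ) * (((n-1).choose k : ℝ) *
            (if k = 0 then 1 else u * (u + (k:ℝ))^(k-1)) *
            ((v+1) + ((n-1-k:ℕ):ℝ))^(n-1-k)) := by
      intro k hk
      simp only [Finset.mem_range] at hk
      have e2 : n-k = (n-1-k)+1 := by omega
      rw [e2]
      have e2' : (n-1-k)+1-1 = n-1-k := by omega
      rw [e2']
      have e3 : ((n.choose k : ℕ):ℝ) * ((((n-1-k)+1) : ℕ):ℝ)
          = ((n:ℕ):ℝ) * (((n-1).choose k : ℕ):ℝ) := by
        rw [← Nat.cast_mul, ← Nat.cast_mul]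
        congr 1
        have := Nat.choose_mul_succ_eq (n-1) k
        rw [show (n-1)+1 = n by omega] at this
        rw [show (n-1-k)+1 = n-k by omega, ← this, Nat.mul_comm]
      push_cast at e3 ⊢
      linear_combination ((if k = 0 then (1:ℝ) else u * (u + (k:ℝ))^(k-1)) *
        ((v+1) + ((n-1-k:ℕ):ℝ))^(n-1-k)) * e3
    rw [Finset.sum_congr rfl hcong, ← Finset.mul_sum, h2]
  rw [hs2]
  have hc1 : ((n-1:ℕ):ℝ) = (n:ℝ) - 1 := by
    rw [Nat.cast_sub hn]; norm_num
  rw [hc1]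
  rw [show u + (v+1) + ((n:ℝ) - 1) = u + v + (n:ℝ) by ring]
  have hpown : (u + v + (n:ℝ))^n = (u + v + (n:ℝ))^(n-1) * (u + v + (n:ℝ)) := by
    rw [← pow_succ]
    congr 1
    omega
  rw [hpown]
  ring
end

section
/- Full-sum variant of the hook summation formula: with notation as in the hook summation formula, for n ≥ 1, Θ_n := ∑ over increasing trees T on {1,…,n} of (∏_{i=2}^{n} x_{f_T(i)})·(∏_{i=1}^{n} ∑_{j ∈ h_T(i)} y_{i,j}) equals y_{n,n} · ∏_{i=1}^{n-1} ( y_{i,i}·∑_{j=1}^{i} x_j + x_i·∑_{j=i+1}^{n} y_{i,j} ). -/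
open Finset

open scoped Classical in
/-- The hook of vertex `i` in the tree with parent function `p`. -/
noncomputable def hook {N : ℕ} (p : Fin N → Fin N) (i : Fin N) : Finset (Fin N) :=
  Finset.univ.filter fun j => ∃ k : ℕ, p^[k] j = i

/-! ### Auxiliary algebraic lemma (telescoping) -/

lemma key_tele {R : Type*} [CommRing R] (x C : ℕ → R) :
    ∀ (m : ℕ) (D : R) (z : ℕ → R),
    ∑ a ∈ range (m+1), x a * (D + if a = m then z m else 0) *
      ∏ i ∈ range m, (C i + (if i = a then z i * (∑ j ∈ range (i+1), x j) else 0)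
        + (if i < a then x i * z i else 0))
    = (D * (∑ j ∈ range (m+1), x j) + x m * z m) * ∏ i ∈ range m, (C i + x i * z i) := by
  intro m
  induction m with
  | zero =>
    intro D z
    simp [Finset.sum_range_one]
    ring
  | succ m ih =>
    intro D z
    rw [Finset.sum_range_succ]
    have hlast : x (m+1) * (D + if m+1 = m+1 then z (m+1) else 0) *
        ∏ i ∈ range (m+1), (C i + (if i = m+1 then z i * (∑ j ∈ range (i+1), x j) else 0)
          + (if i < m+1 then x i * z i else 0))
        = x (m+1) * (D + z (m+1)) * ∏ i ∈ range (m+1), (C i + x i * z i) := by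
      rw [if_pos rfl]
      congr 1
      apply Finset.prod_congr rfl
      intro i hi
      rw [Finset.mem_range] at hi
      rw [if_neg (by omega), if_pos hi]
      ring
    rw [hlast]
    have hmain : ∑ a ∈ range (m+1), x a * (D + if a = m+1 then z (m+1) else 0) *
        ∏ i ∈ range (m+1), (C i + (if i = a then z i * (∑ j ∈ range (i+1), x j) else 0)
          + (if i < a then x i * z i else 0))
        = ∑ a ∈ range (m+1), (x a * D *
          ∏ i ∈ range m, (C i + (if i = a then z i * (∑ j ∈ range (i+1), x j) else 0)
            + (if i < a then x i * z i else 0))) * (C m + (if a = m then z m * (∑ j ∈ range (m+1), x j) else 0)) := by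
      apply Finset.sum_congr rfl
      intro a ha
      rw [Finset.mem_range] at ha
      rw [if_neg (show ¬ a = m+1 by omega), Finset.prod_range_succ,
        if_neg (show ¬ m < a by omega), add_zero, add_zero,
        show (if m = a then z m * (∑ j ∈ range (m+1), x j) else 0)
          = (if a = m then z m * (∑ j ∈ range (m+1), x j) else 0) by simp [eq_comm]]
      ring
    rw [hmain]
    have hsplit : ∀ a ∈ range (m+1), (x a * D *
          ∏ i ∈ range m, (C i + (if i = a then z i * (∑ j ∈ range (i+1), x j) else 0)
            + (if i < a then x i * z i else 0))) * (C m + (if a = m then z m * (∑ j ∈ range (m+1), x j) else 0))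
        = (x a * D *
          ∏ i ∈ range m, (C i + (if i = a then z i * (∑ j ∈ range (i+1), x j) else 0)
            + (if i < a then x i * z i else 0))) * C m
          + (if a = m then (x a * D *
          ∏ i ∈ range m, (C i + (if i = a then z i * (∑ j ∈ range (i+1), x j) else 0)
            + (if i < a then x i * z i else 0))) * (z m * (∑ j ∈ range (m+1), x j)) else 0) := by
      intro a _
      by_cases h : a = m <;> simp [h] <;> ring
    rw [Finset.sum_congr rfl hsplit, Finset.sum_add_distrib, Finset.sum_ite_eq' (range (m+1)) m]
    rw [if_pos (by simp)]
    have hm2 : (x m * D *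
          ∏ i ∈ range m, (C i + (if i = m then z i * (∑ j ∈ range (i+1), x j) else 0)
            + (if i < m then x i * z i else 0))) * (z m * (∑ j ∈ range (m+1), x j))
        = x m * D * z m * (∑ j ∈ range (m+1), x j) * ∏ i ∈ range m, (C i + x i * z i) := by
      have : ∏ i ∈ range m, (C i + (if i = m then z i * (∑ j ∈ range (i+1), x j) else 0)
            + (if i < m then x i * z i else 0)) = ∏ i ∈ range m, (C i + x i * z i) := by
        apply Finset.prod_congr rfl
        intro i hi
        rw [Finset.mem_range] at hi
        rw [if_neg (by omega), if_pos hi]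
        ring
      rw [this]; ring
    rw [hm2]
    have hS : ∑ a ∈ range (m+1), (x a * D *
          ∏ i ∈ range m, (C i + (if i = a then z i * (∑ j ∈ range (i+1), x j) else 0)
            + (if i < a then x i * z i else 0))) * C m
        = D * (∑ j ∈ range (m+1), x j) * (∏ i ∈ range m, (C i + x i * z i)) * C m := by
      rw [← Finset.sum_mul]
      congr 1
      have hih := ih D (Function.update z m 0)
      have hconv : ∑ a ∈ range (m+1), x a * (D + if a = m then Function.update z m 0 m else 0) *
        ∏ i ∈ range m, (C i + (if i = a then Function.update z m 0 i * (∑ j ∈ range (i+1), x j) else 0)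
          + (if i < a then x i * Function.update z m 0 i else 0))
          = ∑ a ∈ range (m+1), (x a * D *
            ∏ i ∈ range m, (C i + (if i = a then z i * (∑ j ∈ range (i+1), x j) else 0)
              + (if i < a then x i * z i else 0))) := by
        apply Finset.sum_congr rfl
        intro a ha
        rw [Finset.mem_range] at ha
        have h1 : (if a = m then Function.update z m 0 m else 0) = 0 := by
          by_cases h : a = m <;> simp [h]
        rw [h1, add_zero]
        have h2 : ∏ i ∈ range m, (C i + (if i = a then Function.update z m 0 i * (∑ j ∈ range (i+1), x j) else 0)
          + (if i < a then x i * Function.update z m 0 i else 0))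
          = ∏ i ∈ range m, (C i + (if i = a then z i * (∑ j ∈ range (i+1), x j) else 0)
              + (if i < a then x i * z i else 0)) := by
          apply Finset.prod_congr rfl
          intro i hi
          rw [Finset.mem_range] at hi
          rw [Function.update_of_ne (by omega)]
        rw [h2]
      rw [hconv] at hih
      rw [hih, Function.update_self]
      have h3 : ∏ i ∈ range m, (C i + x i * Function.update z m 0 i)
          = ∏ i ∈ range m, (C i + x i * z i) := by
        apply Finset.prod_congr rfl
        intro i hi
        rw [Finset.mem_range] at hi
        rw [Function.update_of_ne (by omega)]
      rw [h3]
      ring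
    rw [hS]
    rw [Finset.prod_range_succ, Finset.sum_range_succ (f := x) (n := m+1)]
    ring

/-! ### Interval and erase conversions -/

section Helpers

variable {M : Type*} [AddCommMonoid M] {P : Type*} [CommMonoid P]

lemma prod_erase_eq_prod_ite {α : Type*} [Fintype α] [DecidableEq α] (f : α → P) (a : α) :
    ∏ i ∈ univ.erase a, f i = ∏ i : α, if i = a then 1 else f i := by
  rw [← Finset.mul_prod_erase univ (fun i => if i = a then 1 else f i) (mem_univ a),
    if_pos rfl, one_mul]
  apply Finset.prod_congr rfl
  intro i hi
  rw [if_neg (Finset.ne_of_mem_erase hi)]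

lemma prod_erase_last {N : ℕ} (f : Fin (N+1) → P) :
    ∏ i ∈ univ.erase (Fin.last N), f i = ∏ i : Fin N, f i.castSucc := by
  rw [prod_erase_eq_prod_ite, Fin.prod_univ_castSucc, if_pos rfl, mul_one]
  apply Finset.prod_congr rfl
  intro i _
  rw [if_neg (Fin.castSucc_lt_last i).ne]

lemma prod_erase_zero {N : ℕ} (f : Fin (N+2) → P) :
    ∏ i ∈ univ.erase (0 : Fin (N+2)), f i
      = (∏ i ∈ (univ : Finset (Fin (N+1))).erase 0, f i.castSucc) * f (Fin.last (N+1)) := by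
  rw [prod_erase_eq_prod_ite, Fin.prod_univ_castSucc,
    if_neg (by simp [Fin.ext_iff]), prod_erase_eq_prod_ite]
  congr 1
  apply Finset.prod_congr rfl
  intro i _
  congr 1
  simp only [Fin.castSucc_eq_zero_iff]

lemma sum_Iic_castSucc {N : ℕ} (f : Fin (N+1) → M) (i : Fin N) :
    ∑ j ∈ Finset.Iic i.castSucc, f j = ∑ j ∈ Finset.Iic i, f j.castSucc := by
  have him : Finset.Iic i.castSucc = (Finset.Iic i).image Fin.castSucc := by
    ext j
    simp only [Finset.mem_Iic, Finset.mem_image]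
    constructor
    · intro hj
      have hne : j ≠ Fin.last N := (lt_of_le_of_lt hj (Fin.castSucc_lt_last i)).ne
      obtain ⟨j', rfl⟩ := Fin.exists_castSucc_eq.mpr hne
      exact ⟨j', by rwa [Fin.castSucc_le_castSucc_iff] at hj, rfl⟩
    · rintro ⟨j', hj', rfl⟩
      rwa [Fin.castSucc_le_castSucc_iff]
  rw [him, Finset.sum_image (fun a _ b _ h => Fin.castSucc_injective _ h)]

lemma sum_Ioi_castSucc {N : ℕ} (f : Fin (N+1) → M) (i : Fin N) :
    ∑ j ∈ Finset.Ioi i.castSucc, f j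
      = (∑ j ∈ Finset.Ioi i, f j.castSucc) + f (Fin.last N) := by
  have him : Finset.Ioi i.castSucc = insert (Fin.last N) ((Finset.Ioi i).image Fin.castSucc) := by
    ext j
    simp only [Finset.mem_Ioi, Finset.mem_insert, Finset.mem_image]
    constructor
    · intro hj
      by_cases h : j = Fin.last N
      · exact Or.inl h
      · obtain ⟨j', rfl⟩ := Fin.exists_castSucc_eq.mpr h
        exact Or.inr ⟨j', by rwa [Fin.castSucc_lt_castSucc_iff] at hj, rfl⟩
    · rintro (rfl | ⟨j', hj', rfl⟩)
      · exact Fin.castSucc_lt_last i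
      · rwa [Fin.castSucc_lt_castSucc_iff]
  have hnot : Fin.last N ∉ (Finset.Ioi i).image Fin.castSucc := by
    simp only [Finset.mem_image, not_exists]
    rintro j' ⟨-, hj'⟩
    exact (Fin.castSucc_lt_last j').ne hj'
  rw [him, Finset.sum_insert hnot,
    Finset.sum_image (fun a _ b _ h => Fin.castSucc_injective _ h), add_comm]

lemma sum_Iic_eq_range {N : ℕ} (f : Fin N → M) (i : Fin N) :
    ∑ j ∈ Finset.Iic i, f j
      = ∑ k ∈ range ((i : ℕ) + 1), (if h : k < N then f ⟨k, h⟩ else 0) := by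
  refine Finset.sum_nbij' (fun j => (j : ℕ))
    (fun k => if h : k < N then (⟨k, h⟩ : Fin N) else i) ?_ ?_ ?_ ?_ ?_
  · intro j hj
    rw [Finset.mem_Iic] at hj
    rw [Finset.mem_range]
    exact Nat.lt_succ_of_le hj
  · intro k hk
    rw [Finset.mem_range] at hk
    have hkN : k < N := lt_of_lt_of_le hk (Nat.succ_le_of_lt i.isLt)
    simp only [dif_pos hkN, Finset.mem_Iic]
    exact Fin.mk_le_of_le_val (Nat.lt_succ_iff.mp hk)
  · intro j _
    simp [j.isLt]
  · intro k hk
    rw [Finset.mem_range] at hk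
    have hkN : k < N := lt_of_lt_of_le hk (Nat.succ_le_of_lt i.isLt)
    simp [hkN]
  · intro j hj
    simp [j.isLt]

end Helpers

/-! ### Structure of increasing trees -/

section Struct

open scoped Classical

variable {n : ℕ}

lemma mem_hook {N : ℕ} {p : Fin N → Fin N} {i j : Fin N} :
    j ∈ hook p i ↔ ∃ k : ℕ, p^[k] j = i := by simp [hook]

lemma iterate_le {N : ℕ} {p : Fin N → Fin N} (hp : ∀ j, p j ≤ j) (k : ℕ) (j : Fin N) :
    p^[k] j ≤ j := by
  induction k with
  | zero => exact le_refl _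
  | succ k ih => rw [Function.iterate_succ_apply']; exact le_trans (hp _) ih

lemma tree_le {N : ℕ} {p : Fin (N+1) → Fin (N+1)} (h0 : p 0 = 0)
    (hlt : ∀ i, i ≠ 0 → p i < i) : ∀ j, p j ≤ j := by
  intro j
  by_cases h : j = 0
  · subst h; rw [h0]
  · exact (hlt j h).le

lemma hook_last {N : ℕ} {p : Fin (N+1) → Fin (N+1)} (hp : ∀ j, p j ≤ j) :
    hook p (Fin.last N) = {Fin.last N} := by
  ext j
  simp only [mem_hook, Finset.mem_singleton]
  constructor
  · rintro ⟨k, hk⟩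
    exact le_antisymm (Fin.le_last j) (hk ▸ iterate_le hp k j)
  · rintro rfl; exact ⟨0, rfl⟩

/-- Extend a tree on `Fin (n+1)` by attaching `last` to `a`. -/
noncomputable def extT (q : Fin (n+1) → Fin (n+1)) (a : Fin (n+1)) :
    Fin (n+2) → Fin (n+2) :=
  fun j => if h : j = Fin.last (n+1) then a.castSucc else (q (j.castPred h)).castSucc

lemma extT_castSucc (q : Fin (n+1) → Fin (n+1)) (a : Fin (n+1)) (i : Fin (n+1)) :
    extT q a i.castSucc = (q i).castSucc := by
  have h : i.castSucc ≠ Fin.last (n+1) := (Fin.castSucc_lt_last i).ne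
  simp [extT, h]

lemma extT_last (q : Fin (n+1) → Fin (n+1)) (a : Fin (n+1)) :
    extT q a (Fin.last (n+1)) = a.castSucc := by simp [extT]

lemma extT_iterate (q : Fin (n+1) → Fin (n+1)) (a : Fin (n+1)) (k : ℕ) (j : Fin (n+1)) :
    (extT q a)^[k] j.castSucc = (q^[k] j).castSucc := by
  induction k generalizing j with
  | zero => rfl
  | succ k ih =>
    rw [Function.iterate_succ_apply, Function.iterate_succ_apply, extT_castSucc, ih]

lemma hook_extT_castSucc (q : Fin (n+1) → Fin (n+1)) (a : Fin (n+1)) (i j : Fin (n+1)) :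
    j.castSucc ∈ hook (extT q a) i.castSucc ↔ j ∈ hook q i := by
  simp only [mem_hook]
  constructor
  · rintro ⟨k, hk⟩
    rw [extT_iterate] at hk
    exact ⟨k, Fin.castSucc_injective _ hk⟩
  · rintro ⟨k, hk⟩
    exact ⟨k, by rw [extT_iterate, hk]⟩

lemma hook_extT_last (q : Fin (n+1) → Fin (n+1)) (a : Fin (n+1)) (i : Fin (n+1)) :
    Fin.last (n+1) ∈ hook (extT q a) i.castSucc ↔ a ∈ hook q i := by
  simp only [mem_hook]
  constructor
  · rintro ⟨k, hk⟩
    cases k with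
    | zero =>
      exact absurd hk.symm (Fin.castSucc_lt_last i).ne
    | succ k =>
      rw [Function.iterate_succ_apply, extT_last, extT_iterate] at hk
      exact ⟨k, Fin.castSucc_injective _ hk⟩
  · rintro ⟨k, hk⟩
    exact ⟨k + 1, by rw [Function.iterate_succ_apply, extT_last, extT_iterate, hk]⟩

lemma hook_sum_ext {R : Type*} [AddCommMonoid R] (q : Fin (n+1) → Fin (n+1)) (a : Fin (n+1))
    (i : Fin (n+1)) (f : Fin (n+2) → R) :
    ∑ j ∈ hook (extT q a) i.castSucc, f j
      = ∑ j ∈ hook q i, (f j.castSucc + if j = a then f (Fin.last (n+1)) else 0) := by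
  rw [hook, Finset.sum_filter, Fin.sum_univ_castSucc]
  have h1 : ∀ j : Fin (n+1),
      (if ∃ k : ℕ, (extT q a)^[k] j.castSucc = i.castSucc then f j.castSucc else 0)
      = if j ∈ hook q i then f j.castSucc else 0 := by
    intro j
    congr 1
    simp only [eq_iff_iff]
    rw [← mem_hook, hook_extT_castSucc]
  have h2 : (if ∃ k : ℕ, (extT q a)^[k] (Fin.last (n+1)) = i.castSucc
        then f (Fin.last (n+1)) else 0)
      = if a ∈ hook q i then f (Fin.last (n+1)) else 0 := by
    congr 1
    simp only [eq_iff_iff]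
    rw [← mem_hook (p := extT q a), hook_extT_last]
  rw [Finset.sum_congr rfl (fun j _ => h1 j), h2, Finset.sum_add_distrib,
    Finset.sum_ite_eq' (hook q i) a (fun _ => f (Fin.last (n+1))), ← Finset.sum_filter,
    Finset.filter_univ_mem]

/-- Restriction of a tree on `Fin (n+2)` to `Fin (n+1)`. -/
noncomputable def resT (p : Fin (n+2) → Fin (n+2)) : Fin (n+1) → Fin (n+1) :=
  fun i => if h : (p i.castSucc : ℕ) < n + 1 then ⟨(p i.castSucc : ℕ), h⟩ else 0

noncomputable def aOf (p : Fin (n+2) → Fin (n+2)) : Fin (n+1) :=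
  if h : (p (Fin.last (n+1)) : ℕ) < n + 1 then ⟨(p (Fin.last (n+1)) : ℕ), h⟩ else 0

lemma ext_res {p : Fin (n+2) → Fin (n+2)} (h0 : p 0 = 0)
    (hlt : ∀ i, i ≠ 0 → p i < i) : extT (resT p) (aOf p) = p := by
  funext j
  by_cases h : j = Fin.last (n+1)
  · subst h
    rw [extT_last]
    have hlast : p (Fin.last (n+1)) < Fin.last (n+1) :=
      hlt _ (by simp [Fin.ext_iff])
    have hv : (p (Fin.last (n+1)) : ℕ) < n + 1 := by
      simpa [Fin.lt_def] using hlast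
    rw [aOf, dif_pos hv]
    rfl
  · obtain ⟨i, rfl⟩ := Fin.exists_castSucc_eq.mpr h
    rw [extT_castSucc]
    have hv : (p i.castSucc : ℕ) < n + 1 := by
      by_cases h2 : i.castSucc = (0 : Fin (n+2))
      · rw [h2, h0]; simp
      · have h3 := Fin.lt_def.mp (hlt _ h2)
        have h5 : (i : ℕ) < n + 1 := i.isLt
        have h4 : ((i.castSucc : Fin (n+2)) : ℕ) = (i : ℕ) := rfl
        omega
    rw [resT, dif_pos hv]
    rfl

lemma res_ext (q : Fin (n+1) → Fin (n+1)) (a : Fin (n+1)) : resT (extT q a) = q := by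
  funext i
  have hv : (((q i).castSucc : Fin (n+2)) : ℕ) < n + 1 := by
    simpa using (q i).isLt
  simp [resT, extT_castSucc, dif_pos hv, Fin.ext_iff]
  intro h; have := (q i).isLt; omega

lemma aOf_ext (q : Fin (n+1) → Fin (n+1)) (a : Fin (n+1)) : aOf (extT q a) = a := by
  have hv : ((a.castSucc : Fin (n+2)) : ℕ) < n + 1 := by simpa using a.isLt
  simp [aOf, extT_last, dif_pos hv, Fin.ext_iff]
  intro h; have := a.isLt; omega

lemma extT_isTree {q : Fin (n+1) → Fin (n+1)} (h0 : q 0 = 0)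
    (hlt : ∀ i, i ≠ 0 → q i < i) (a : Fin (n+1)) :
    extT q a 0 = 0 ∧ ∀ j, j ≠ 0 → extT q a j < j := by
  constructor
  · have h : (0 : Fin (n+2)) = (0 : Fin (n+1)).castSucc := by simp
    rw [h, extT_castSucc, h0, Fin.castSucc_zero]
  · intro j hj
    by_cases h : j = Fin.last (n+1)
    · subst h
      rw [extT_last]
      exact Fin.castSucc_lt_last a
    · obtain ⟨i, rfl⟩ := Fin.exists_castSucc_eq.mpr h
      rw [extT_castSucc, Fin.castSucc_lt_castSucc_iff]
      apply hlt
      intro h0'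
      apply hj
      rw [h0', Fin.castSucc_zero]

lemma sum_trees {R : Type*} [AddCommMonoid R] (F : (Fin (n+2) → Fin (n+2)) → R) :
    ∑ p ∈ (Finset.univ.filter fun p : Fin (n+2) → Fin (n+2) =>
        p 0 = 0 ∧ ∀ i, i ≠ 0 → p i < i), F p
    = ∑ aq ∈ (Finset.univ : Finset (Fin (n+1))) ×ˢ
        (Finset.univ.filter fun q : Fin (n+1) → Fin (n+1) =>
          q 0 = 0 ∧ ∀ i, i ≠ 0 → q i < i), F (extT aq.2 aq.1) := by
  apply Finset.sum_nbij' (i := fun p => (aOf p, resT p)) (j := fun aq => extT aq.2 aq.1)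
  · intro p hp
    rw [Finset.mem_filter] at hp
    obtain ⟨-, h0, hlt⟩ := hp
    rw [Finset.mem_product, Finset.mem_filter]
    refine ⟨Finset.mem_univ _, Finset.mem_univ _, ?_, ?_⟩
    · have h00 : p ((0 : Fin (n+1)).castSucc) = (0 : Fin (n+2)) := by
        rw [Fin.castSucc_zero, h0]
      simp only [resT, h00]
      simp [Fin.ext_iff]
    · intro i hi
      have hic : (i.castSucc : Fin (n+2)) ≠ 0 := by
        simp [Fin.castSucc_eq_zero_iff, hi]
      have hval : (p i.castSucc : ℕ) < (i : ℕ) := by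
        simpa [Fin.lt_def] using hlt i.castSucc hic
      have hval2 : (p i.castSucc : ℕ) < n + 1 := lt_of_lt_of_le hval (by omega)
      simp only [resT, dif_pos hval2]
      rw [Fin.lt_def]
      exact hval
  · rintro ⟨a, q⟩ haq
    rw [Finset.mem_product, Finset.mem_filter] at haq
    obtain ⟨-, -, h0, hlt⟩ := haq
    rw [Finset.mem_filter]
    exact ⟨Finset.mem_univ _, extT_isTree h0 hlt a⟩
  · intro p hp
    rw [Finset.mem_filter] at hp
    obtain ⟨-, h0, hlt⟩ := hp
    exact ext_res h0 hlt
  · rintro ⟨a, q⟩ haq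
    simp only
    rw [Prod.mk.injEq]
    exact ⟨aOf_ext q a, res_ext q a⟩
  · intro p hp
    rw [Finset.mem_filter] at hp
    obtain ⟨-, h0, hlt⟩ := hp
    simp only
    rw [ext_res h0 hlt]

end Struct

/-- The modified `y`-matrix after removal of the largest vertex, whose parent is `a`. -/
def Ymod {R : Type*} [CommRing R] {n : ℕ} (y : Fin (n+2) → Fin (n+2) → R)
    (a : Fin (n+1)) (i j : Fin (n+1)) : R :=
  y i.castSucc j.castSucc + if j = a then y i.castSucc (Fin.last (n+1)) else 0

open scoped Classical in
/-- Full-sum variant of the hook summation formula (Theorem 4.1 of the paper), for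
`n ≥ 1` (here `n + 1`): the product of hook sums runs over ALL vertices including the
root.  Vertices `{1, …, n}` are encoded as `Fin n`, the root `1` being `0 : Fin n`. -/
theorem hook_summation_full {R : Type*} [CommRing R] (n : ℕ)
    (x : Fin (n + 1) → R) (y : Fin (n + 1) → Fin (n + 1) → R) :
    ∑ p ∈ (Finset.univ.filter fun p : Fin (n + 1) → Fin (n + 1) =>
        p 0 = 0 ∧ ∀ i, i ≠ 0 → p i < i),
      (∏ i ∈ Finset.univ.erase (0 : Fin (n + 1)), x (p i)) *
        ∏ i : Fin (n + 1), ∑ j ∈ hook p i, y i j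
    = y (Fin.last n) (Fin.last n) *
        ∏ i ∈ Finset.univ.erase (Fin.last n),
          (y i i * ∑ j ∈ Finset.Iic i, x j + x i * ∑ j ∈ Finset.Ioi i, y i j) := by
  induction n with
  | zero =>
    have h1 : (Finset.univ.filter fun p : Fin 1 → Fin 1 =>
        p 0 = 0 ∧ ∀ i, i ≠ 0 → p i < i) = Finset.univ := by
      apply Finset.filter_true_of_mem
      intro p _
      exact ⟨Subsingleton.elim _ _, fun i hi => absurd (Subsingleton.elim i 0) hi⟩
    rw [h1]
    have h2 : ∀ p : Fin 1 → Fin 1, hook p 0 = {0} := by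
      intro p
      ext j
      simp only [hook, Finset.mem_filter, Finset.mem_univ, true_and, Finset.mem_singleton]
      constructor
      · intro _; exact Subsingleton.elim _ _
      · rintro rfl; exact ⟨0, Subsingleton.elim _ _⟩
    have h3 : ∀ p : Fin 1 → Fin 1,
        (∏ i ∈ Finset.univ.erase (0 : Fin 1), x (p i)) *
          ∏ i : Fin 1, ∑ j ∈ hook p i, y i j = y 0 0 := by
      intro p
      rw [Fin.prod_univ_one, h2, Finset.sum_singleton]
      have : (Finset.univ : Finset (Fin 1)).erase 0 = ∅ := by decide
      rw [this, Finset.prod_empty, one_mul]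
    rw [Finset.sum_congr rfl (fun p _ => h3 p)]
    have h4 : (Finset.univ : Finset (Fin 1)).erase (Fin.last 0) = ∅ := by decide
    rw [h4, Finset.prod_empty, mul_one, Finset.sum_const, Finset.card_univ]
    show (Fintype.card (Fin 1 → Fin 1)) • y 0 0 = y (Fin.last 0) (Fin.last 0)
    have : Fintype.card (Fin 1 → Fin 1) = 1 := by simp
    rw [this, one_smul]
    rfl
  | succ n ih =>
    rw [sum_trees (F := fun p => (∏ i ∈ Finset.univ.erase (0 : Fin (n+2)), x (p i)) *
        ∏ i : Fin (n+2), ∑ j ∈ hook p i, y i j), Finset.sum_product]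
    -- Step 1: evaluate the inner sum over trees using the induction hypothesis
    have hinner : ∀ a : Fin (n+1),
        (∑ q ∈ Finset.univ.filter fun q : Fin (n+1) → Fin (n+1) =>
            q 0 = 0 ∧ ∀ i, i ≠ 0 → q i < i,
          (∏ i ∈ Finset.univ.erase (0 : Fin (n+2)), x (extT q a i)) *
            ∏ i : Fin (n+2), ∑ j ∈ hook (extT q a) i, y i j)
        = x a.castSucc * y (Fin.last (n+1)) (Fin.last (n+1)) *
          (Ymod y a (Fin.last n) (Fin.last n) *
            ∏ i ∈ Finset.univ.erase (Fin.last n),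
              (Ymod y a i i * ∑ j ∈ Finset.Iic i, x j.castSucc
                + x i.castSucc * ∑ j ∈ Finset.Ioi i, Ymod y a i j)) := by
      intro a
      rw [← ih (fun i => x i.castSucc) (Ymod y a), Finset.mul_sum]
      apply Finset.sum_congr rfl
      intro q hq
      rw [Finset.mem_filter] at hq
      obtain ⟨-, h0, hlt⟩ := hq
      obtain ⟨he0, helt⟩ := extT_isTree h0 hlt a
      have hW : ∏ i ∈ Finset.univ.erase (0 : Fin (n+2)), x (extT q a i)
          = (∏ i ∈ (Finset.univ : Finset (Fin (n+1))).erase 0, x ((q i).castSucc))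
            * x a.castSucc := by
        rw [prod_erase_zero (f := fun i => x (extT q a i)), extT_last]
        congr 1
        exact Finset.prod_congr rfl fun i _ => by rw [extT_castSucc]
      have hH : ∏ i : Fin (n+2), ∑ j ∈ hook (extT q a) i, y i j
          = (∏ i : Fin (n+1), ∑ j ∈ hook q i, Ymod y a i j)
            * y (Fin.last (n+1)) (Fin.last (n+1)) := by
        rw [Fin.prod_univ_castSucc (f := fun i => ∑ j ∈ hook (extT q a) i, y i j)]
        congr 1
        · exact Finset.prod_congr rfl fun i _ => hook_sum_ext q a i (fun j => y i.castSucc j)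
        · rw [hook_last (tree_le he0 helt), Finset.sum_singleton]
      rw [hW, hH]
      ring
    rw [Finset.sum_congr rfl (fun a _ => hinner a)]
    -- Step 2: the analytic identity
    set X : ℕ → R := fun k => if h : k < n + 1 then x ((⟨k, h⟩ : Fin (n+1)).castSucc) else 0
      with hX
    set Z : ℕ → R := fun k =>
      if h : k < n + 1 then y ((⟨k, h⟩ : Fin (n+1)).castSucc) (Fin.last (n+1)) else 0 with hZ
    set CC : ℕ → R := fun k =>
      if h : k < n + 1 then
        y ((⟨k, h⟩ : Fin (n+1)).castSucc) ((⟨k, h⟩ : Fin (n+1)).castSucc)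
            * (∑ j ∈ Finset.Iic (⟨k, h⟩ : Fin (n+1)), x j.castSucc)
          + x ((⟨k, h⟩ : Fin (n+1)).castSucc)
            * (∑ j ∈ Finset.Ioi (⟨k, h⟩ : Fin (n+1)),
                y ((⟨k, h⟩ : Fin (n+1)).castSucc) j.castSucc)
      else 0 with hCC
    have hXval : ∀ i : Fin (n+1), X (i : ℕ) = x i.castSucc := by
      intro i
      rw [hX]
      simp only [dif_pos i.isLt, Fin.eta]
    have hZval : ∀ i : Fin (n+1), Z (i : ℕ) = y i.castSucc (Fin.last (n+1)) := by
      intro i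
      rw [hZ]
      simp only [dif_pos i.isLt, Fin.eta]
    have hXsum : ∀ i : Fin (n+1),
        ∑ j ∈ Finset.Iic i, x j.castSucc = ∑ j ∈ range ((i : ℕ) + 1), X j := by
      intro i
      rw [sum_Iic_eq_range (fun j => x j.castSucc) i, hX]
    have hCCval : ∀ i : Fin (n+1), CC (i : ℕ)
        = y i.castSucc i.castSucc * (∑ j ∈ Finset.Iic i, x j.castSucc)
          + x i.castSucc * (∑ j ∈ Finset.Ioi i, y i.castSucc j.castSucc) := by
      intro i
      rw [hCC]
      simp only [dif_pos i.isLt, Fin.eta]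
    -- pointwise product conversion
    have hprod : ∀ a : Fin (n+1),
        ∏ i ∈ Finset.univ.erase (Fin.last n),
            (Ymod y a i i * ∑ j ∈ Finset.Iic i, x j.castSucc
              + x i.castSucc * ∑ j ∈ Finset.Ioi i, Ymod y a i j)
        = ∏ i ∈ range n, (CC i + (if i = (a : ℕ) then Z i * (∑ j ∈ range (i+1), X j) else 0)
            + (if i < (a : ℕ) then X i * Z i else 0)) := by
      intro a
      rw [prod_erase_last, ← Fin.prod_univ_eq_prod_range
        (fun k => CC k + (if k = (a : ℕ) then Z k * (∑ j ∈ range (k+1), X j) else 0)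
          + (if k < (a : ℕ) then X k * Z k else 0)) n]
      apply Finset.prod_congr rfl
      intro i _
      have hiv : ((i.castSucc : Fin (n+1)) : ℕ) = (i : ℕ) := rfl
      have e1 := hCCval i.castSucc
      have e2 := hXval i.castSucc
      have e3 := hZval i.castSucc
      have e4 := hXsum i.castSucc
      rw [hiv] at e1 e2 e3 e4
      rw [e1, e2, e3, e4]
      have hsIoi : ∑ j ∈ Finset.Ioi i.castSucc, Ymod y a i.castSucc j
          = (∑ j ∈ Finset.Ioi i.castSucc, y i.castSucc.castSucc j.castSucc)
            + (if i.castSucc < a then y i.castSucc.castSucc (Fin.last (n+1)) else 0) := by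
        simp only [Ymod]
        rw [Finset.sum_add_distrib,
          Finset.sum_ite_eq' (Finset.Ioi i.castSucc) a
            (fun _ => y i.castSucc.castSucc (Fin.last (n+1)))]
        simp only [Finset.mem_Ioi]
      rw [hsIoi]
      simp only [Ymod]
      have hc1 : (i.castSucc = a) = ((i : ℕ) = (a : ℕ)) := by
        simp [Fin.ext_iff]
      have hc2 : (i.castSucc < a) = ((i : ℕ) < (a : ℕ)) := by
        simp [Fin.lt_def]
      simp only [hc1, hc2]
      split_ifs <;> ring
    have hYll : ∀ a : Fin (n+1), Ymod y a (Fin.last n) (Fin.last n)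
        = y (Fin.last n).castSucc (Fin.last n).castSucc
          + (if (a : ℕ) = n then Z n else 0) := by
      intro a
      have hZn : Z n = y (Fin.last n).castSucc (Fin.last (n+1)) := by
        rw [hZ]
        simp only [dif_pos (Nat.lt_succ_self n)]
        rfl
      rw [Ymod, hZn]
      congr 1
      have h : (Fin.last n = a) = ((a : ℕ) = n) := by
        simp [Fin.ext_iff, eq_comm]
      simp only [h]
    -- convert the outer sum to ℕ world
    have hsum : ∑ a : Fin (n+1),
        x a.castSucc * y (Fin.last (n+1)) (Fin.last (n+1)) *
          (Ymod y a (Fin.last n) (Fin.last n) *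
            ∏ i ∈ Finset.univ.erase (Fin.last n),
              (Ymod y a i i * ∑ j ∈ Finset.Iic i, x j.castSucc
                + x i.castSucc * ∑ j ∈ Finset.Ioi i, Ymod y a i j))
        = y (Fin.last (n+1)) (Fin.last (n+1)) *
            ∑ a ∈ range (n+1), X a * (y (Fin.last n).castSucc (Fin.last n).castSucc
                + if a = n then Z n else 0) *
              ∏ i ∈ range n, (CC i + (if i = a then Z i * (∑ j ∈ range (i+1), X j) else 0)
                + (if i < a then X i * Z i else 0)) := by
      rw [Finset.mul_sum, ← Fin.sum_univ_eq_sum_range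
        (fun k => y (Fin.last (n+1)) (Fin.last (n+1)) *
          (X k * (y (Fin.last n).castSucc (Fin.last n).castSucc + if k = n then Z n else 0) *
            ∏ i ∈ range n, (CC i + (if i = k then Z i * (∑ j ∈ range (i+1), X j) else 0)
              + (if i < k then X i * Z i else 0)))) (n+1)]
      apply Finset.sum_congr rfl
      intro a _
      rw [hprod a, hYll a, hXval a]
      ring
    rw [hsum, key_tele X CC n (y (Fin.last n).castSucc (Fin.last n).castSucc) Z]
    -- Step 3: identify with the right-hand side
    congr 1
    have hIoiLast : (Finset.Ioi (Fin.last n) : Finset (Fin (n+1))) = ∅ := by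
      ext j
      simp only [Finset.mem_Ioi, Finset.notMem_empty, iff_false, not_lt]
      exact Fin.le_last j
    have hXn : X n = x (Fin.last n).castSucc := by
      rw [hX]
      simp only [dif_pos (Nat.lt_succ_self n)]
      rfl
    have hZn : Z n = y (Fin.last n).castSucc (Fin.last (n+1)) := by
      rw [hZ]
      simp only [dif_pos (Nat.lt_succ_self n)]
      rfl
    rw [prod_erase_last (N := n+1)
      (f := fun i => y i i * ∑ j ∈ Finset.Iic i, x j
        + x i * ∑ j ∈ Finset.Ioi i, y i j),
      Fin.prod_univ_castSucc
      (f := fun i : Fin (n+1) => y i.castSucc i.castSucc * ∑ j ∈ Finset.Iic i.castSucc, x j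
        + x i.castSucc * ∑ j ∈ Finset.Ioi i.castSucc, y i.castSucc j)]
    rw [mul_comm]
    congr 1
    · -- the product over the first n indices
      rw [← Fin.prod_univ_eq_prod_range (fun k => CC k + X k * Z k) n]
      apply Finset.prod_congr rfl
      intro i _
      have hiv : ((i.castSucc : Fin (n+1)) : ℕ) = (i : ℕ) := rfl
      have e1 := hCCval i.castSucc
      have e2 := hXval i.castSucc
      have e3 := hZval i.castSucc
      rw [hiv] at e1 e2 e3
      rw [e1, e2, e3]
      rw [sum_Iic_castSucc x i.castSucc,
        sum_Ioi_castSucc (fun j => y i.castSucc.castSucc j) i.castSucc]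
      ring
    · -- the last factor
      rw [sum_Iic_castSucc x (Fin.last n), sum_Ioi_castSucc
        (fun j => y (Fin.last n).castSucc j) (Fin.last n), hIoiLast,
        Finset.sum_empty, zero_add, hXsum (Fin.last n), hXn, hZn]
      have : ((Fin.last n : Fin (n+1)) : ℕ) = n := rfl
      rw [this]
end

section
/- Leaf-insertion recursion for the hook-sum generating polynomial: let Θ_n be the polynomial in variables x_i and y_{i,j} (i ≤ j) defined by Θ_n = y_{n,n}·∏_{i=1}^{n-1}( y_{i,i}∑_{j=1}^{i} x_j + x_i ∑_{j=i+1}^{n} y_{i,j} ). For 1 ≤ i ≤ n let ψ^i_{n+1} be the substitution sending y_{k,i} to y_{k,i} + y_{k,n+1} for all 1 ≤ k ≤ i (and fixing all other variables). Then Θ_{n+1} = y_{n+1,n+1} · ∑_{i=1}^{n} x_i · ψ^i_{n+1}(Θ_n). -/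
open MvPolynomial

/-- The closed form `Θ_n = y_{n,n} ∏_{i=1}^{n-1}(y_{i,i} ∑_{j=1}^i x_j + x_i ∑_{j=i+1}^n y_{i,j})`
as a multivariate polynomial over `ℤ`, with `X (.inl i)` playing the role of `x_i` and
`X (.inr (i,j))` that of `y_{i,j}`. -/
noncomputable def Theta (n : ℕ) : MvPolynomial (ℕ ⊕ ℕ × ℕ) ℤ :=
  X (Sum.inr (n, n)) * ∏ i ∈ Finset.Ico 1 n,
    (X (Sum.inr (i, i)) * ∑ j ∈ Finset.Icc 1 i, X (Sum.inl j)
      + X (Sum.inl i) * ∑ j ∈ Finset.Icc (i + 1) n, X (Sum.inr (i, j)))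

/-- The substitution `ψ^i_m` sending `y_{k,i} ↦ y_{k,i} + y_{k,m}` for all `k ≤ i`
and fixing all other variables, described on generators. -/
noncomputable def psi (i m : ℕ) : (ℕ ⊕ ℕ × ℕ) → MvPolynomial (ℕ ⊕ ℕ × ℕ) ℤ :=
  fun v =>
    match v with
    | Sum.inl a => X (Sum.inl a)
    | Sum.inr (k, l) =>
        if l = i ∧ k ≤ i then X (Sum.inr (k, l)) + X (Sum.inr (k, m)) else X (Sum.inr (k, l))

noncomputable def Sp (i : ℕ) : MvPolynomial (ℕ ⊕ ℕ × ℕ) ℤ := ∑ j ∈ Finset.Icc 1 i, X (Sum.inl j)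
noncomputable def Cp (n k : ℕ) : MvPolynomial (ℕ ⊕ ℕ × ℕ) ℤ :=
  X (Sum.inr (k, k)) * Sp k + X (Sum.inl k) * ∑ j ∈ Finset.Icc (k + 1) n, X (Sum.inr (k, j))

lemma Theta_eq (n : ℕ) : Theta n = X (Sum.inr (n, n)) * ∏ k ∈ Finset.Ico 1 n, Cp n k := rfl

lemma psi_inl (i m a : ℕ) : psi i m (Sum.inl a) = X (Sum.inl a) := rfl
lemma psi_inr (i m k l : ℕ) : psi i m (Sum.inr (k, l)) =
    if l = i ∧ k ≤ i then X (Sum.inr (k, l)) + X (Sum.inr (k, m)) else X (Sum.inr (k, l)) := rfl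

lemma aeval_psi_S (i m j : ℕ) : aeval (psi i m) (Sp j) = Sp j := by
  simp [Sp, map_sum, psi_inl, psi_inr]

lemma aeval_psi_C_lt (n i k : ℕ) (hki : k < i) (hi : i ≤ n) :
    aeval (psi i (n + 1)) (Cp n k) = Cp (n + 1) k := by
  simp only [Cp, map_add, map_mul, map_sum, aeval_X, aeval_psi_S, psi_inl, psi_inr]
  rw [if_neg (by omega)]
  have h1 : ∀ j ∈ Finset.Icc (k+1) n,
      (if j = i ∧ k ≤ i then X (Sum.inr (k, j)) + X (Sum.inr (k, n+1)) else X (Sum.inr (k, j)))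
      = X (Sum.inr (k, j)) + (if j = i then (X (Sum.inr (k, n+1)) : MvPolynomial (ℕ ⊕ ℕ × ℕ) ℤ) else 0) := by
    intro j _
    by_cases h : j = i
    · simp [h, hki.le]
    · simp [h]
  rw [Finset.sum_congr rfl h1, Finset.sum_add_distrib, Finset.sum_ite_eq' (Finset.Icc (k+1) n) i,
    if_pos (by simp; omega), Finset.sum_Icc_succ_top (by omega : k + 1 ≤ n + 1)]


lemma aeval_psi_C_gt (n i k : ℕ) (hki : i < k) :
    aeval (psi i (n + 1)) (Cp n k) = Cp n k := by
  simp only [Cp, map_add, map_mul, map_sum, aeval_X, aeval_psi_S, psi_inl, psi_inr]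
  rw [if_neg (by omega)]
  congr 1
  refine congrArg _ (Finset.sum_congr rfl fun j hj => ?_)
  rw [if_neg (by omega)]

lemma aeval_psi_C_eq (n i : ℕ) (hi : 1 ≤ i) :
    aeval (psi i (n + 1)) (Cp n i) = Cp n i + X (Sum.inr (i, n + 1)) * Sp i := by
  simp only [Cp, map_add, map_mul, map_sum, aeval_X, aeval_psi_S, psi_inl, psi_inr]
  simp only [eq_self_iff_true, le_refl, and_self, and_true, if_true]
  have : ∀ j ∈ Finset.Icc (i+1) n,
      (if j = i then X (Sum.inr (i, j)) + X (Sum.inr (i, n+1)) else X (Sum.inr (i, j)))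
      = (X (Sum.inr (i, j)) : MvPolynomial (ℕ ⊕ ℕ × ℕ) ℤ) := by
    intro j hj
    rw [if_neg (by simp at hj; omega)]
  rw [Finset.sum_congr rfl this]
  ring

lemma aeval_psi_y (n i : ℕ) (hi : i ≤ n) :
    aeval (psi i (n + 1)) (X (Sum.inr (n, n)) : MvPolynomial (ℕ ⊕ ℕ × ℕ) ℤ)
      = if i = n then X (Sum.inr (n, n)) + X (Sum.inr (n, n + 1)) else X (Sum.inr (n, n)) := by
  rw [aeval_X, psi_inr]
  by_cases h : i = n
  · rw [if_pos (by omega), if_pos h]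
  · rw [if_neg (by omega), if_neg h]

lemma Sp_succ (j : ℕ) : Sp (j + 1) = Sp j + X (Sum.inl (j + 1)) := by
  rw [Sp, Sp, Finset.sum_Icc_succ_top (by omega : 1 ≤ j + 1)]

lemma Cp_succ (n k : ℕ) (hk : k ≤ n) :
    Cp (n + 1) k = Cp n k + X (Sum.inl k) * X (Sum.inr (k, n + 1)) := by
  rw [Cp, Cp, Finset.sum_Icc_succ_top (by omega : k + 1 ≤ n + 1)]
  ring

noncomputable def Hp (n j : ℕ) : MvPolynomial (ℕ ⊕ ℕ × ℕ) ℤ :=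
  if j = n then ∏ k ∈ Finset.Ico 1 (n + 1), Cp (n + 1) k
  else X (Sum.inr (n, n)) * Sp j * (∏ k ∈ Finset.Ico 1 (j + 1), Cp (n + 1) k)
        * ∏ k ∈ Finset.Ico (j + 1) n, Cp n k

lemma step (n j : ℕ) (hj : j + 1 ≤ n) :
    X (Sum.inl (j + 1)) * aeval (psi (j + 1) (n + 1)) (Theta n) = Hp n (j + 1) - Hp n j := by
  rw [Theta_eq, map_mul, map_prod, aeval_psi_y n (j + 1) hj]
  rcases eq_or_lt_of_le hj with he | hlt
  · -- j + 1 = n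
    subst he
    rw [if_pos rfl]
    have hprod : ∏ k ∈ Finset.Ico 1 (j + 1), aeval (psi (j + 1) (j + 1 + 1)) (Cp (j + 1) k)
        = ∏ k ∈ Finset.Ico 1 (j + 1), Cp (j + 1 + 1) k := by
      refine Finset.prod_congr rfl fun k hk => ?_
      simp only [Finset.mem_Ico] at hk
      exact aeval_psi_C_lt (j + 1) (j + 1) k (by omega) le_rfl
    rw [hprod, Hp, Hp, if_pos rfl, if_neg (by omega),
      Finset.prod_Ico_succ_top (by omega : 1 ≤ j + 1), Finset.Ico_self, Finset.prod_empty,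
      Cp_succ (j + 1) (j + 1) le_rfl, Cp, Sp_succ j, Finset.Icc_eq_empty (by omega), Finset.sum_empty]
    ring
  · -- j + 1 < n
    rw [if_neg (by omega)]
    have hsplit : ∏ k ∈ Finset.Ico 1 n, aeval (psi (j + 1) (n + 1)) (Cp n k)
        = (∏ k ∈ Finset.Ico 1 (j + 1), Cp (n + 1) k)
          * ((Cp n (j + 1) + X (Sum.inr (j + 1, n + 1)) * Sp (j + 1))
            * ∏ k ∈ Finset.Ico (j + 2) n, Cp n k) := by
      rw [← Finset.prod_Ico_consecutive _ (by omega : 1 ≤ j + 1) (by omega : j + 1 ≤ n),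
        Finset.prod_eq_prod_Ico_succ_bot hlt]
      congr 1
      · refine Finset.prod_congr rfl fun k hk => ?_
        simp only [Finset.mem_Ico] at hk
        exact aeval_psi_C_lt n (j + 1) k (by omega) hj
      congr 1
      · exact aeval_psi_C_eq n (j + 1) (by omega)
      · refine Finset.prod_congr rfl fun k hk => ?_
        simp only [Finset.mem_Ico] at hk
        exact aeval_psi_C_gt n (j + 1) k (by omega)
    rw [hsplit, Hp, Hp, if_neg (by omega), if_neg (by omega),
      Finset.prod_Ico_succ_top (by omega : 1 ≤ j + 1),
      Finset.prod_eq_prod_Ico_succ_bot hlt, Cp_succ n (j + 1) hj, Sp_succ j]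
    ring

/-- Leaf-insertion recursion: `Θ_{n+1} = y_{n+1,n+1} · ∑_{i=1}^{n} x_i · ψ^i_{n+1}(Θ_n)`. -/
theorem theta_leaf_insertion (n : ℕ) (hn : 1 ≤ n) :
    Theta (n + 1) =
      X (Sum.inr (n + 1, n + 1)) *
        ∑ i ∈ Finset.Icc 1 n, X (Sum.inl i) * MvPolynomial.aeval (psi i (n + 1)) (Theta n) := by
  have hsum : ∑ i ∈ Finset.Icc 1 n, X (Sum.inl i) * aeval (psi i (n + 1)) (Theta n)
      = ∏ k ∈ Finset.Ico 1 (n + 1), Cp (n + 1) k := by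
    have h1 : ∑ i ∈ Finset.Icc 1 n, X (Sum.inl i) * aeval (psi i (n + 1)) (Theta n)
        = ∑ j ∈ Finset.range n, (Hp n (j + 1) - Hp n j) := by
      rw [show Finset.Icc 1 n = Finset.Ico 1 (n + 1) by rw [Finset.Ico_add_one_right_eq_Icc],
        Finset.sum_Ico_eq_sum_range]
      simp only [Nat.add_sub_cancel]
      refine Finset.sum_congr rfl fun j hj => ?_
      simp only [Finset.mem_range] at hj
      rw [show 1 + j = j + 1 by omega]
      exact step n j (by omega)
    have h0 : Hp n 0 = 0 := by
      rw [Hp, if_neg (by omega)]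
      simp [Sp]
    have hnn : Hp n n = ∏ k ∈ Finset.Ico 1 (n + 1), Cp (n + 1) k := by
      rw [Hp, if_pos rfl]
    rw [h1, Finset.sum_range_sub, h0, hnn, sub_zero]
  rw [Theta_eq (n + 1), hsum]
end

section
/- Binomial-type convolution for the hook-sum polynomials (Strehl's identity, polynomial form): for a finite set A of positive integers define w_A(z) = z·∏_{i ∈ A, i ≠ max(A)} ( z + ∑_{j ∈ A, j ≤ i} x_j + ∑_{j ∈ A, j > i} y_{i,j} ) for A nonempty, and w_∅(z) = 1. Then w_A(u+v) = ∑_{B ⊔ C = A} w_B(u)·w_C(v), where the sum is over ordered pairs (B,C) of disjoint sets with union A. -/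
open scoped Classical in
/-- Strehl's polynomial `w_A(z) = z ∏_{i ∈ A, i ≠ max A} (z + ∑_{j∈A, j≤i} x_j + ∑_{j∈A, j>i} y_{i,j})`
for nonempty `A`, and `w_∅(z) = 1`.  (An element `i ∈ A` is not the maximum iff some larger
element of `A` exists.) -/
noncomputable def strehlW {R : Type*} [CommRing R] (x : ℕ → R) (y : ℕ → ℕ → R)
    (S : Finset ℕ) (z : R) : R :=
  if S.Nonempty then
    z * ∏ i ∈ S.filter (fun i => ∃ j ∈ S, i < j),
      (z + ∑ j ∈ S.filter (fun j => j ≤ i), x j + ∑ j ∈ S.filter (fun j => i < j), y i j)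
  else 1

namespace StrehlAux

open Finset

variable {R : Type*} [CommRing R] (x : ℕ → R) (y : ℕ → ℕ → R)

/-- One factor of the generalized Strehl product. -/
noncomputable def sfac (c : ℕ → R) (S : Finset ℕ) (i : ℕ) (z : R) : R :=
  z + ∑ j ∈ S.filter (fun j => j ≤ i), x j + ∑ j ∈ S.filter (fun j => i < j), y i j + c i

/-- Generalized (full) Strehl product with extra coefficients `c`. -/
noncomputable def sF (c : ℕ → R) (S : Finset ℕ) (z : R) : R :=
  ∏ i ∈ S, sfac x y c S i z

/-- The shift of coefficients produced by inserting an element `k`. -/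
noncomputable def sE (k : ℕ) : ℕ → R := fun i => if k ≤ i then x k else y i k

/-- Convolution sum of two generalized Strehl products. -/
noncomputable def sT (c c' : ℕ → R) (A : Finset ℕ) (u v : R) : R :=
  ∑ B ∈ A.powerset, sF x y c B u * sF x y c' (A \ B) v

lemma sF_congr {c c' : ℕ → R} {S : Finset ℕ} (h : ∀ i ∈ S, c i = c' i) (z : R) :
    sF x y c S z = sF x y c' S z :=
  Finset.prod_congr rfl fun i hi => by unfold sfac; rw [h i hi]

lemma sF_insert {k : ℕ} {S : Finset ℕ} (hk : k ∉ S) (c : ℕ → R) (z : R) :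
    sF x y c (insert k S) z
      = sfac x y c (insert k S) k z * sF x y (fun i => c i + sE x y k i) S z := by
  unfold sF
  rw [Finset.prod_insert hk]
  congr 1
  refine Finset.prod_congr rfl fun i hi => ?_
  simp only [sfac, sE]
  rw [Finset.filter_insert, Finset.filter_insert]
  by_cases h : k ≤ i
  · rw [if_pos h, if_neg (show ¬i < k by omega), if_pos h,
      Finset.sum_insert (by simp [hk])]
    ring
  · rw [if_neg h, if_pos (show i < k by omega), if_neg h,
      Finset.sum_insert (by simp [hk])]
    ring

lemma sT_congr {c d c' d' : ℕ → R} {A : Finset ℕ}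
    (h : ∀ i ∈ A, c i = d i) (h' : ∀ i ∈ A, c' i = d' i) (u v : R) :
    sT x y c c' A u v = sT x y d d' A u v := by
  unfold sT
  refine Finset.sum_congr rfl fun B hB => ?_
  rw [Finset.mem_powerset] at hB
  rw [sF_congr x y (fun i hi => h i (hB hi)),
    sF_congr x y (fun i hi => h' i ((Finset.sdiff_subset : A \ B ⊆ A) hi))]

lemma insert_sdiff_aux {k : ℕ} {A' B : Finset ℕ} (hk : k ∉ A') (hB : B ⊆ A') :
    insert k A' \ B = insert k (A' \ B) := by
  have hkB : k ∉ B := fun h => hk (hB h)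
  ext j
  simp only [mem_sdiff, mem_insert]
  constructor
  · rintro ⟨rfl | hj, hjB⟩
    · exact Or.inl rfl
    · exact Or.inr ⟨hj, hjB⟩
  · rintro (rfl | ⟨hj, hjB⟩)
    · exact ⟨Or.inl rfl, hkB⟩
    · exact ⟨Or.inr hj, hjB⟩

lemma insert_sdiff_insert_aux {k : ℕ} {A' B : Finset ℕ} (hk : k ∉ A') :
    insert k A' \ insert k B = A' \ B := by
  ext j
  simp only [mem_sdiff, mem_insert, not_or]
  constructor
  · rintro ⟨rfl | hj, hjk, hjB⟩
    · exact absurd rfl hjk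
    · exact ⟨hj, hjB⟩
  · rintro ⟨hj, hjB⟩
    exact ⟨Or.inr hj, fun h => hk (h ▸ hj), hjB⟩

/-- The transfer lemma: the convolution sum only depends on the pointwise sum `c + c'`. -/
lemma sT_transfer (u v : R) (A : Finset ℕ) : ∀ c c' : ℕ → R,
    sT x y c c' A u v = sT x y (fun _ => 0) (fun i => c i + c' i) A u v := by
  induction A using Finset.strongInduction with
  | _ A IH =>
    -- single-point move
    have move : ∀ k ∈ A, ∀ c c' : ℕ → R,
        sT x y c c' A u v
          = sT x y (Function.update c k 0) (Function.update c' k (c k + c' k)) A u v := by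
      intro k hk c c'
      set A' := A.erase k with hA'
      have hkA' : k ∉ A' := Finset.notMem_erase _ _
      have hins : insert k A' = A := Finset.insert_erase hk
      have hne : ∀ i ∈ A', i ≠ k := fun i hi => Finset.ne_of_mem_erase hi
      have key : ∀ d d' : ℕ → R, (∀ i ∈ A', d i = c i) → (∀ i ∈ A', d' i = c' i) →
          sT x y d d' A u v =
            (∑ B ∈ A'.powerset, sF x y c B u *
              ((v + ∑ j ∈ (insert k (A' \ B)).filter (fun j => j ≤ k), x j
                  + ∑ j ∈ (insert k (A' \ B)).filter (fun j => k < j), y k j)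
                * sF x y (fun i => c' i + sE x y k i) (A' \ B) v))
            + d' k * sT x y c (fun i => c' i + sE x y k i) A' u v
            + ((∑ B ∈ A'.powerset, ((u + ∑ j ∈ (insert k B).filter (fun j => j ≤ k), x j
                  + ∑ j ∈ (insert k B).filter (fun j => k < j), y k j)
                * sF x y (fun i => c i + sE x y k i) B u) * sF x y c' (A' \ B) v)
            + d k * sT x y (fun i => c i + sE x y k i) c' A' u v) := by
        intro d d' hd hd'
        unfold sT
        rw [← hins, Finset.sum_powerset_insert hkA']
        have e1 : ∀ B ∈ A'.powerset,
            sF x y d B u * sF x y d' (insert k A' \ B) v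
              = sF x y c B u *
                ((v + ∑ j ∈ (insert k (A' \ B)).filter (fun j => j ≤ k), x j
                    + ∑ j ∈ (insert k (A' \ B)).filter (fun j => k < j), y k j)
                  * sF x y (fun i => c' i + sE x y k i) (A' \ B) v)
                + d' k * (sF x y c B u * sF x y (fun i => c' i + sE x y k i) (A' \ B) v) := by
          intro B hB
          rw [Finset.mem_powerset] at hB
          have hkB : k ∉ A' \ B := fun h => hkA' (Finset.mem_sdiff.mp h).1
          rw [insert_sdiff_aux hkA' hB, sF_insert x y hkB,
            sF_congr x y (fun i hi => hd i (hB hi)) u,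
            sF_congr x y (c := fun i => d' i + sE x y k i)
              (c' := fun i => c' i + sE x y k i)
              (fun i hi => by
                show d' i + sE x y k i = c' i + sE x y k i
                rw [hd' i ((Finset.sdiff_subset : A' \ B ⊆ A') hi)]) v]
          unfold sfac
          ring
        have e2 : ∀ B ∈ A'.powerset,
            sF x y d (insert k B) u * sF x y d' (insert k A' \ insert k B) v
              = ((u + ∑ j ∈ (insert k B).filter (fun j => j ≤ k), x j
                  + ∑ j ∈ (insert k B).filter (fun j => k < j), y k j)
                * sF x y (fun i => c i + sE x y k i) B u) * sF x y c' (A' \ B) v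
                + d k * (sF x y (fun i => c i + sE x y k i) B u * sF x y c' (A' \ B) v) := by
          intro B hB
          rw [Finset.mem_powerset] at hB
          have hkB : k ∉ B := fun h => hkA' (hB h)
          rw [insert_sdiff_insert_aux hkA', sF_insert x y hkB,
            sF_congr x y (c := fun i => d i + sE x y k i)
              (c' := fun i => c i + sE x y k i)
              (fun i hi => by
                show d i + sE x y k i = c i + sE x y k i
                rw [hd i (hB hi)]) u,
            sF_congr x y (fun i hi => hd' i ((Finset.sdiff_subset : A' \ B ⊆ A') hi)) v]
          unfold sfac
          ring
        rw [Finset.sum_congr rfl e1, Finset.sum_congr rfl e2,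
          Finset.sum_add_distrib, Finset.sum_add_distrib,
          ← Finset.mul_sum, ← Finset.mul_sum]
      have h1 := key c c' (fun _ _ => rfl) (fun _ _ => rfl)
      have h2 := key (Function.update c k 0) (Function.update c' k (c k + c' k))
        (fun i hi => Function.update_of_ne (hne i hi) _ _)
        (fun i hi => Function.update_of_ne (hne i hi) _ _)
      rw [h1, h2]
      simp only [Function.update_self]
      have hssub : A' ⊂ A := Finset.erase_ssubset hk
      have hT : sT x y c (fun i => c' i + sE x y k i) A' u v
          = sT x y (fun i => c i + sE x y k i) c' A' u v := by
        rw [IH A' hssub c (fun i => c' i + sE x y k i),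
          IH A' hssub (fun i => c i + sE x y k i) c']
        exact sT_congr x y (c := fun _ => 0) (d := fun _ => 0)
          (c' := fun i => c i + (c' i + sE x y k i))
          (d' := fun i => c i + sE x y k i + c' i)
          (fun _ _ => rfl) (fun i _ => by ring) u v
      rw [← hT]
      ring
    -- iterate the moves over a finite support set
    have L : ∀ D : Finset ℕ, ∀ c c' : ℕ → R, (∀ i ∈ A, i ∉ D → c i = 0) →
        sT x y c c' A u v = sT x y (fun _ => 0) (fun i => c i + c' i) A u v := by
      intro D
      induction D using Finset.induction with
      | empty =>
        intro c c' h
        refine sT_congr x y (fun i hi => h i hi (Finset.notMem_empty i))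
          (fun i hi => ?_) u v
        show c' i = c i + c' i
        rw [h i hi (Finset.notMem_empty i)]
        ring
      | @insert k D hkD IHD =>
        intro c c' h
        by_cases hk : k ∈ A
        · have hsupp : ∀ i ∈ A, i ∉ D → Function.update c k 0 i = 0 := by
            intro i hi hiD
            rcases eq_or_ne i k with rfl | hik
            · simp
            · rw [Function.update_of_ne hik]
              refine h i hi ?_
              simp only [Finset.mem_insert, not_or]
              exact ⟨hik, hiD⟩
          rw [move k hk c c', IHD _ _ hsupp]
          refine sT_congr x y (fun _ _ => rfl) (fun i _ => ?_) u v
          show Function.update c k 0 i + Function.update c' k (c k + c' k) i = c i + c' i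
          rcases eq_or_ne i k with rfl | hik
          · simp
          · rw [Function.update_of_ne hik, Function.update_of_ne hik]
        · refine IHD c c' (fun i hi hiD => h i hi ?_)
          simp only [Finset.mem_insert, not_or]
          exact ⟨fun hik => hk (hik ▸ hi), hiD⟩
    intro c c'
    exact L A c c' (fun i hi hiA => absurd hi hiA)

lemma filter_le_erase {S : Finset ℕ} {M i : ℕ} (hi : i < M) :
    S.filter (fun j => j ≤ i) = (S.erase M).filter (fun j => j ≤ i) := by
  rw [Finset.filter_erase]
  exact (Finset.erase_eq_of_notMem (by
    simp only [Finset.mem_filter, not_and]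
    intro _
    omega)).symm

lemma sum_filter_lt_erase {S : Finset ℕ} {M i : ℕ} (hM : M ∈ S) (hi : i < M) (f : ℕ → R) :
    ∑ j ∈ S.filter (fun j => i < j), f j
      = f M + ∑ j ∈ (S.erase M).filter (fun j => i < j), f j := by
  rw [Finset.filter_erase]
  exact (Finset.add_sum_erase _ f (Finset.mem_filter.mpr ⟨hM, hi⟩)).symm

/-- `strehlW` in terms of the generalized product, using the `max'`. -/
lemma strehlW_eq {S : Finset ℕ} (hS : S.Nonempty) (z : R) :
    strehlW x y S z
      = z * sF x y (fun i => y i (S.max' hS)) (S.erase (S.max' hS)) z := by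
  classical
  rw [strehlW, if_pos hS]
  congr 1
  have hfilter : S.filter (fun i => ∃ j ∈ S, i < j) = S.erase (S.max' hS) := by
    ext i
    simp only [Finset.mem_filter, Finset.mem_erase]
    constructor
    · rintro ⟨hi, j, hj, hij⟩
      have := S.le_max' j hj
      exact ⟨by omega, hi⟩
    · rintro ⟨hne, hi⟩
      have h1 := S.le_max' i hi
      exact ⟨hi, S.max' hS, S.max'_mem hS, by omega⟩
  rw [hfilter]
  refine Finset.prod_congr rfl fun i hi => ?_
  have hiS : i ∈ S := Finset.mem_of_mem_erase hi
  have hilt : i < S.max' hS := by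
    have h1 := S.le_max' i hiS
    have h2 := (Finset.mem_erase.mp hi).1
    omega
  unfold sfac
  rw [filter_le_erase hilt, sum_filter_lt_erase (S.max'_mem hS) hilt]
  ring

/-- `strehlW` in terms of the generalized product, for any upper bound `M ∈ S`. -/
lemma strehlW_eq' {S : Finset ℕ} {M : ℕ} (hM : M ∈ S) (hub : ∀ j ∈ S, j ≤ M) (z : R) :
    strehlW x y S z = z * sF x y (fun i => y i M) (S.erase M) z := by
  have hS : S.Nonempty := ⟨M, hM⟩
  have hmax : S.max' hS = M :=
    le_antisymm (Finset.max'_le S hS M hub) (Finset.le_max' S M hM)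
  rw [strehlW_eq x y hS z, hmax]

lemma strehlW_insert_max {B : Finset ℕ} {M : ℕ} (hM : M ∉ B) (h : ∀ j ∈ B, j < M) (u : R) :
    strehlW x y (insert M B) u = u * sF x y (fun i => y i M) B u := by
  rw [strehlW_eq' x y (Finset.mem_insert_self M B) (fun j hj => by
      rcases Finset.mem_insert.mp hj with rfl | hj
      · exact le_rfl
      · exact (h j hj).le) u,
    Finset.erase_insert hM]

lemma sfac_max {S : Finset ℕ} {M : ℕ} (h : ∀ j ∈ S, j ≤ M) (c : ℕ → R) (z : R) :
    sfac x y c S M z = z + ∑ j ∈ S, x j + c M := by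
  unfold sfac
  rw [Finset.filter_true_of_mem h,
    Finset.filter_false_of_mem (fun j hj => by have := h j hj; omega),
    Finset.sum_empty]
  ring

lemma sF_top {S : Finset ℕ} {M : ℕ} (hM : M ∈ S) (hub : ∀ j ∈ S, j ≤ M) (c : ℕ → R) (z : R) :
    sF x y c S z = (z + ∑ j ∈ S, x j + c M) *
      sF x y (fun i => c i + sE x y M i) (S.erase M) z := by
  conv_lhs => rw [← Finset.insert_erase hM]
  rw [sF_insert x y (Finset.notMem_erase _ _), Finset.insert_erase hM,
    sfac_max x y hub]

/-- `(u + ∑_{j∈B} x j) * w_B(u) = u * F^0_B(u)`. -/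
lemma strehlW_mul (B : Finset ℕ) (u : R) :
    (u + ∑ j ∈ B, x j) * strehlW x y B u = u * sF x y (fun _ => 0) B u := by
  rcases B.eq_empty_or_nonempty with rfl | hB
  · simp [strehlW, sF]
  · have hM : B.max' hB ∈ B := B.max'_mem hB
    have hub : ∀ j ∈ B, j ≤ B.max' hB := fun j hj => B.le_max' j hj
    rw [strehlW_eq x y hB u, sF_top x y hM hub]
    have h0 : sF x y (fun i => (0 : R) + sE x y (B.max' hB) i) (B.erase (B.max' hB)) u
        = sF x y (fun i => y i (B.max' hB)) (B.erase (B.max' hB)) u := by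
      refine sF_congr x y (fun i hi => ?_) u
      have h1 := B.le_max' i (Finset.mem_of_mem_erase hi)
      have h2 := (Finset.mem_erase.mp hi).1
      show (0 : R) + sE x y (B.max' hB) i = y i (B.max' hB)
      simp only [sE]
      rw [if_neg (by omega)]
      ring
    rw [h0]
    ring

/-- Main auxiliary identity: `F^c_A(u+v) = ∑_{B ⊆ A} w_B(u) F^c_{A∖B}(v)`. -/
lemma sG (u v : R) (A : Finset ℕ) : ∀ c : ℕ → R,
    sF x y c A (u + v) = ∑ B ∈ A.powerset, strehlW x y B u * sF x y c (A \ B) v := by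
  induction A using Finset.strongInduction with
  | _ A IH =>
    intro c
    rcases A.eq_empty_or_nonempty with rfl | hA
    · simp [sF, strehlW]
    · obtain ⟨M, hMA, hub⟩ : ∃ M ∈ A, ∀ j ∈ A, j ≤ M :=
        ⟨A.max' hA, A.max'_mem hA, fun j hj => A.le_max' j hj⟩
      have hMA' : M ∉ A.erase M := Finset.notMem_erase _ _
      have hins : insert M (A.erase M) = A := Finset.insert_erase hMA
      have hlt : ∀ j ∈ A.erase M, j < M := by
        intro j hj
        have h1 := hub j (Finset.mem_of_mem_erase hj)
        have h2 := (Finset.mem_erase.mp hj).1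
        omega
      have hssub : A.erase M ⊂ A := Finset.erase_ssubset hMA
      rw [sF_top x y hMA hub c (u + v), IH (A.erase M) hssub (fun i => c i + sE x y M i)]
      conv_rhs => rw [← hins]
      rw [Finset.sum_powerset_insert hMA']
      have e1 : ∀ B ∈ (A.erase M).powerset,
          strehlW x y B u * sF x y c (insert M (A.erase M) \ B) v
            = strehlW x y B u * ((v + (x M + ∑ j ∈ A.erase M \ B, x j) + c M)
                * sF x y (fun i => c i + sE x y M i) (A.erase M \ B) v) := by
        intro B hB
        rw [Finset.mem_powerset] at hB
        have hMB : M ∉ A.erase M \ B := fun h => hMA' (Finset.mem_sdiff.mp h).1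
        rw [insert_sdiff_aux hMA' hB, sF_insert x y hMB,
          sfac_max x y (fun j hj => by
            rcases Finset.mem_insert.mp hj with rfl | hj
            · exact le_rfl
            · exact (hlt j ((Finset.sdiff_subset : A.erase M \ B ⊆ A.erase M) hj)).le),
          Finset.sum_insert hMB]
      have e2 : ∀ B ∈ (A.erase M).powerset,
          strehlW x y (insert M B) u * sF x y c (insert M (A.erase M) \ insert M B) v
            = u * sF x y (fun i => y i M) B u * sF x y c (A.erase M \ B) v := by
        intro B hB
        rw [Finset.mem_powerset] at hB
        have hMB : M ∉ B := fun h => hMA' (hB h)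
        rw [insert_sdiff_insert_aux hMA',
          strehlW_insert_max x y hMB (fun j hj => hlt j (hB hj)) u]
      rw [Finset.sum_congr rfl e1, Finset.sum_congr rfl e2, Finset.mul_sum]
      have e3 : ∀ B ∈ (A.erase M).powerset,
          (u + v + ∑ j ∈ A, x j + c M)
              * (strehlW x y B u * sF x y (fun i => c i + sE x y M i) (A.erase M \ B) v)
            = strehlW x y B u * ((v + (x M + ∑ j ∈ A.erase M \ B, x j) + c M)
                * sF x y (fun i => c i + sE x y M i) (A.erase M \ B) v)
              + u * sF x y (fun _ => 0) B u
                * sF x y (fun i => c i + sE x y M i) (A.erase M \ B) v := by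
        intro B hB
        rw [Finset.mem_powerset] at hB
        have hXA : ∑ j ∈ A, x j
            = x M + (∑ j ∈ A.erase M \ B, x j + ∑ j ∈ B, x j) := by
          rw [Finset.sum_sdiff hB, Finset.add_sum_erase _ x hMA]
        rw [hXA]
        linear_combination
          (sF x y (fun i => c i + sE x y M i) (A.erase M \ B) v) * strehlW_mul x y B u
      rw [Finset.sum_congr rfl e3, Finset.sum_add_distrib]
      congr 1
      have hTT : sT x y (fun _ => (0 : R)) (fun i => c i + sE x y M i) (A.erase M) u v
          = sT x y (fun i => y i M) c (A.erase M) u v := by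
        rw [sT_transfer x y u v (A.erase M) (fun i => y i M) c,
          sT_transfer x y u v (A.erase M) (fun _ => 0) (fun i => c i + sE x y M i)]
        refine sT_congr x y (fun _ _ => rfl) (fun i hi => ?_) u v
        have hilt : i < M := hlt i hi
        show (0 : R) + (c i + sE x y M i) = y i M + c i
        simp only [sE]
        rw [if_neg (by omega)]
        ring
      calc
        ∑ B ∈ (A.erase M).powerset,
            u * sF x y (fun _ => 0) B u
              * sF x y (fun i => c i + sE x y M i) (A.erase M \ B) v
            = u * sT x y (fun _ => 0) (fun i => c i + sE x y M i) (A.erase M) u v := by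
              unfold sT
              rw [Finset.mul_sum]
              exact Finset.sum_congr rfl fun B _ => by ring
        _ = u * sT x y (fun i => y i M) c (A.erase M) u v := by rw [hTT]
        _ = ∑ B ∈ (A.erase M).powerset,
              u * sF x y (fun i => y i M) B u * sF x y c (A.erase M \ B) v := by
              unfold sT
              rw [Finset.mul_sum]
              exact Finset.sum_congr rfl fun B _ => by ring

end StrehlAux

/-- Strehl's binomial-type convolution: `w_A(u+v) = ∑_{B ⊔ C = A} w_B(u) w_C(v)`,
the sum being over ordered pairs `(B, C = A \ B)` of disjoint sets with union `A`. -/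
theorem strehl_convolution {R : Type*} [CommRing R] (x : ℕ → R) (y : ℕ → ℕ → R)
    (A : Finset ℕ) (hA : ∀ i ∈ A, 0 < i) (u v : R) :
    strehlW x y A (u + v) = ∑ B ∈ A.powerset, strehlW x y B u * strehlW x y (A \ B) v := by
  classical
  clear hA
  rcases A.eq_empty_or_nonempty with rfl | hA
  · simp [strehlW]
  · obtain ⟨M, hMA, hub⟩ : ∃ M ∈ A, ∀ j ∈ A, j ≤ M :=
      ⟨A.max' hA, A.max'_mem hA, fun j hj => A.le_max' j hj⟩
    have hMA' : M ∉ A.erase M := Finset.notMem_erase _ _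
    have hins : insert M (A.erase M) = A := Finset.insert_erase hMA
    have hlt : ∀ j ∈ A.erase M, j < M := by
      intro j hj
      have h1 := hub j (Finset.mem_of_mem_erase hj)
      have h2 := (Finset.mem_erase.mp hj).1
      omega
    rw [StrehlAux.strehlW_eq' x y hMA hub (u + v)]
    conv_rhs => rw [← hins]
    rw [Finset.sum_powerset_insert hMA']
    have e1 : ∀ B ∈ (A.erase M).powerset,
        strehlW x y B u * strehlW x y (insert M (A.erase M) \ B) v
          = strehlW x y B u * (v * StrehlAux.sF x y (fun i => y i M) (A.erase M \ B) v) := by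
      intro B hB
      rw [Finset.mem_powerset] at hB
      have hMB : M ∉ A.erase M \ B := fun h => hMA' (Finset.mem_sdiff.mp h).1
      rw [StrehlAux.insert_sdiff_aux hMA' hB,
        StrehlAux.strehlW_insert_max x y hMB
          (fun j hj => hlt j ((Finset.sdiff_subset : A.erase M \ B ⊆ A.erase M) hj)) v]
    have e2 : ∀ B ∈ (A.erase M).powerset,
        strehlW x y (insert M B) u * strehlW x y (insert M (A.erase M) \ insert M B) v
          = u * StrehlAux.sF x y (fun i => y i M) B u * strehlW x y (A.erase M \ B) v := by
      intro B hB
      rw [Finset.mem_powerset] at hB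
      have hMB : M ∉ B := fun h => hMA' (hB h)
      rw [StrehlAux.insert_sdiff_insert_aux hMA',
        StrehlAux.strehlW_insert_max x y hMB (fun j hj => hlt j (hB hj)) u]
    rw [Finset.sum_congr rfl e1, Finset.sum_congr rfl e2]
    have hs1 : ∑ B ∈ (A.erase M).powerset,
        strehlW x y B u * (v * StrehlAux.sF x y (fun i => y i M) (A.erase M \ B) v)
          = v * StrehlAux.sF x y (fun i => y i M) (A.erase M) (u + v) := by
      rw [StrehlAux.sG x y u v (A.erase M) (fun i => y i M), Finset.mul_sum]
      exact Finset.sum_congr rfl fun B _ => by ring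
    have flip : ∑ B ∈ (A.erase M).powerset,
        u * StrehlAux.sF x y (fun i => y i M) B u * strehlW x y (A.erase M \ B) v
          = ∑ B ∈ (A.erase M).powerset,
            u * StrehlAux.sF x y (fun i => y i M) (A.erase M \ B) u * strehlW x y B v := by
      refine Finset.sum_bij' (fun B _ => A.erase M \ B) (fun B _ => A.erase M \ B)
        (fun B hB => Finset.mem_powerset.mpr Finset.sdiff_subset)
        (fun B hB => Finset.mem_powerset.mpr Finset.sdiff_subset)
        (fun B hB => Finset.sdiff_sdiff_eq_self (Finset.mem_powerset.mp hB))
        (fun B hB => Finset.sdiff_sdiff_eq_self (Finset.mem_powerset.mp hB))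
        (fun B hB => ?_)
      rw [Finset.sdiff_sdiff_eq_self (Finset.mem_powerset.mp hB)]
    have hs2 : ∑ B ∈ (A.erase M).powerset,
        u * StrehlAux.sF x y (fun i => y i M) (A.erase M \ B) u * strehlW x y B v
          = u * StrehlAux.sF x y (fun i => y i M) (A.erase M) (v + u) := by
      rw [StrehlAux.sG x y v u (A.erase M) (fun i => y i M), Finset.mul_sum]
      exact Finset.sum_congr rfl fun B _ => by ring
    rw [hs1, flip, hs2, add_comm v u]
    ring
end

section
/- Convolution identity for Θ (Theorem 1.4 of the paper): for a finite set A of positive integers with |A| ≥ 1, define Θ_{A∪{0}} = x_0 · y_{M,M} · ∏_{i ∈ A∖{M}} ( y_{i,i}·(x_0 + ∑_{j∈A, j≤i} x_j) + x_i·∑_{j∈A, j>i} y_{i,j} ) where M = max(A), and Θ_{{0}} = 1 (when A = ∅, with the convention that the product is empty and the factor x_0·y is replaced by 1). Then Θ_{A∪{0}}|_{x_0 = u+v} = ∑_{B ⊔ C = A} Θ_{B∪{0}}|_{x_0=u} · Θ_{C∪{0}}|_{x_0=v}. -/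
open scoped Classical
open Finset

section ThetaAux
variable {R : Type*} [CommRing R] (x : ℕ → R) (y : ℕ → ℕ → R)

noncomputable def Pf (A : Finset ℕ) (z : R) : R :=
  if h : A.Nonempty then
    y (A.max' h) (A.max' h) *
      ∏ i ∈ A.filter (fun i => ∃ j ∈ A, i < j),
        (y i i * (z + ∑ j ∈ A.filter (fun j => j ≤ i), x j)
          + x i * ∑ j ∈ A.filter (fun j => i < j), y i j)
  else 1

noncomputable def Xif (w : ℕ → R) (A : Finset ℕ) (z : R) : R :=
  if A.Nonempty then z * Pf x y A (z + ∑ i ∈ A, w i) else 1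

noncomputable def Tf (A : Finset ℕ) (s : R) : R :=
  if A.Nonempty then s * Pf x y A s else 1

lemma Xif_pos (w : ℕ → R) {A : Finset ℕ} (h : A.Nonempty) (z : R) :
    Xif x y w A z = z * Pf x y A (z + ∑ i ∈ A, w i) := by
  simp only [Xif]; rw [if_pos h]

lemma filter_exists_eq_erase_max' (S : Finset ℕ) (h : S.Nonempty) :
    S.filter (fun i => ∃ j ∈ S, i < j) = S.erase (S.max' h) := by
  ext i
  simp only [mem_filter, mem_erase]
  constructor
  · rintro ⟨hi, j, hj, hij⟩
    exact ⟨ne_of_lt (lt_of_lt_of_le hij (le_max' S j hj)), hi⟩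
  · rintro ⟨hne, hi⟩
    exact ⟨hi, S.max' h, S.max'_mem h, lt_of_le_of_ne (le_max' S i hi) hne⟩

lemma Pf_singleton (a : ℕ) (z : R) : Pf x y {a} z = y a a := by
  have h : ({a} : Finset ℕ).Nonempty := singleton_nonempty a
  rw [Pf, dif_pos h, filter_exists_eq_erase_max' _ h]
  simp

lemma Pf_insert (m : ℕ) (C : Finset ℕ) (hC : C.Nonempty) (hm : ∀ c ∈ C, m < c) (t : R) :
    Pf x y (insert m C) t
      = (y m m * (t + x m) + x m * ∑ j ∈ C, y m j) * Pf x y C (t + x m) := by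
  have hmC : m ∉ C := fun h => lt_irrefl m (hm m h)
  have hD : (insert m C).Nonempty := insert_nonempty m C
  have hMC : C.max' hC ∈ C := C.max'_mem hC
  have hmM : m < C.max' hC := hm _ hMC
  have hmax : (insert m C).max' hD = C.max' hC := by
    apply le_antisymm
    · apply max'_le
      intro b hb
      rcases mem_insert.mp hb with rfl | hb
      · exact le_of_lt hmM
      · exact le_max' _ _ hb
    · exact le_max' _ _ (mem_insert_of_mem hMC)
  have hfilter : (insert m C).filter (fun i => ∃ j ∈ insert m C, i < j)
      = insert m (C.filter (fun i => ∃ j ∈ C, i < j)) := by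
    rw [filter_exists_eq_erase_max' _ hD, filter_exists_eq_erase_max' _ hC, hmax,
      erase_insert_of_ne (ne_of_lt hmM)]
  have h1 : (insert m C).filter (fun j => j ≤ m) = {m} := by
    ext j
    simp only [mem_filter, mem_insert, mem_singleton]
    constructor
    · rintro ⟨rfl | hj, hle⟩
      · rfl
      · exact absurd hle (not_le.mpr (hm j hj))
    · rintro rfl
      exact ⟨Or.inl rfl, le_refl _⟩
  have h2 : (insert m C).filter (fun j => m < j) = C := by
    ext j
    simp only [mem_filter, mem_insert]
    constructor
    · rintro ⟨rfl | hj, hlt⟩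
      · exact absurd hlt (lt_irrefl _)
      · exact hj
    · exact fun hj => ⟨Or.inr hj, hm j hj⟩
  have key : ∏ i ∈ (insert m C).filter (fun i => ∃ j ∈ insert m C, i < j),
        (y i i * (t + ∑ j ∈ (insert m C).filter (fun j => j ≤ i), x j)
          + x i * ∑ j ∈ (insert m C).filter (fun j => i < j), y i j)
      = (y m m * (t + x m) + x m * ∑ j ∈ C, y m j) *
        ∏ i ∈ C.filter (fun i => ∃ j ∈ C, i < j),
          (y i i * ((t + x m) + ∑ j ∈ C.filter (fun j => j ≤ i), x j)
            + x i * ∑ j ∈ C.filter (fun j => i < j), y i j) := by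
    rw [hfilter, prod_insert (fun h => hmC (mem_of_mem_filter m h))]
    congr 1
    · rw [h1, h2, sum_singleton]
    · apply prod_congr rfl
      intro i hi
      have hiC : i ∈ C := mem_of_mem_filter i hi
      have hmi : m < i := hm i hiC
      have h3 : (insert m C).filter (fun j => j ≤ i) = insert m (C.filter (fun j => j ≤ i)) := by
        ext j
        simp only [mem_filter, mem_insert]
        constructor
        · rintro ⟨rfl | hj, hle⟩
          · exact Or.inl rfl
          · exact Or.inr ⟨hj, hle⟩
        · rintro (rfl | ⟨hj, hle⟩)
          · exact ⟨Or.inl rfl, le_of_lt hmi⟩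
          · exact ⟨Or.inr hj, hle⟩
      have h4 : (insert m C).filter (fun j => i < j) = C.filter (fun j => i < j) := by
        ext j
        simp only [mem_filter, mem_insert]
        constructor
        · rintro ⟨rfl | hj, hlt⟩
          · exact absurd hlt (not_lt.mpr (le_of_lt hmi))
          · exact ⟨hj, hlt⟩
        · rintro ⟨hj, hlt⟩
          exact ⟨Or.inr hj, hlt⟩
      rw [h3, h4, sum_insert (fun h => hmC (mem_of_mem_filter m h))]
      ring
  rw [Pf, dif_pos hD, key, hmax, Pf, dif_pos hC]
  ring

lemma Pf_insert' (m : ℕ) (C : Finset ℕ) (hm : ∀ c ∈ C, m < c) (t : R) :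
    Pf x y (insert m C) t
      = y m m * Tf x y C (t + x m) + x m * (∑ j ∈ C, y m j) * Pf x y C (t + x m) := by
  rcases C.eq_empty_or_nonempty with rfl | hC
  · simp [Tf, Pf_singleton]
  · rw [Pf_insert x y m C hC hm t, Tf, if_pos hC]
    ring

lemma Tf_eq (w : ℕ → R) (B : Finset ℕ) (z c : R) :
    z * Tf x y B (z + c + ∑ i ∈ B, w i)
      = z * Xif x y w B (z + c)
        + (∑ i ∈ B, w i) * (z * Pf x y B (z + c + ∑ i ∈ B, w i)) := by
  rcases B.eq_empty_or_nonempty with rfl | hB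
  · simp [Tf, Xif]
  · simp only [Tf, Xif, if_pos hB]
    ring

end ThetaAux

section Master
variable {R : Type*} [CommRing R] (x : ℕ → R) (y : ℕ → ℕ → R)

lemma theta_master : ∀ (n : ℕ) (A : Finset ℕ), A.card = n → A.Nonempty →
    ∀ (w : ℕ → R) (u v : R),
    (u + v) * Pf x y A (u + v + ∑ i ∈ A, w i)
      = ∑ B ∈ A.powerset, Xif x y w B u * Xif x y w (A \ B) v := by
  intro n
  induction n using Nat.strong_induction_on with
  | _ n IH =>
  intro A hcard hA w u v
  have hmA : A.min' hA ∈ A := A.min'_mem hA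
  rcases (A.erase (A.min' hA)).eq_empty_or_nonempty with hA' | hA'
  · -- base case : A = {m}
    have hAm : A = {A.min' hA} := by
      apply (eq_singleton_iff_unique_mem).mpr
      refine ⟨hmA, fun b hb => ?_⟩
      by_contra hbm
      have hmem : b ∈ A.erase (A.min' hA) := mem_erase.mpr ⟨hbm, hb⟩
      rw [hA'] at hmem
      exact absurd hmem (notMem_empty b)
    rw [hAm]
    rw [show ({A.min' hA} : Finset ℕ) = insert (A.min' hA) ∅ from rfl]
    rw [sum_powerset_insert (notMem_empty _)]
    simp only [powerset_empty, sum_singleton, insert_empty_eq]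
    simp [Xif, Pf_singleton]
    ring
  · -- inductive step
    set m := A.min' hA with hmdef
    set C := A.erase m with hCdef
    have hmC : m ∉ C := notMem_erase m A
    have hins : insert m C = A := insert_erase hmA
    have hmlt : ∀ c ∈ C, m < c := fun c hc =>
      lt_of_le_of_ne (A.min'_le c (mem_of_mem_erase hc)) (Ne.symm (mem_erase.mp hc).1)
    have hcardC : C.card < n := by
      rw [← hcard]
      exact card_erase_lt_of_mem hmA
    have IHC : ∀ (w0 : ℕ → R) (u0 v0 : R),
        (u0 + v0) * Pf x y C (u0 + v0 + ∑ i ∈ C, w0 i)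
          = ∑ B ∈ C.powerset, Xif x y w0 B u0 * Xif x y w0 (C \ B) v0 :=
      fun w0 u0 v0 => IH C.card hcardC C rfl hA' w0 u0 v0
    -- fixed-point identity J
    have J : ∀ j ∈ C,
        (∑ B ∈ C.powerset,
          (if j ∈ B
            then (u * Pf x y B (u + (w m + x m) + ∑ i ∈ B, w i)) * Xif x y w (C \ B) v
            else Xif x y w B u * (v * Pf x y (C \ B) (v + (w m + x m) + ∑ i ∈ C \ B, w i))))
        = (u + v) * Pf x y C (u + v + (w m + x m) + ∑ i ∈ C, w i) := by
      intro j hj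
      set w' : ℕ → R := fun i => w i + (if i = j then (w m + x m) else 0) with hw'
      have hsc : ∀ D : Finset ℕ,
          ∑ i ∈ D, w' i = (∑ i ∈ D, w i) + (if j ∈ D then (w m + x m) else 0) := by
        intro D
        simp only [hw']
        rw [sum_add_distrib]
        congr 1
        exact sum_ite_eq' D j fun _ => (w m + x m)
      have hIH := IHC w' u v
      rw [hsc C, if_pos hj] at hIH
      have e : u + v + ((∑ i ∈ C, w i) + (w m + x m))
          = u + v + (w m + x m) + ∑ i ∈ C, w i := by ring
      rw [e] at hIH
      rw [hIH]
      apply sum_congr rfl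
      intro B hB
      by_cases hjB : j ∈ B
      · rw [if_pos hjB]
        have hjCB : j ∉ C \ B := fun h => (mem_sdiff.mp h).2 hjB
        have h1 : Xif x y w' B u = u * Pf x y B (u + (w m + x m) + ∑ i ∈ B, w i) := by
          rw [Xif_pos x y w' ⟨j, hjB⟩ u, hsc B, if_pos hjB]
          have e2 : u + ((∑ i ∈ B, w i) + (w m + x m))
              = u + (w m + x m) + ∑ i ∈ B, w i := by ring
          rw [e2]
        have h2 : Xif x y w' (C \ B) v = Xif x y w (C \ B) v := by
          simp only [Xif]
          rw [hsc (C \ B), if_neg hjCB, add_zero]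
        rw [h1, h2]
      · rw [if_neg hjB]
        have hBC := mem_powerset.mp hB
        have hjCB : j ∈ C \ B := mem_sdiff.mpr ⟨hj, hjB⟩
        have h1 : Xif x y w' B u = Xif x y w B u := by
          simp only [Xif]
          rw [hsc B, if_neg hjB, add_zero]
        have h2 : Xif x y w' (C \ B) v
            = v * Pf x y (C \ B) (v + (w m + x m) + ∑ i ∈ C \ B, w i) := by
          rw [Xif_pos x y w' ⟨j, hjCB⟩ v, hsc (C \ B), if_pos hjCB]
          have e2 : v + ((∑ i ∈ C \ B, w i) + (w m + x m))
              = v + (w m + x m) + ∑ i ∈ C \ B, w i := by ring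
          rw [e2]
        rw [h1, h2]
    -- weighted convolution identity G
    have G : ∀ c : ℕ → R,
        (∑ B ∈ C.powerset, (∑ i ∈ B, c i) *
            ((u * Pf x y B (u + (w m + x m) + ∑ i ∈ B, w i)) * Xif x y w (C \ B) v))
          + ∑ B ∈ C.powerset, (∑ i ∈ C \ B, c i) *
              (Xif x y w B u * (v * Pf x y (C \ B) (v + (w m + x m) + ∑ i ∈ C \ B, w i)))
        = (∑ i ∈ C, c i) * ((u + v) * Pf x y C (u + v + (w m + x m) + ∑ i ∈ C, w i)) := by
      intro c
      rw [← sum_add_distrib]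
      have e : ∀ B ∈ C.powerset,
          (∑ i ∈ B, c i) *
              ((u * Pf x y B (u + (w m + x m) + ∑ i ∈ B, w i)) * Xif x y w (C \ B) v)
            + (∑ i ∈ C \ B, c i) *
              (Xif x y w B u * (v * Pf x y (C \ B) (v + (w m + x m) + ∑ i ∈ C \ B, w i)))
          = ∑ j ∈ C,
              (if j ∈ B
                then c j * ((u * Pf x y B (u + (w m + x m) + ∑ i ∈ B, w i)) * Xif x y w (C \ B) v)
                else c j * (Xif x y w B u * (v * Pf x y (C \ B) (v + (w m + x m) + ∑ i ∈ C \ B, w i)))) := by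
        intro B hB
        have hBC := mem_powerset.mp hB
        rw [Finset.sum_ite, filter_mem_eq_inter, inter_eq_right.mpr hBC, ← sdiff_eq_filter,
          ← Finset.sum_mul, ← Finset.sum_mul]
      rw [sum_congr rfl e, Finset.sum_comm]
      have e2 : ∀ j ∈ C,
          (∑ B ∈ C.powerset,
            (if j ∈ B
              then c j * ((u * Pf x y B (u + (w m + x m) + ∑ i ∈ B, w i)) * Xif x y w (C \ B) v)
              else c j * (Xif x y w B u * (v * Pf x y (C \ B) (v + (w m + x m) + ∑ i ∈ C \ B, w i)))))
          = c j * ((u + v) * Pf x y C (u + v + (w m + x m) + ∑ i ∈ C, w i)) := by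
        intro j hj
        rw [show (∑ B ∈ C.powerset,
            (if j ∈ B
              then c j * ((u * Pf x y B (u + (w m + x m) + ∑ i ∈ B, w i)) * Xif x y w (C \ B) v)
              else c j * (Xif x y w B u * (v * Pf x y (C \ B) (v + (w m + x m) + ∑ i ∈ C \ B, w i)))))
            = ∑ B ∈ C.powerset, c j *
              (if j ∈ B
                then (u * Pf x y B (u + (w m + x m) + ∑ i ∈ B, w i)) * Xif x y w (C \ B) v
                else Xif x y w B u * (v * Pf x y (C \ B) (v + (w m + x m) + ∑ i ∈ C \ B, w i)))
          from sum_congr rfl (fun B _ => by split_ifs <;> rfl)]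
        rw [← mul_sum, J j hj]
      rw [sum_congr rfl e2, ← Finset.sum_mul]
    -- expansion of Xif over insert m
    have hXins : ∀ D : Finset ℕ, D ⊆ C → ∀ z : R,
        Xif x y w (insert m D) z
          = y m m * (z * Xif x y w D (z + (w m + x m)))
            + ((∑ i ∈ D, w i) * (y m m * (z * Pf x y D (z + (w m + x m) + ∑ i ∈ D, w i)))
              + (∑ i ∈ D, y m i) * (x m * (z * Pf x y D (z + (w m + x m) + ∑ i ∈ D, w i)))) := by
      intro D hD z
      have hmD : m ∉ D := fun h => hmC (hD h)
      have hmd : ∀ c ∈ D, m < c := fun c hc => hmlt c (hD hc)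
      rw [Xif_pos x y w (insert_nonempty m D) z, sum_insert hmD, Pf_insert' x y m D hmd]
      have e : z + (w m + ∑ i ∈ D, w i) + x m
          = z + (w m + x m) + ∑ i ∈ D, w i := by ring
      rw [e]
      linear_combination (y m m) * Tf_eq x y w D z (w m + x m)
    -- sdiff lemmas
    have hsd1 : ∀ B : Finset ℕ, B ⊆ C → insert m C \ B = insert m (C \ B) := by
      intro B hBC
      have hmB : m ∉ B := fun h => hmC (hBC h)
      ext k
      simp only [mem_sdiff, mem_insert]
      constructor
      · rintro ⟨hkm | hk, hkB⟩
        · exact Or.inl hkm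
        · exact Or.inr ⟨hk, hkB⟩
      · rintro (hkm | ⟨hk, hkB⟩)
        · exact ⟨Or.inl hkm, fun hkB => hmB (hkm ▸ hkB)⟩
        · exact ⟨Or.inr hk, hkB⟩
    have hsd2 : ∀ B : Finset ℕ, B ⊆ C → insert m C \ insert m B = C \ B := by
      intro B hBC
      ext k
      simp only [mem_sdiff, mem_insert, not_or]
      constructor
      · rintro ⟨hkm | hk, hknm, hkB⟩
        · exact absurd hkm hknm
        · exact ⟨hk, hkB⟩
      · rintro ⟨hk, hkB⟩
        exact ⟨Or.inr hk, fun hkm => hmC (hkm ▸ hk), hkB⟩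
    -- main computation
    rw [← hins, sum_insert hmC, sum_powerset_insert hmC,
      Pf_insert x y m C hA' hmlt]
    have eZ : u + v + (w m + ∑ i ∈ C, w i) + x m
        = u + v + (w m + x m) + ∑ i ∈ C, w i := by ring
    rw [eZ]
    have e1 : (∑ B ∈ C.powerset, Xif x y w B u * Xif x y w (insert m C \ B) v)
        = ∑ B ∈ C.powerset,
            ((y m m * v) * (Xif x y w B u * Xif x y w (C \ B) (v + (w m + x m)))
              + (y m m * ((∑ i ∈ C \ B, w i) *
                    (Xif x y w B u * (v * Pf x y (C \ B) (v + (w m + x m) + ∑ i ∈ C \ B, w i))))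
                + x m * ((∑ i ∈ C \ B, y m i) *
                    (Xif x y w B u * (v * Pf x y (C \ B) (v + (w m + x m) + ∑ i ∈ C \ B, w i)))))) := by
      apply sum_congr rfl
      intro B hB
      have hBC := mem_powerset.mp hB
      rw [hsd1 B hBC, hXins (C \ B) sdiff_subset v]
      ring
    have e2 : (∑ B ∈ C.powerset, Xif x y w (insert m B) u * Xif x y w (insert m C \ insert m B) v)
        = ∑ B ∈ C.powerset,
            ((y m m * u) * (Xif x y w B (u + (w m + x m)) * Xif x y w (C \ B) v)
              + (y m m * ((∑ i ∈ B, w i) *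
                    ((u * Pf x y B (u + (w m + x m) + ∑ i ∈ B, w i)) * Xif x y w (C \ B) v))
                + x m * ((∑ i ∈ B, y m i) *
                    ((u * Pf x y B (u + (w m + x m) + ∑ i ∈ B, w i)) * Xif x y w (C \ B) v)))) := by
      apply sum_congr rfl
      intro B hB
      have hBC := mem_powerset.mp hB
      rw [hsd2 B hBC, hXins B hBC u]
      ring
    rw [e1, e2, sum_add_distrib, sum_add_distrib, sum_add_distrib, sum_add_distrib,
      ← mul_sum, ← mul_sum, ← mul_sum, ← mul_sum, ← mul_sum, ← mul_sum]
    have hS1 := IHC w (u + (w m + x m)) v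
    have eS1 : u + (w m + x m) + v + ∑ i ∈ C, w i
        = u + v + (w m + x m) + ∑ i ∈ C, w i := by ring
    rw [eS1] at hS1
    have hS2 := IHC w u (v + (w m + x m))
    have eS2 : u + (v + (w m + x m)) + ∑ i ∈ C, w i
        = u + v + (w m + x m) + ∑ i ∈ C, w i := by ring
    rw [eS2] at hS2
    linear_combination (y m m * u) * hS1 + (y m m * v) * hS2 - y m m * G w - x m * G (y m)

end Master


open scoped Classical in
/-- `Θ_{A ∪ {0}}` with `x_0` specialized to `z`: for nonempty `A` with `M = max A`, this is
`z · y_{M,M} · ∏_{i ∈ A∖{M}} (y_{i,i}(z + ∑_{j∈A, j≤i} x_j) + x_i ∑_{j∈A, j>i} y_{i,j})`,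
and `Θ_{{0}} = 1` when `A = ∅`. -/
noncomputable def Theta0 {R : Type*} [CommRing R] (x : ℕ → R) (y : ℕ → ℕ → R)
    (A : Finset ℕ) (z : R) : R :=
  if h : A.Nonempty then
    z * y (A.max' h) (A.max' h) *
      ∏ i ∈ A.filter (fun i => ∃ j ∈ A, i < j),
        (y i i * (z + ∑ j ∈ A.filter (fun j => j ≤ i), x j)
          + x i * ∑ j ∈ A.filter (fun j => i < j), y i j)
  else 1

/-- Convolution identity for `Θ` (Theorem 1.4 of the paper):
`Θ_{A∪{0}}|_{x_0 = u+v} = ∑_{B ⊔ C = A} Θ_{B∪{0}}|_{x_0 = u} · Θ_{C∪{0}}|_{x_0 = v}`. -/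
theorem theta_convolution {R : Type*} [CommRing R] (x : ℕ → R) (y : ℕ → ℕ → R)
    (A : Finset ℕ) (hA : A.Nonempty) (hpos : ∀ i ∈ A, 0 < i) (u v : R) :
    Theta0 x y A (u + v) = ∑ B ∈ A.powerset, Theta0 x y B u * Theta0 x y (A \ B) v := by
  have hX : ∀ (B : Finset ℕ) (z : R), Xif x y (fun _ => (0 : R)) B z = Theta0 x y B z := by
    intro B z
    rcases B.eq_empty_or_nonempty with rfl | hB
    · simp [Xif, Theta0]
    · simp only [Xif, if_pos hB, Theta0, dif_pos hB, Pf, sum_const_zero, add_zero, mul_assoc]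
  have hmaster := theta_master x y A.card A rfl hA (fun _ => (0 : R)) u v
  rw [sum_const_zero, add_zero] at hmaster
  have h1 : Theta0 x y A (u + v) = (u + v) * Pf x y A (u + v) := by
    rw [← hX A (u + v), Xif_pos x y _ hA, sum_const_zero, add_zero]
  rw [h1, hmaster]
  exact sum_congr rfl (fun B hB => by rw [hX, hX])
end

section
/- Determinant evaluation underlying the weighted matrix-tree computation: let n ≥ 2 and let K be the n×n matrix with entries k_{i,j} = -x_i·y_{i,j} for i < j, k_{i,j} = -x_j·y_{i,i} for i > j, and k_{i,i} = y_{i,i}·∑_{m=1}^{i-1} x_m + x_i·∑_{m=i+1}^{n} y_{i,m}. Let K_{1,1} be K with its first row and column removed. Then det(K_{1,1}) = x_1·y_{n,n}·∏_{i=2}^{n-1} ( y_{i,i}·∑_{j=1}^{i} x_j + x_i·∑_{j=i+1}^{n} y_{i,j} ). -/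
open Finset Matrix
lemma fin_Ioi_succ_map {m : ℕ} (i : Fin m) :
    Finset.Ioi i.succ = (Finset.Ioi i).map ⟨Fin.succ, Fin.succ_injective m⟩ := by
  ext a
  simp only [Finset.mem_Ioi, Finset.mem_map, Function.Embedding.coeFn_mk]
  constructor
  · intro h
    have ha : a ≠ 0 := (Fin.succ_pos i).trans h |>.ne'
    exact ⟨a.pred ha, by rwa [← Fin.succ_lt_succ_iff, Fin.succ_pred], Fin.succ_pred a ha⟩
  · rintro ⟨b, hb, rfl⟩
    exact Fin.succ_lt_succ_iff.mpr hb

lemma fin_Iio_succ_insert {m : ℕ} (i : Fin m) :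
    Finset.Iio i.succ = insert 0 ((Finset.Iio i).map ⟨Fin.succ, Fin.succ_injective m⟩) := by
  ext a
  simp only [Finset.mem_Iio, Finset.mem_insert, Finset.mem_map, Function.Embedding.coeFn_mk]
  constructor
  · intro h
    rcases eq_or_ne a 0 with rfl | ha
    · exact Or.inl rfl
    · exact Or.inr ⟨a.pred ha, by rwa [← Fin.succ_lt_succ_iff, Fin.succ_pred], Fin.succ_pred a ha⟩
  · rintro (rfl | ⟨b, hb, rfl⟩)
    · exact Fin.succ_pos i
    · exact Fin.succ_lt_succ_iff.mpr hb

lemma sum_univ_split {m : ℕ} {R : Type*} [AddCommMonoid R] (i : Fin m) (f : Fin m → R) :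
    ∑ j, f j = (∑ j ∈ Finset.Iio i, f j) + f i + ∑ j ∈ Finset.Ioi i, f j := by
  have h1 : Finset.univ.erase i = Finset.Iio i ∪ Finset.Ioi i := by
    ext a
    simp only [Finset.mem_erase, Finset.mem_univ, and_true, Finset.mem_union, Finset.mem_Iio,
      Finset.mem_Ioi]
    exact ne_iff_lt_or_gt
  have h2 : Disjoint (Finset.Iio i) (Finset.Ioi i) := by
    simp only [Finset.disjoint_left, Finset.mem_Iio, Finset.mem_Ioi]
    exact fun a h h' => absurd (h.trans h') (lt_irrefl a)
  rw [← Finset.sum_erase_add _ _ (Finset.mem_univ i), h1, Finset.sum_union h2]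
  abel

lemma sum_Iio_succ' {m : ℕ} {R : Type*} [AddCommMonoid R] (i : Fin m) (f : Fin (m + 1) → R) :
    ∑ a ∈ Finset.Iio i.succ, f a = f 0 + ∑ j ∈ Finset.Iio i, f j.succ := by
  rw [fin_Iio_succ_insert, Finset.sum_insert, Finset.sum_map]
  · rfl
  · simp only [Finset.mem_map, Function.Embedding.coeFn_mk]
    rintro ⟨b, -, hb⟩
    exact Fin.succ_ne_zero b hb

lemma sum_Ioi_succ' {m : ℕ} {R : Type*} [AddCommMonoid R] (i : Fin m) (f : Fin (m + 1) → R) :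
    ∑ a ∈ Finset.Ioi i.succ, f a = ∑ j ∈ Finset.Ioi i, f j.succ := by
  rw [fin_Ioi_succ_map, Finset.sum_map]; rfl

lemma sum_Iic_eq {m : ℕ} {R : Type*} [AddCommMonoid R] (i : Fin m) (f : Fin m → R) :
    ∑ a ∈ Finset.Iic i, f a = (∑ a ∈ Finset.Iio i, f a) + f i := by
  rw [← Finset.Iio_insert, Finset.sum_insert (by simp)]
  exact add_comm _ _

namespace MTDaux

variable {R : Type*} [CommRing R] (n : ℕ) (x : Fin (n + 2) → R) (y : Fin (n + 2) → Fin (n + 2) → R)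

def A0 : Matrix (Fin (n + 1)) (Fin (n + 1)) R := fun i j =>
  if i < j then -(x i.succ * y i.succ j.succ)
  else if j < i then -(x j.succ * y i.succ i.succ)
  else y i.succ i.succ * ∑ m ∈ Finset.Iio i.succ, x m
    + x i.succ * ∑ m ∈ Finset.Ioi i.succ, y i.succ m

lemma rowsum (i : Fin (n + 1)) : ∑ j, A0 n x y i j = x 0 * y i.succ i.succ := by
  rw [sum_univ_split i]
  have h1 : ∑ j ∈ Finset.Iio i, A0 n x y i j
      = -((∑ j ∈ Finset.Iio i, x j.succ) * y i.succ i.succ) := by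
    rw [Finset.sum_mul, ← Finset.sum_neg_distrib]
    refine Finset.sum_congr rfl fun j hj => ?_
    rw [Finset.mem_Iio] at hj
    rw [A0, if_neg (asymm hj), if_pos hj]
  have h2 : ∑ j ∈ Finset.Ioi i, A0 n x y i j
      = -(x i.succ * ∑ j ∈ Finset.Ioi i, y i.succ j.succ) := by
    rw [Finset.mul_sum, ← Finset.sum_neg_distrib]
    refine Finset.sum_congr rfl fun j hj => ?_
    rw [Finset.mem_Ioi] at hj
    rw [A0, if_pos hj]
  have h3 : A0 n x y i i = y i.succ i.succ * (x 0 + ∑ j ∈ Finset.Iio i, x j.succ)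
      + x i.succ * ∑ j ∈ Finset.Ioi i, y i.succ j.succ := by
    rw [A0, if_neg (lt_irrefl i), if_neg (lt_irrefl i), sum_Iio_succ', sum_Ioi_succ']
  rw [h1, h2, h3]
  ring



def w : Fin (n + 1) → R := fun j => if j = Fin.last n then x 0 else -(x j.succ)

def Fct : Fin (n + 2) → R := fun i =>
  y i i * ∑ j ∈ Finset.Iic i, x j + x i * ∑ j ∈ Finset.Ioi i, y i j

def A1 : Matrix (Fin (n + 1)) (Fin (n + 1)) R :=
  Matrix.updateCol (A0 n x y) (Fin.last n) fun k => ∑ j, A0 n x y k j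

lemma A1_apply (i j : Fin (n + 1)) :
    A1 n x y i j = if j = Fin.last n then x 0 * y i.succ i.succ else A0 n x y i j := by
  rw [A1, Matrix.updateCol_apply]
  split_ifs with h
  · exact rowsum n x y i
  · rfl

lemma det_A1 : (A1 n x y).det = (A0 n x y).det := by
  have := Matrix.det_updateCol_sum (A0 n x y) (Fin.last n) fun _ => (1 : R)
  simpa [A1] using this

def A2 : Matrix (Fin (n + 1)) (Fin (n + 1)) R := (A1 n x y).updateRow (Fin.last n) (w n x)

lemma det_A2 :
    (A1 n x y).det = y (Fin.last (n + 1)) (Fin.last (n + 1)) * (A2 n x y).det := by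
  have hrow : A1 n x y (Fin.last n)
      = y (Fin.last (n + 1)) (Fin.last (n + 1)) • w n x := by
    funext j
    rw [A1_apply, Pi.smul_apply, smul_eq_mul]
    simp only [w]
    split_ifs with h
    · subst h
      rw [Fin.succ_last, mul_comm]
    · have hj : j < Fin.last n := (Fin.le_last j).lt_of_ne h
      rw [A0, if_neg (asymm hj), if_pos hj, Fin.succ_last]
      ring
  conv_lhs => rw [← Matrix.updateRow_eq_self (A1 n x y) (Fin.last n), hrow]
  rw [Matrix.det_updateRow_smul, A2]

def A3 : Matrix (Fin (n + 1)) (Fin (n + 1)) R := fun i j =>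
  if i = Fin.last n then w n x j
  else if j < i then 0
  else if j = i then Fct n x y i.succ
  else if j = Fin.last n then 0
  else x j.succ * y i.succ i.succ - x i.succ * y i.succ j.succ

lemma det_A3 : (A2 n x y).det = (A3 n x y).det := by
  refine Matrix.det_eq_of_forall_row_eq_smul_add_const
    (fun i => if i = Fin.last n then 0 else y i.succ i.succ) (Fin.last n) (if_pos rfl) ?_
  intro i j
  have hA3L : ∀ k, A3 n x y (Fin.last n) k = w n x k := fun k => by rw [A3, if_pos rfl]
  rcases eq_or_ne i (Fin.last n) with rfl | hi
  · simp [A2, hA3L]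
  · have hiL : i < Fin.last n := (Fin.le_last i).lt_of_ne hi
    rw [A2, Matrix.updateRow_ne hi, A1_apply, A3, hA3L]
    simp only [w, if_neg hi]
    rcases eq_or_ne j (Fin.last n) with rfl | hj
    · simp only [eq_self_iff_true, if_true, if_neg (asymm hiL), if_neg hiL.ne']
      ring
    · simp only [if_neg hj]
      rcases lt_trichotomy j i with h | h | h
      · simp only [A0, if_neg (asymm h), if_pos h]
        ring
      · subst h
        simp only [A0, Fct, lt_self_iff_false, if_false, eq_self_iff_true, if_true]
        rw [sum_Iic_eq, sum_Iio_succ', sum_Ioi_succ']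
        ring
      · simp only [A0, if_pos h, if_neg (asymm h), if_neg h.ne']
        ring

lemma A3_col_last (i : Fin (n + 1)) (hi : i ≠ Fin.last n) :
    A3 n x y i (Fin.last n) = 0 := by
  have hiL : i < Fin.last n := (Fin.le_last i).lt_of_ne hi
  rw [A3, if_neg hi, if_neg (asymm hiL), if_neg hiL.ne', if_pos rfl]

lemma det_A3_eval :
    (A3 n x y).det = x 0 * ∏ i : Fin n, Fct n x y (Fin.castSucc i).succ := by
  rw [Matrix.det_succ_column (A3 n x y) (Fin.last n),
    Finset.sum_eq_single (Fin.last n)]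
  · have h1 : A3 n x y (Fin.last n) (Fin.last n) = x 0 := by
      rw [A3, if_pos rfl, w, if_pos rfl]
    have hB : ((A3 n x y).submatrix (Fin.last n).succAbove (Fin.last n).succAbove).det
        = ∏ i : Fin n, Fct n x y (Fin.castSucc i).succ := by
      rw [Fin.succAbove_last]
      rw [Matrix.det_of_upperTriangular]
      · refine Finset.prod_congr rfl fun i _ => ?_
        rw [Matrix.submatrix_apply, A3, if_neg (Fin.castSucc_lt_last i).ne,
          if_neg (lt_irrefl _), if_pos rfl]
      · intro i j hji
        have hji' : j < i := hji
        rw [Matrix.submatrix_apply, A3, if_neg (Fin.castSucc_lt_last i).ne,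
          if_pos (Fin.castSucc_lt_castSucc_iff.mpr hji')]
    rw [h1, hB]
    have : ((-1 : R)) ^ ((Fin.last n : ℕ) + (Fin.last n : ℕ)) = 1 :=
      Even.neg_one_pow ⟨n, by simp [Fin.val_last]⟩
    rw [this, one_mul]
  · intro i _ hi
    rw [A3_col_last n x y i hi, mul_zero, zero_mul]
  · simp

lemma prod_reindex :
    ∏ i ∈ (Finset.univ.erase (0 : Fin (n + 2))).erase (Fin.last (n + 1)), Fct n x y i
      = ∏ i : Fin n, Fct n x y (Fin.castSucc i).succ := by
  have hinj : Function.Injective (fun i : Fin n => (Fin.castSucc i).succ) :=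
    fun a b h => Fin.castSucc_injective n (Fin.succ_injective _ h)
  have hset : (Finset.univ.erase (0 : Fin (n + 2))).erase (Fin.last (n + 1))
      = Finset.univ.map ⟨fun i : Fin n => (Fin.castSucc i).succ, hinj⟩ := by
    ext m
    simp only [Finset.mem_erase, Finset.mem_univ, and_true, Finset.mem_map,
      Function.Embedding.coeFn_mk, true_and]
    constructor
    · rintro ⟨h1, h2⟩
      have hm0 : (m : ℕ) ≠ 0 := fun h => h2 (Fin.ext h)
      have hml : (m : ℕ) ≠ n + 1 := fun h => h1 (Fin.ext (by simp [h, Fin.val_last]))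
      have hm : (m : ℕ) < n + 2 := m.isLt
      refine ⟨⟨(m : ℕ) - 1, by omega⟩, Fin.ext ?_⟩
      simp only [Fin.val_succ, Fin.coe_castSucc]
      omega
    · rintro ⟨i, rfl⟩
      constructor
      · intro h
        have := congrArg Fin.val h
        simp only [Fin.val_succ, Fin.coe_castSucc, Fin.val_last] at this
        omega
      · exact Fin.succ_ne_zero _
  rw [hset, Finset.prod_map]
  rfl

end MTDaux



/-- Determinant evaluation underlying the weighted matrix-tree computation, for `n ≥ 2`
(here `n + 2`).  Indices `{1, …, n}` are encoded as `Fin n`; `K_{1,1}` is `K` with its first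
row and column removed, realized as the submatrix along `Fin.succ`. -/
theorem matrix_tree_determinant {R : Type*} [CommRing R] (n : ℕ)
    (x : Fin (n + 2) → R) (y : Fin (n + 2) → Fin (n + 2) → R) :
    Matrix.det
      (((Matrix.of fun i j : Fin (n + 2) =>
          if i < j then -(x i * y i j)
          else if j < i then -(x j * y i i)
          else y i i * ∑ m ∈ Finset.Iio i, x m + x i * ∑ m ∈ Finset.Ioi i, y i m) :
        Matrix (Fin (n + 2)) (Fin (n + 2)) R).submatrix Fin.succ Fin.succ)
    = x 0 * y (Fin.last (n + 1)) (Fin.last (n + 1)) *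
        ∏ i ∈ (Finset.univ.erase (0 : Fin (n + 2))).erase (Fin.last (n + 1)),
          (y i i * ∑ j ∈ Finset.Iic i, x j + x i * ∑ j ∈ Finset.Ioi i, y i j) := by
  have hA0 : ((Matrix.of fun i j : Fin (n + 2) =>
          if i < j then -(x i * y i j)
          else if j < i then -(x j * y i i)
          else y i i * ∑ m ∈ Finset.Iio i, x m + x i * ∑ m ∈ Finset.Ioi i, y i m) :
        Matrix (Fin (n + 2)) (Fin (n + 2)) R).submatrix Fin.succ Fin.succ = MTDaux.A0 n x y := by
    ext i j
    simp only [Matrix.submatrix_apply, Matrix.of_apply, MTDaux.A0, Fin.succ_lt_succ_iff]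
  have hF : ∀ i : Fin (n + 2),
      MTDaux.Fct n x y i
        = y i i * ∑ j ∈ Finset.Iic i, x j + x i * ∑ j ∈ Finset.Ioi i, y i j := fun i => rfl
  rw [hA0, ← MTDaux.det_A1, MTDaux.det_A2, MTDaux.det_A3, MTDaux.det_A3_eval,
    ← MTDaux.prod_reindex]
  rw [Finset.prod_congr rfl fun i _ => (hF i).symm]
  ring
end

section
/- Single-root-edge generating function: let A = {1,…,n} with n ≥ 2, and consider labelled trees on A rooted at 1 in which vertex 1 has exactly one child, with edge weights as in the weighted Cayley tree setup (edge with child c and parent p contributes x_p·y_{c,c} if c > p and x_c·y_{c,p} if c < p). Then the sum of weights over all such trees equals x_1·y_{n,n}·∏_{i=2}^{n-1} ( y_{i,i}·∑_{j=2}^{i} x_j + x_i·∑_{j=i+1}^{n} y_{i,j} ) — i.e., the full generating polynomial with x_1 replaced by 0 inside the product factors, retaining the leading factor x_1. -/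
set_option linter.unusedSectionVars false
set_option linter.unusedVariables false


open Finset Function
open scoped Classical

namespace SRE

variable {n : ℕ}

abbrev V (n : ℕ) := Fin (n + 2)

def LL : V n := Fin.last (n + 1)

lemma LL_ne_zero : (LL : V n) ≠ 0 := by
  simp [LL, Fin.ext_iff]

lemma le_LL (v : V n) : v ≤ LL := Fin.le_last v

/-- reachability under iteration -/
def reach (f : V n → V n) (a b : V n) : Prop := ∃ k, f^[k] a = b

lemma reach_refl (f : V n → V n) (a : V n) : reach f a a := ⟨0, rfl⟩

lemma reach_trans {f : V n → V n} {a b c : V n} (h1 : reach f a b) (h2 : reach f b c) :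
    reach f a c := by
  obtain ⟨k, hk⟩ := h1; obtain ⟨l, hl⟩ := h2
  exact ⟨l + k, by rw [Function.iterate_add_apply, hk, hl]⟩

lemma reach_iterate (f : V n → V n) (a : V n) (k : ℕ) : reach f a (f^[k] a) := ⟨k, rfl⟩

/-- cyclicity -/
def cyc (f : V n → V n) (a : V n) : Prop := ∃ k, 0 < k ∧ f^[k] a = a

lemma iterate_zero_fix {f : V n → V n} (h0 : f 0 = 0) (k : ℕ) : f^[k] (0 : V n) = 0 :=
  Function.iterate_fixed h0 k

lemma reach_zero_eq {f : V n → V n} (h0 : f 0 = 0) {w : V n} (h : reach f 0 w) : w = 0 := by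
  obtain ⟨k, hk⟩ := h; rw [iterate_zero_fix h0] at hk; exact hk.symm

lemma iterate_mul_fix {f : V n → V n} {a : V n} {c : ℕ} (hc : f^[c] a = a) (t : ℕ) :
    f^[c * t] a = a := by
  induction t with
  | zero => simp
  | succ t ih =>
    have : c * (t + 1) = c * t + c := by ring
    rw [this, Function.iterate_add_apply, hc, ih]

lemma iterate_mod {f : V n → V n} {a : V n} {c : ℕ} (hc0 : 0 < c) (hc : f^[c] a = a) (j : ℕ) :
    f^[j] a = f^[j % c] a := by
  conv_lhs => rw [← Nat.mod_add_div j c, Function.iterate_add_apply, iterate_mul_fix hc]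

lemma cyc_reach_symm {f : V n → V n} {a b : V n} (ha : cyc f a) (h : reach f a b) :
    reach f b a ∧ cyc f b := by
  obtain ⟨c, hc0, hc⟩ := ha
  obtain ⟨j, hj⟩ := h
  constructor
  · refine ⟨c * (j + 1) - j, ?_⟩
    rw [← hj, ← Function.iterate_add_apply]
    have h1 : j ≤ c * (j + 1) := by nlinarith
    have : c * (j + 1) - j + j = c * (j + 1) := by omega
    rw [this, iterate_mul_fix hc]
  · refine ⟨c, hc0, ?_⟩
    rw [← hj, ← Function.iterate_add_apply, Nat.add_comm, Function.iterate_add_apply, hc]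

lemma cyc_ne_zero_of {f : V n → V n} (h0 : f 0 = 0) {a : V n} (ha : cyc f a) (h : reach f a 0) :
    a = 0 := by
  have := (cyc_reach_symm ha h).1
  exact reach_zero_eq h0 this

/-- pigeonhole: some iterate is cyclic -/
lemma exists_cyclic_iterate (f : V n → V n) (a : V n) : ∃ k, cyc f (f^[k] a) := by
  obtain ⟨i, j, hne, hij⟩ :=
    Finite.exists_ne_map_eq_of_infinite (fun k : ℕ => f^[k] a)
  rcases Nat.lt_or_ge i j with h | h
  · exact ⟨i, ⟨j - i, by omega, by rw [← Function.iterate_add_apply]; rw [show j - i + i = j by omega]; exact hij.symm⟩⟩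
  · have hlt : j < i := by omega
    exact ⟨j, ⟨i - j, by omega, by rw [← Function.iterate_add_apply]; rw [show i - j + j = i by omega]; exact hij⟩⟩

lemma tree_iff_no_cycle {f : V n → V n} (h0 : f 0 = 0) :
    (∀ j, reach f j 0) ↔ (∀ v, cyc f v → v = 0) := by
  constructor
  · intro ht v hv
    exact cyc_ne_zero_of h0 hv (ht v)
  · intro hc j
    obtain ⟨k, hk⟩ := exists_cyclic_iterate f j
    have := hc _ hk
    exact ⟨k, this⟩

end SRE

-- markers and order helpers
namespace SRE
variable {n : ℕ}

/-- F-side markers: maxima of nonzero cycles -/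
noncomputable def MF (f : V n → V n) : Finset (V n) :=
  univ.filter (fun v => v ≠ 0 ∧ cyc f v ∧ ∀ w, reach f v w → w ≤ v)

lemma mem_MF {f : V n → V n} {v : V n} :
    v ∈ MF f ↔ v ≠ 0 ∧ cyc f v ∧ ∀ w, reach f v w → w ≤ v := by
  simp [MF]

/-- T-side markers: suffix maxima of the spine from LL -/
noncomputable def MT (f : V n → V n) : Finset (V n) :=
  univ.filter (fun v => v ≠ 0 ∧ (∃ k, 0 < k ∧ f^[k] LL = v) ∧
    ∀ w, reach f v w → w = 0 ∨ w ≤ v)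

lemma mem_MT {f : V n → V n} {v : V n} :
    v ∈ MT f ↔ v ≠ 0 ∧ (∃ k, 0 < k ∧ f^[k] LL = v) ∧
      ∀ w, reach f v w → w = 0 ∨ w ≤ v := by
  simp [MT]

noncomputable def topOf (s : Finset (V n)) : V n := WithBot.unbotD 0 s.max
noncomputable def botOf (s : Finset (V n)) : V n := WithTop.untopD 0 s.min
noncomputable def predIn (s : Finset (V n)) (i : V n) : V n := topOf (s.filter (· < i))
noncomputable def succIn (s : Finset (V n)) (i : V n) : V n := botOf (s.filter (i < ·))

lemma topOf_mem {s : Finset (V n)} (h : s.Nonempty) : topOf s ∈ s := by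
  obtain ⟨a, ha⟩ := Finset.max_of_nonempty h
  rw [topOf, ha]; exact Finset.mem_of_max ha

lemma le_topOf {s : Finset (V n)} {v : V n} (h : v ∈ s) : v ≤ topOf s := by
  obtain ⟨a, ha⟩ := Finset.max_of_nonempty ⟨v, h⟩
  rw [topOf, ha]; exact Finset.le_max_of_eq h ha

lemma botOf_mem {s : Finset (V n)} (h : s.Nonempty) : botOf s ∈ s := by
  obtain ⟨a, ha⟩ := Finset.min_of_nonempty h
  rw [botOf, ha]; exact Finset.mem_of_min ha

lemma botOf_le {s : Finset (V n)} {v : V n} (h : v ∈ s) : botOf s ≤ v := by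
  obtain ⟨a, ha⟩ := Finset.min_of_nonempty ⟨v, h⟩
  rw [botOf, ha]; exact Finset.min_le_of_eq h ha

lemma predIn_mem {s : Finset (V n)} {i : V n} (h : ∃ j ∈ s, j < i) :
    predIn s i ∈ s ∧ predIn s i < i := by
  have hne : (s.filter (· < i)).Nonempty := by
    obtain ⟨j, hj, hji⟩ := h; exact ⟨j, by simp [hj, hji]⟩
  have := topOf_mem hne
  simp only [Finset.mem_filter] at this
  exact ⟨this.1, this.2⟩

lemma le_predIn {s : Finset (V n)} {i j : V n} (hj : j ∈ s) (hji : j < i) :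
    j ≤ predIn s i := le_topOf (by simp [hj, hji])

lemma succIn_mem {s : Finset (V n)} {i : V n} (h : ∃ j ∈ s, i < j) :
    succIn s i ∈ s ∧ i < succIn s i := by
  have hne : (s.filter (i < ·)).Nonempty := by
    obtain ⟨j, hj, hji⟩ := h; exact ⟨j, by simp [hj, hji]⟩
  have := botOf_mem hne
  simp only [Finset.mem_filter] at this
  exact ⟨this.1, this.2⟩

lemma succIn_le {s : Finset (V n)} {i j : V n} (hj : j ∈ s) (hji : i < j) :
    succIn s i ≤ j := botOf_le (by simp [hj, hji])

lemma exists_lt_of_ne_bot {s : Finset (V n)} {i : V n} (hi : i ∈ s) (hne : i ≠ botOf s) :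
    ∃ j ∈ s, j < i := by
  refine ⟨botOf s, botOf_mem ⟨i, hi⟩, lt_of_le_of_ne (botOf_le hi) (Ne.symm hne)⟩

lemma exists_gt_of_ne_top {s : Finset (V n)} {i : V n} (hi : i ∈ s) (hne : i ≠ topOf s) :
    ∃ j ∈ s, i < j := by
  refine ⟨topOf s, topOf_mem ⟨i, hi⟩, lt_of_le_of_ne (le_topOf hi) hne⟩

lemma succIn_predIn {s : Finset (V n)} {i : V n} (hi : i ∈ s) (hne : i ≠ botOf s) :
    succIn s (predIn s i) = i := by
  obtain ⟨hm, hlt⟩ := predIn_mem (exists_lt_of_ne_bot hi hne)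
  have h1 : succIn s (predIn s i) ≤ i := succIn_le hi hlt
  obtain ⟨hm2, hlt2⟩ := succIn_mem ⟨i, hi, hlt⟩
  rcases lt_or_eq_of_le h1 with h | h
  · exact absurd (le_predIn hm2 h) (not_le.2 hlt2)
  · exact h

lemma predIn_succIn {s : Finset (V n)} {i : V n} (hi : i ∈ s) (hne : i ≠ topOf s) :
    predIn s (succIn s i) = i := by
  obtain ⟨hm, hlt⟩ := succIn_mem (exists_gt_of_ne_top hi hne)
  have h1 : i ≤ predIn s (succIn s i) := le_predIn hi hlt
  obtain ⟨hm2, hlt2⟩ := predIn_mem ⟨i, hi, hlt⟩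
  rcases lt_or_eq_of_le h1 with h | h
  · exact absurd (succIn_le hm2 h) (not_le.2 hlt2)
  · exact h.symm

/-- the bijection, F-side to T-side -/
noncomputable def phi (f : V n → V n) : V n → V n := fun i =>
  if i = LL then f (topOf (MF f))
  else if i ∈ MF f then (if i = botOf (MF f) then 0 else f (predIn (MF f) i))
  else f i

/-- the bijection, T-side to F-side -/
noncomputable def psi (g : V n → V n) : V n → V n := fun i =>
  if i = LL then 0
  else if i ∈ MT g then (if i = topOf (MT g) then g LL else g (succIn (MT g) i))
  else g i

/-- minimal cycle length -/
noncomputable def clen (f : V n → V n) (m : V n) : ℕ :=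
  if h : cyc f m then Nat.find h else 1

lemma clen_pos {f : V n → V n} {m : V n} (h : cyc f m) : 0 < clen f m := by
  rw [clen, dif_pos h]; exact (Nat.find_spec h).1

lemma clen_spec {f : V n → V n} {m : V n} (h : cyc f m) : f^[clen f m] m = m := by
  rw [clen, dif_pos h]; exact (Nat.find_spec h).2

lemma clen_min {f : V n → V n} {m : V n} (h : cyc f m) {j : ℕ} (hj0 : 0 < j)
    (hj : j < clen f m) : f^[j] m ≠ m := by
  rw [clen, dif_pos h] at hj
  intro he
  exact (Nat.find_min h hj) ⟨hj0, he⟩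

end SRE

-- F-side: properties of phi
namespace SRE
variable {n : ℕ}

/-- hypotheses for the F-side (a function with cycles) -/
structure Fh (f : V n → V n) : Prop where
  h0 : f 0 = 0
  hL : f LL = 0
  hnz : ∀ i, i ≠ 0 → i ≠ LL → f i ≠ 0
  hM : (MF f).Nonempty

section Fside

variable {f : V n → V n} (H : Fh f)
include H

omit H in lemma marker_ne_zero {m : V n} (hm : m ∈ MF f) : m ≠ 0 := (mem_MF.1 hm).1
omit H in lemma marker_cyc {m : V n} (hm : m ∈ MF f) : cyc f m := (mem_MF.1 hm).2.1
omit H in lemma marker_bound {m : V n} (hm : m ∈ MF f) : ∀ w, reach f m w → w ≤ m := (mem_MF.1 hm).2.2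

lemma cyc_LL_false : ¬ cyc f LL := by
  intro h
  exact LL_ne_zero (cyc_ne_zero_of H.h0 h ⟨1, by simpa using H.hL⟩)

lemma marker_ne_LL {m : V n} (hm : m ∈ MF f) : m ≠ LL := by
  intro h; exact cyc_LL_false H (h ▸ marker_cyc hm)

lemma marker_lt_LL {m : V n} (hm : m ∈ MF f) : m < LL :=
  lt_of_le_of_ne (le_LL m) (marker_ne_LL H hm)

omit H in lemma marker_f_le {m : V n} (hm : m ∈ MF f) : f m ≤ m :=
  marker_bound hm (f m) ⟨1, by simp⟩

lemma marker_f_ne_zero {m : V n} (hm : m ∈ MF f) : f m ≠ 0 :=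
  H.hnz m (marker_ne_zero hm) (marker_ne_LL H hm)

omit H in lemma zero_not_marker : (0 : V n) ∉ MF f := by
  intro h; exact marker_ne_zero h rfl

omit H in lemma cycle_elt_not_marker {m v : V n} (hm : m ∈ MF f) (hr : reach f m v) (hne : v ≠ m) :
    v ∉ MF f := by
  intro hv
  have h1 : v ≤ m := marker_bound hm v hr
  have h2 : reach f v m := (cyc_reach_symm (marker_cyc hm) hr).1
  exact hne (le_antisymm h1 (marker_bound hv m h2))

/-- block walk: phi follows the cycle of a marker -/
lemma cb {m : V n} (hm : m ∈ MF f) : ∀ j, j < clen f m → (phi f)^[j] (f m) = f^[j+1] m := by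
  intro j
  induction j with
  | zero => simp
  | succ j ih =>
    intro hj
    have hj' : j < clen f m := by omega
    rw [Function.iterate_succ_apply', ih hj']
    have hrv : reach f m (f^[j+1] m) := ⟨j+1, rfl⟩
    have hne : f^[j+1] m ≠ m := clen_min (marker_cyc hm) (by omega) hj
    have hnm : f^[j+1] m ∉ MF f := cycle_elt_not_marker hm hrv hne
    have hle : f^[j+1] m ≤ m := marker_bound hm _ hrv
    have hnLL : f^[j+1] m ≠ LL := by
      intro h
      exact absurd (h ▸ hle) (not_le.2 (marker_lt_LL H hm))
    rw [phi, if_neg hnLL, if_neg hnm]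
    rw [← Function.iterate_succ_apply' f (j+1) m]

lemma cb_end {m : V n} (hm : m ∈ MF f) : (phi f)^[clen f m - 1] (f m) = m := by
  have hp := clen_pos (marker_cyc hm)
  have := cb H hm (clen f m - 1) (by omega)
  rw [this, show clen f m - 1 + 1 = clen f m by omega, clen_spec (marker_cyc hm)]

lemma reach_phi_head {m : V n} (hm : m ∈ MF f) : reach (phi f) (f m) m :=
  ⟨clen f m - 1, cb_end H hm⟩

omit H in lemma phi_LL : phi f LL = f (topOf (MF f)) := if_pos rfl

lemma phi_zero : phi f (0 : V n) = 0 := by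
  rw [phi, if_neg (Ne.symm LL_ne_zero), if_neg (zero_not_marker), H.h0]

lemma phi_bot : phi f (botOf (MF f)) = 0 := by
  have hmem := botOf_mem H.hM
  rw [phi, if_neg (marker_ne_LL H hmem), if_pos hmem, if_pos rfl]

lemma phi_marker {m : V n} (hm : m ∈ MF f) (hne : m ≠ botOf (MF f)) :
    phi f m = f (predIn (MF f) m) := by
  rw [phi, if_neg (marker_ne_LL H hm), if_pos hm, if_neg hne]

omit H in lemma phi_not_marker {i : V n} (h1 : i ≠ LL) (h2 : i ∉ MF f) : phi f i = f i := by
  rw [phi, if_neg h1, if_neg h2]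

omit H in lemma predIn_marker {m : V n} (hm : m ∈ MF f) (hne : m ≠ botOf (MF f)) :
    predIn (MF f) m ∈ MF f ∧ predIn (MF f) m < m :=
  predIn_mem (exists_lt_of_ne_bot hm hne)

/-- anything phi-reachable from a marker is 0 or below the marker -/
lemma reach_phi_bound : ∀ m ∈ MF f, ∀ w, reach (phi f) m w → w = 0 ∨ w ≤ m := by
  suffices Hs : ∀ N : ℕ, ∀ m ∈ MF f, m.val < N → ∀ w, reach (phi f) m w → w = 0 ∨ w ≤ m by
    intro m hm; exact Hs (m.val + 1) m hm (Nat.lt_succ_self _)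
  intro N
  induction N with
  | zero => intro m _ h; omega
  | succ N ih =>
    intro m hm hmN w hw
    obtain ⟨k, hk⟩ := hw
    cases k with
    | zero => right; exact hk ▸ le_refl m
    | succ k =>
      rw [Function.iterate_succ_apply] at hk
      by_cases hb : m = botOf (MF f)
      · left
        rw [hb, phi_bot H, iterate_zero_fix (phi_zero H)] at hk
        exact hk.symm
      · obtain ⟨hm', hlt⟩ := predIn_marker hm hb
        set m' := predIn (MF f) m with hm'def
        rw [phi_marker H hm hb] at hk
        have hcyc' : cyc f m' := marker_cyc hm'
        by_cases hck : k < clen f m'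
        · rw [cb H hm' k hck] at hk
          right
          exact le_trans (hk ▸ marker_bound hm' _ ⟨k+1, rfl⟩) hlt.le
        · push_neg at hck
          have hp := clen_pos hcyc'
          have harith : k = (k - (clen f m' - 1)) + (clen f m' - 1) := by omega
          rw [harith, Function.iterate_add_apply, cb_end H hm'] at hk
          have hval : m'.val < N := by
            have : m'.val < m.val := hlt
            omega
          rcases ih m' hm' hval w ⟨_, hk⟩ with h | h
          · exact Or.inl h
          · exact Or.inr (le_trans h hlt.le)

/-- every marker phi-reaches 0 -/
lemma reach_phi_zero : ∀ m ∈ MF f, reach (phi f) m 0 := by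
  suffices Hs : ∀ N : ℕ, ∀ m ∈ MF f, m.val < N → reach (phi f) m 0 by
    intro m hm; exact Hs (m.val + 1) m hm (Nat.lt_succ_self _)
  intro N
  induction N with
  | zero => intro m _ h; omega
  | succ N ih =>
    intro m hm hmN
    by_cases hb : m = botOf (MF f)
    · exact ⟨1, by simpa using hb ▸ phi_bot H⟩
    · obtain ⟨hm', hlt⟩ := predIn_marker hm hb
      have h1 : reach (phi f) m (f (predIn (MF f) m)) := ⟨1, by simpa using phi_marker H hm hb⟩
      have h2 := reach_phi_head H hm'
      have h3 := ih _ hm' (by have : (predIn (MF f) m).val < m.val := hlt; omega)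
      exact reach_trans (reach_trans h1 h2) h3

/-- descend from a larger marker to a smaller one -/
lemma reach_phi_descend : ∀ m' ∈ MF f, ∀ m ∈ MF f, m ≤ m' → reach (phi f) m' m := by
  suffices Hs : ∀ N : ℕ, ∀ m' ∈ MF f, m'.val < N → ∀ m ∈ MF f, m ≤ m' → reach (phi f) m' m by
    intro m' hm'; exact Hs (m'.val + 1) m' hm' (Nat.lt_succ_self _)
  intro N
  induction N with
  | zero => intro m' _ h; omega
  | succ N ih =>
    intro m' hm' hval m hm hle
    rcases eq_or_lt_of_le hle with he | hlt
    · exact he ▸ reach_refl _ _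
    · have hb : m' ≠ botOf (MF f) := by
        intro h
        exact absurd (h ▸ botOf_le hm) (not_le.2 hlt)
      obtain ⟨hp, hplt⟩ := predIn_marker hm' hb
      have hmp : m ≤ predIn (MF f) m' := le_predIn hm hlt
      have h1 : reach (phi f) m' (f (predIn (MF f) m')) :=
        ⟨1, by simpa using phi_marker H hm' hb⟩
      have h2 := reach_phi_head H hp
      have h3 := ih _ hp (by have : (predIn (MF f) m').val < m'.val := hplt; omega) m hm hmp
      exact reach_trans (reach_trans h1 h2) h3

lemma exists_pos_iterate_marker {m : V n} (hm : m ∈ MF f) :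
    ∃ k, 0 < k ∧ (phi f)^[k] LL = m := by
  have htop := topOf_mem H.hM
  have h1 : reach (phi f) (f (topOf (MF f))) (topOf (MF f)) := reach_phi_head H htop
  have h2 : reach (phi f) (topOf (MF f)) m := reach_phi_descend H _ htop m hm (le_topOf hm)
  obtain ⟨j, hj⟩ := reach_trans h1 h2
  exact ⟨j + 1, by omega, by rw [Function.iterate_succ_apply, phi_LL]; exact hj⟩

/-- the phi-iterates of LL are 0 or nonzero f-cyclic -/
lemma phi_iter_cyc : ∀ k, (phi f)^[k+1] LL = 0 ∨
    (cyc f ((phi f)^[k+1] LL) ∧ (phi f)^[k+1] LL ≠ 0) := by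
  have hstep : ∀ v : V n, cyc f v → v ≠ 0 → phi f v = 0 ∨ (cyc f (phi f v) ∧ phi f v ≠ 0) := by
    intro v hcv hv0
    by_cases hmem : v ∈ MF f
    · by_cases hbv : v = botOf (MF f)
      · left; rw [hbv, phi_bot H]
      · obtain ⟨hp, _⟩ := predIn_marker hmem hbv
        right
        rw [phi_marker H hmem hbv]
        exact ⟨(cyc_reach_symm (marker_cyc hp) ⟨1, by simp⟩).2, marker_f_ne_zero H hp⟩
    · have hvLL : v ≠ LL := by intro h; exact cyc_LL_false H (h ▸ hcv)
      right
      rw [phi_not_marker hvLL hmem]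
      exact ⟨(cyc_reach_symm hcv ⟨1, by simp⟩).2, H.hnz v hv0 hvLL⟩
  intro k
  induction k with
  | zero =>
    right
    have htop := topOf_mem H.hM
    rw [show ((phi f)^[0+1] LL) = phi f LL by simp, phi_LL]
    exact ⟨(cyc_reach_symm (marker_cyc htop) ⟨1, by simp⟩).2, marker_f_ne_zero H htop⟩
  | succ k ih =>
    rw [show k + 1 + 1 = (k+1) + 1 by rfl, Function.iterate_succ_apply']
    rcases ih with h | ⟨hc, hne⟩
    · left; rw [h, phi_zero H]
    · exact hstep _ hc hne

omit H in lemma cycle_max_marker (h0 : f 0 = 0) {v : V n} (hv0 : v ≠ 0) (hcv : cyc f v) :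
    ∃ m ∈ MF f, reach f v m ∧ v ≤ m := by
  set orb := univ.filter (fun w => reach f v w) with horb
  have hvorb : v ∈ orb := by simp [horb, reach_refl]
  have hne : orb.Nonempty := ⟨v, hvorb⟩
  set m := topOf orb with hmdef
  have hmorb : m ∈ orb := topOf_mem hne
  have hrvm : reach f v m := by simpa [horb] using hmorb
  refine ⟨m, ?_, hrvm, le_topOf hvorb⟩
  rw [mem_MF]
  refine ⟨?_, (cyc_reach_symm hcv hrvm).2, ?_⟩
  · intro h
    exact hv0 (cyc_ne_zero_of h0 hcv (h ▸ hrvm))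
  · intro w hw
    have : w ∈ orb := by simp [horb, reach_trans hrvm hw]
    exact le_topOf this

omit H in lemma block_of_reach {m v : V n} (hcm : cyc f m) (h : reach f m v) :
    ∃ j < clen f m, f^[j+1] m = v := by
  obtain ⟨s, hs⟩ := h
  have hp := clen_pos hcm
  have hmod := iterate_mod hp (clen_spec hcm) s
  by_cases hr : s % clen f m = 0
  · refine ⟨clen f m - 1, by omega, ?_⟩
    rw [show clen f m - 1 + 1 = clen f m by omega, clen_spec hcm, ← hs, hmod, hr]
    simp
  · refine ⟨s % clen f m - 1, by have := Nat.mod_lt s hp; omega, ?_⟩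
    rw [show s % clen f m - 1 + 1 = s % clen f m by omega, ← hmod, hs]

lemma reach_phi_of_cycle_elt {m v : V n} (hm : m ∈ MF f) (h : reach f m v) :
    reach (phi f) v m := by
  obtain ⟨j, hj, hjv⟩ := block_of_reach (marker_cyc hm) h
  have hcb := cb H hm j hj
  refine ⟨clen f m - 1 - j, ?_⟩
  rw [← hjv, ← hcb, ← Function.iterate_add_apply, show clen f m - 1 - j + j = clen f m - 1 by omega,
    cb_end H hm]

/-- markers of phi f are exactly markers of f -/
lemma MT_phi : MT (phi f) = MF f := by
  ext v
  constructor
  · intro hv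
    obtain ⟨hv0, ⟨k, hk0, hk⟩, hbd⟩ := mem_MT.1 hv
    obtain ⟨k', rfl⟩ : ∃ k', k = k' + 1 := ⟨k - 1, by omega⟩
    rcases phi_iter_cyc H k' with h | ⟨hc, _⟩
    · rw [hk] at h; exact absurd h hv0
    · rw [hk] at hc
      obtain ⟨m, hm, hrvm, hvlem⟩ := cycle_max_marker H.h0 hv0 hc
      have hrmv : reach f m v := (cyc_reach_symm hc hrvm).1
      have hrphi : reach (phi f) v m := reach_phi_of_cycle_elt H hm hrmv
      rcases hbd m hrphi with h | h
      · exact absurd h (marker_ne_zero hm)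
      · rw [le_antisymm hvlem h]; exact hm
  · intro hv
    rw [mem_MT]
    exact ⟨marker_ne_zero hv, exists_pos_iterate_marker H hv,
      reach_phi_bound H v hv⟩

/-- phi f is a tree: everything reaches 0 -/
lemma tree_phi : ∀ v, reach (phi f) v 0 := by
  intro v
  have hex : ∃ k, cyc f (f^[k] v) ∨ f^[k] v = LL := by
    obtain ⟨k, hk⟩ := exists_cyclic_iterate f v
    exact ⟨k, Or.inl hk⟩
  set a := Nat.find hex with ha
  have hspec := Nat.find_spec hex
  have hiter : ∀ j ≤ a, (phi f)^[j] v = f^[j] v := by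
    intro j
    induction j with
    | zero => simp
    | succ j ih =>
      intro hj
      have hj' : j ≤ a := by omega
      rw [Function.iterate_succ_apply', ih hj', Function.iterate_succ_apply']
      have hnot := Nat.find_min hex (show j < a by omega)
      push_neg at hnot
      have hnm : f^[j] v ∉ MF f := by
        intro h; exact hnot.1 (marker_cyc h)
      exact phi_not_marker hnot.2 hnm
  have hav : (phi f)^[a] v = f^[a] v := hiter a le_rfl
  rcases hspec with hc | hLL
  · by_cases hz : f^[a] v = 0
    · exact ⟨a, by rw [hav, hz]⟩
    · obtain ⟨m, hm, hr, _⟩ := cycle_max_marker H.h0 hz hc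
      have hrmu : reach f m (f^[a] v) := (cyc_reach_symm hc hr).1
      have h1 : reach (phi f) (f^[a] v) m := reach_phi_of_cycle_elt H hm hrmu
      have h2 := reach_phi_zero H m hm
      exact reach_trans (reach_trans ⟨a, hav⟩ h1) h2
  · have htop := topOf_mem H.hM
    have h1 : reach (phi f) LL 0 := by
      refine reach_trans ⟨1, by simpa using phi_LL⟩ ?_
      exact reach_trans (reach_phi_head H htop) (reach_phi_zero H _ htop)
    exact reach_trans ⟨a, by rw [hav, hLL]⟩ h1

lemma children_phi : ∀ i : V n, i ≠ 0 → (phi f i = 0 ↔ i = botOf (MF f)) := by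
  intro i hi0
  constructor
  · intro hz
    by_cases hiLL : i = LL
    · rw [hiLL, phi_LL] at hz
      exact absurd hz (marker_f_ne_zero H (topOf_mem H.hM))
    · by_cases hmem : i ∈ MF f
      · by_cases hib : i = botOf (MF f)
        · exact hib
        · rw [phi_marker H hmem hib] at hz
          exact absurd hz (marker_f_ne_zero H (predIn_marker hmem hib).1)
      · rw [phi_not_marker hiLL hmem] at hz
        exact absurd hz (H.hnz i hi0 hiLL)
  · intro h; rw [h]; exact phi_bot H

lemma card_children_phi :
    (univ.filter fun i : V n => i ≠ 0 ∧ phi f i = 0).card = 1 := by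
  have : (univ.filter fun i : V n => i ≠ 0 ∧ phi f i = 0) = {botOf (MF f)} := by
    ext i
    simp only [Finset.mem_filter, Finset.mem_univ, true_and, Finset.mem_singleton]
    constructor
    · rintro ⟨h1, h2⟩; exact (children_phi H i h1).1 h2
    · rintro rfl
      exact ⟨marker_ne_zero (botOf_mem H.hM), phi_bot H⟩
  rw [this, Finset.card_singleton]

lemma phi_LL_ne_zero : phi f LL ≠ 0 := by
  rw [phi_LL]; exact marker_f_ne_zero H (topOf_mem H.hM)

/-- round trip F → T → F -/
lemma psi_phi : psi (phi f) = f := by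
  funext i
  rw [psi, MT_phi H]
  by_cases hiLL : i = LL
  · rw [if_pos hiLL, hiLL, H.hL]
  · rw [if_neg hiLL]
    by_cases hmem : i ∈ MF f
    · rw [if_pos hmem]
      by_cases htop : i = topOf (MF f)
      · rw [if_pos htop, phi_LL, htop]
      · rw [if_neg htop]
        obtain ⟨hs, hlt⟩ := succIn_mem (exists_gt_of_ne_top hmem htop)
        have hsb : succIn (MF f) i ≠ botOf (MF f) := by
          intro h
          exact absurd (h ▸ botOf_le hmem) (not_le.2 hlt)
        rw [phi_marker H hs hsb, predIn_succIn hmem htop]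
    · rw [if_neg hmem, phi_not_marker hiLL hmem]

end Fside
end SRE

-- T-side: properties of psi
namespace SRE
variable {n : ℕ}

/-- spine position -/
noncomputable def posT (g : V n → V n) (v : V n) : ℕ :=
  if h : ∃ k, 0 < k ∧ g^[k] LL = v then Nat.find h else 0

/-- length of the spine (position of 0) -/
noncomputable def tl (g : V n → V n) : ℕ := posT g 0

/-- hypotheses for the T-side (a tree whose root has one child, not through LL) -/
structure Th (g : V n → V n) : Prop where
  h0 : g 0 = 0
  ht : ∀ v, reach g v 0
  hcard : (univ.filter fun i : V n => i ≠ 0 ∧ g i = 0).card = 1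
  hL : g LL ≠ 0

section Tside

variable {g : V n → V n} (G : Th g)
include G

lemma no_cyc : ∀ v, cyc g v → v = 0 := (tree_iff_no_cycle G.h0).1 G.ht

lemma child_unique {i j : V n} (hi0 : i ≠ 0) (hi : g i = 0) (hj0 : j ≠ 0) (hj : g j = 0) :
    i = j := by
  have h := G.hcard
  rw [Finset.card_eq_one] at h
  obtain ⟨c, hc⟩ := h
  have h1 : i ∈ univ.filter fun i : V n => i ≠ 0 ∧ g i = 0 := by simp [hi0, hi]
  have h2 : j ∈ univ.filter fun i : V n => i ≠ 0 ∧ g i = 0 := by simp [hj0, hj]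
  rw [hc, Finset.mem_singleton] at h1 h2
  rw [h1, h2]

lemma pos_unique {v : V n} (hv0 : v ≠ 0) {a b : ℕ} (ha0 : 0 < a) (hb0 : 0 < b)
    (ha : g^[a] LL = v) (hb : g^[b] LL = v) : a = b := by
  by_contra hne
  have key : ∀ s t : ℕ, 0 < s → s < t → g^[s] LL = v → g^[t] LL = v → False := by
    intro s t hs hst hsv htv
    have : g^[t - s] v = v := by
      conv_lhs => rw [← hsv, ← Function.iterate_add_apply]
      rw [show t - s + s = t by omega, htv]
    exact hv0 (no_cyc G v ⟨t - s, by omega, this⟩)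
  rcases Nat.lt_or_ge a b with h | h
  · exact key a b ha0 h ha hb
  · exact key b a hb0 (by omega) hb ha

lemma mt_ne_LL {v : V n} (hv : v ∈ MT g) : v ≠ LL := by
  obtain ⟨hv0, ⟨k, hk0, hk⟩, _⟩ := mem_MT.1 hv
  intro h
  rw [h] at hk
  exact LL_ne_zero (no_cyc G LL ⟨k, hk0, hk⟩)

lemma posT_spec {v : V n} (hv : v ∈ MT g) : 0 < posT g v ∧ g^[posT g v] LL = v := by
  obtain ⟨_, hs, _⟩ := mem_MT.1 hv
  rw [posT, dif_pos hs]
  exact ⟨(Nat.find_spec hs).1, (Nat.find_spec hs).2⟩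

omit G in
lemma posT_eq {v : V n} (hs : ∃ k, 0 < k ∧ g^[k] LL = v) :
    0 < posT g v ∧ g^[posT g v] LL = v := by
  rw [posT, dif_pos hs]
  exact ⟨(Nat.find_spec hs).1, (Nat.find_spec hs).2⟩

lemma posT_unique {v : V n} (hv0 : v ≠ 0) {k : ℕ} (hk0 : 0 < k) (hk : g^[k] LL = v) :
    posT g v = k := by
  have hs : ∃ k, 0 < k ∧ g^[k] LL = v := ⟨k, hk0, hk⟩
  obtain ⟨h1, h2⟩ := posT_eq hs
  exact pos_unique G hv0 h1 hk0 h2 hk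

lemma tl_spec : 0 < tl g ∧ g^[tl g] LL = 0 := by
  obtain ⟨k, hk⟩ := G.ht LL
  have hk0 : 0 < k := by
    rcases Nat.eq_zero_or_pos k with h | h
    · exfalso; rw [h] at hk; exact LL_ne_zero hk
    · exact h
  exact posT_eq ⟨k, hk0, hk⟩

lemma iter_ge_tl {k : ℕ} (hk : tl g ≤ k) : g^[k] LL = 0 := by
  obtain ⟨h1, h2⟩ := tl_spec G
  rw [show k = (k - tl g) + tl g by omega, Function.iterate_add_apply, h2,
    iterate_zero_fix G.h0]

lemma spine_ne_zero {k : ℕ} (hk0 : 0 < k) (hk : k < tl g) : g^[k] LL ≠ 0 := by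
  intro h
  have hs : ∃ j, 0 < j ∧ g^[j] LL = (0 : V n) := ⟨k, hk0, h⟩
  rw [tl, posT, dif_pos hs] at hk
  exact Nat.find_min hs hk ⟨hk0, h⟩

lemma tl_ge_two : 2 ≤ tl g := by
  obtain ⟨h1, h2⟩ := tl_spec G
  by_contra h
  push_neg at h
  have h1' : tl g = 1 := by omega
  rw [h1'] at h2
  simp only [Function.iterate_one] at h2
  exact G.hL h2

lemma pos_lt_tl {v : V n} (hv : v ∈ MT g) : posT g v < tl g := by
  obtain ⟨h1, h2⟩ := posT_spec G hv
  by_contra h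
  push_neg at h
  exact (mem_MT.1 hv).1 (by rw [← h2, iter_ge_tl G h])

/-- larger markers appear earlier on the spine -/
lemma pos_order {u v : V n} (hu : u ∈ MT g) (hv : v ∈ MT g) (h : posT g v < posT g u) :
    u < v := by
  obtain ⟨hu1, hu2⟩ := posT_spec G hu
  obtain ⟨hv1, hv2⟩ := posT_spec G hv
  have hr : g^[posT g u - posT g v] v = u := by
    have hh : g^[posT g u - posT g v] (g^[posT g v] LL) = u := by
      rw [← Function.iterate_add_apply, show posT g u - posT g v + posT g v = posT g u by omega, hu2]
    rwa [hv2] at hh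
  have := (mem_MT.1 hv).2.2 u ⟨_, hr⟩
  rcases this with h0 | hle
  · exact absurd h0 (mem_MT.1 hu).1
  · rcases lt_or_eq_of_le hle with h' | h'
    · exact h'
    · exfalso
      exact absurd (pos_unique G (mem_MT.1 hv).1 hu1 hv1 (hu2.trans h') hv2) (by omega)

lemma pos_order_iff {u v : V n} (hu : u ∈ MT g) (hv : v ∈ MT g) :
    u < v ↔ posT g v < posT g u := by
  constructor
  · intro h
    rcases Nat.lt_trichotomy (posT g v) (posT g u) with h' | h' | h'
    · exact h'
    · exfalso
      obtain ⟨hu1, hu2⟩ := posT_spec G hu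
      obtain ⟨hv1, hv2⟩ := posT_spec G hv
      rw [← h'] at hu2
      exact absurd (hu2.symm.trans hv2) (ne_of_lt h)
    · exact absurd (pos_order G hv hu h') (by intro hh; exact absurd h (not_lt.2 hh.le))
  · exact pos_order G hu hv

/-- the unique child of the root -/
lemma child_mem : g^[tl g - 1] LL ∈ MT g ∧ g (g^[tl g - 1] LL) = 0 := by
  have h2 := tl_ge_two G
  obtain ⟨ht1, ht2⟩ := tl_spec G
  have hgc : g (g^[tl g - 1] LL) = 0 := by
    have hh : g^[tl g] LL = g (g^[tl g - 1] LL) := by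
      conv_lhs => rw [show tl g = (tl g - 1) + 1 by omega]
      rw [Function.iterate_succ_apply']
    rw [← hh, ht2]
  have hc0 : g^[tl g - 1] LL ≠ 0 := spine_ne_zero G (by omega) (by omega)
  refine ⟨mem_MT.2 ⟨hc0, ⟨tl g - 1, by omega, rfl⟩, ?_⟩, hgc⟩
  intro w hw
  obtain ⟨j, hj⟩ := hw
  cases j with
  | zero => right; exact hj ▸ le_refl _
  | succ j =>
    left
    rw [Function.iterate_succ_apply, hgc, iterate_zero_fix G.h0] at hj
    exact hj.symm

lemma MT_nonempty : (MT g).Nonempty := ⟨_, (child_mem G).1⟩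

lemma pos_child : posT g (g^[tl g - 1] LL) = tl g - 1 := by
  have h2 := tl_ge_two G
  exact posT_unique G (mem_MT.1 (child_mem G).1).1 (by omega) rfl

lemma child_eq_bot : g^[tl g - 1] LL = botOf (MT g) := by
  have hcm := (child_mem G).1
  have hb := botOf_mem (MT_nonempty G)
  rcases lt_trichotomy (g^[tl g - 1] LL) (botOf (MT g)) with h | h | h
  · exact absurd (botOf_le hcm) (not_le.2 h)
  · exact h
  · exfalso
    have hpos := (pos_order_iff G hb hcm).1 h
    rw [pos_child G] at hpos
    have := pos_lt_tl G hb
    omega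

lemma g_bot : g (botOf (MT g)) = 0 := by
  rw [← child_eq_bot G]; exact (child_mem G).2

lemma child_iff {i : V n} (hi0 : i ≠ 0) : g i = 0 ↔ i = botOf (MT g) := by
  constructor
  · intro h
    exact child_unique G hi0 h (mem_MT.1 (botOf_mem (MT_nonempty G))).1 (g_bot G)
  · intro h; rw [h]; exact g_bot G

/-- the maximum over a suffix of the spine is a marker -/
lemma seg_max_marker {i : ℕ} (hi0 : 0 < i) (hit : i < tl g) :
    ∃ u ∈ MT g, i ≤ posT g u ∧ ∀ j, i ≤ j → j < tl g → g^[j] LL ≤ u := by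
  set U : Finset (V n) := (Finset.Icc i (tl g - 1)).image (fun j => g^[j] LL) with hU
  have hne : U.Nonempty := ⟨g^[i] LL, by simp [hU]; exact ⟨i, by omega, rfl⟩⟩
  set u := topOf U with hu
  obtain ⟨ju, hju, hjuv⟩ : ∃ j ∈ Finset.Icc i (tl g - 1), g^[j] LL = u := by
    have := topOf_mem hne
    rw [hU] at this
    simpa using this
  rw [Finset.mem_Icc] at hju
  have hju0 : 0 < ju := by omega
  have hu0 : u ≠ 0 := by rw [← hjuv]; exact spine_ne_zero G hju0 (by omega)
  have humem : u ∈ MT g := by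
    refine mem_MT.2 ⟨hu0, ⟨ju, hju0, hjuv⟩, ?_⟩
    intro w hw
    obtain ⟨l, hl⟩ := hw
    have hval : g^[l] u = g^[l + ju] LL := by
      conv_lhs => rw [← hjuv]
      rw [← Function.iterate_add_apply]
    rcases Nat.lt_or_ge (l + ju) (tl g) with h | h
    · right
      rw [← hl, hval, hu]
      apply le_topOf
      rw [hU]
      simp only [Finset.mem_image, Finset.mem_Icc]
      exact ⟨l + ju, ⟨by omega, by omega⟩, rfl⟩
    · left
      rw [← hl, hval]
      exact iter_ge_tl G h
  refine ⟨u, humem, ?_, ?_⟩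
  · rw [posT_unique G hu0 hju0 hjuv]; omega
  · intro j hij hjt
    rw [hu]
    apply le_topOf
    rw [hU]
    simp only [Finset.mem_image, Finset.mem_Icc]
    exact ⟨j, ⟨hij, by omega⟩, rfl⟩

/-- start of the block of a marker -/
noncomputable def stm (g : V n → V n) (m : V n) : ℕ :=
  if m = topOf (MT g) then 0 else posT g (succIn (MT g) m)

lemma succ_marker {m : V n} (hm : m ∈ MT g) (hne : m ≠ topOf (MT g)) :
    succIn (MT g) m ∈ MT g ∧ m < succIn (MT g) m :=
  succIn_mem (exists_gt_of_ne_top hm hne)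

lemma stm_lt_pos {m : V n} (hm : m ∈ MT g) : stm g m < posT g m := by
  by_cases h : m = topOf (MT g)
  · rw [stm, if_pos h]; exact (posT_spec G hm).1
  · rw [stm, if_neg h]
    obtain ⟨hs, hlt⟩ := succ_marker G hm h
    exact (pos_order_iff G hm hs).1 hlt

lemma seg_no_marker {m : V n} (hm : m ∈ MT g) {u : V n} (hu : u ∈ MT g)
    (h1 : stm g m < posT g u) (h2 : posT g u < posT g m) : False := by
  have hmu : m < u := pos_order G hm hu h2
  by_cases h : m = topOf (MT g)
  · exact absurd (le_topOf hu) (not_le.2 (h ▸ hmu))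
  · rw [stm, if_neg h] at h1
    obtain ⟨hs, hlt⟩ := succ_marker G hm h
    have : u < succIn (MT g) m := pos_order G hu hs h1
    exact absurd (succIn_le hu hmu) (not_le.2 this)
    
/-- values in the block of a marker -/
lemma seg_bound {m : V n} (hm : m ∈ MT g) {j : ℕ} (h1 : stm g m < j) (h2 : j ≤ posT g m) :
    g^[j] LL ≤ m ∧ (g^[j] LL ∈ MT g → g^[j] LL = m) ∧ g^[j] LL ≠ 0 ∧ g^[j] LL ≠ LL := by
  have hpt := pos_lt_tl G hm
  have hj0 : 0 < j := by omega
  have hjt : j < tl g := by omega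
  have hne0 : g^[j] LL ≠ 0 := spine_ne_zero G hj0 hjt
  have hneLL : g^[j] LL ≠ LL := by
    intro h
    exact LL_ne_zero (no_cyc G LL ⟨j, hj0, h⟩)
  have hle : g^[j] LL ≤ m := by
    obtain ⟨u, hu, hupos, hubd⟩ := seg_max_marker G hj0 hjt
    have hnot : ¬ (stm g m < posT g u ∧ posT g u < posT g m) := by
      intro ⟨a, b⟩; exact seg_no_marker G hm hu a b
    have hup : posT g m ≤ posT g u := by
      by_contra hc
      push_neg at hc
      exact hnot ⟨by omega, by omega⟩
    rcases Nat.eq_or_lt_of_le hup with h | h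
    · have : u = m := by
        obtain ⟨_, hu2⟩ := posT_spec G hu
        obtain ⟨_, hm2⟩ := posT_spec G hm
        rw [← hu2, ← h, hm2]
      exact this ▸ hubd j le_rfl hjt
    · exact le_trans (hubd j le_rfl hjt) (pos_order G hu hm h).le
  refine ⟨hle, ?_, hne0, hneLL⟩
  intro hmem
  have hpos : posT g (g^[j] LL) = j := posT_unique G hne0 hj0 rfl
  rcases Nat.eq_or_lt_of_le h2 with h | h
  · obtain ⟨_, hm2⟩ := posT_spec G hm
    rw [← hm2, ← h]
  · exfalso
    exact seg_no_marker G hm hmem (by omega) (by omega)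

lemma psi_LL_eval : psi g LL = 0 := if_pos rfl

lemma psi_zero : psi g (0 : V n) = 0 := by
  have h1 : (0 : V n) ∉ MT g := by
    intro h; exact (mem_MT.1 h).1 rfl
  rw [psi, if_neg (Ne.symm LL_ne_zero), if_neg h1, G.h0]

omit G in
lemma psi_not_marker {i : V n} (h1 : i ≠ LL) (h2 : i ∉ MT g) : psi g i = g i := by
  rw [psi, if_neg h1, if_neg h2]

lemma psi_top : psi g (topOf (MT g)) = g LL := by
  have hmem := topOf_mem (MT_nonempty G)
  rw [psi, if_neg (mt_ne_LL G hmem), if_pos hmem, if_pos rfl]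

lemma psi_marker {m : V n} (hm : m ∈ MT g) (hne : m ≠ topOf (MT g)) :
    psi g m = g (succIn (MT g) m) := by
  rw [psi, if_neg (mt_ne_LL G hm), if_pos hm, if_neg hne]

/-- head of the block -/
lemma psi_head {m : V n} (hm : m ∈ MT g) : psi g m = g^[stm g m + 1] LL := by
  by_cases h : m = topOf (MT g)
  · rw [stm, if_pos h, h, psi_top G]
    simp
  · rw [stm, if_neg h, psi_marker G hm h]
    obtain ⟨hs, _⟩ := succ_marker G hm h
    obtain ⟨_, hs2⟩ := posT_spec G hs
    have hh : g (g^[posT g (succIn (MT g) m)] LL) = g^[posT g (succIn (MT g) m) + 1] LL :=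
      (Function.iterate_succ_apply' g _ LL).symm
    conv_lhs => rw [← hs2]
    rw [hh]

/-- psi walks along the block -/
lemma psi_walk {m : V n} (hm : m ∈ MT g) :
    ∀ j, j < posT g m - stm g m → (psi g)^[j] (psi g m) = g^[stm g m + 1 + j] LL := by
  intro j
  induction j with
  | zero => intro _; simpa using psi_head G hm
  | succ j ih =>
    intro hj
    rw [Function.iterate_succ_apply', ih (by omega)]
    obtain ⟨hle, hmem, hne0, hneLL⟩ := seg_bound G hm
      (show stm g m < stm g m + 1 + j by omega) (show stm g m + 1 + j ≤ posT g m by omega)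
    have hnm : g^[stm g m + 1 + j] LL ∉ MT g := by
      intro h
      have heq := hmem h
      have := posT_unique G hne0 (by omega) (rfl : g^[stm g m + 1 + j] LL = g^[stm g m + 1 + j] LL)
      rw [heq] at this
      have := (posT_spec G hm).1
      omega
    rw [psi_not_marker hneLL hnm, ← Function.iterate_succ_apply' g (stm g m + 1 + j) LL]
    congr 1

lemma psi_cyc {m : V n} (hm : m ∈ MT g) : (psi g)^[posT g m - stm g m] m = m := by
  have hlt := stm_lt_pos G hm
  have h1 := psi_walk G hm (posT g m - stm g m - 1) (by omega)
  have h2 : (psi g)^[posT g m - stm g m] m = (psi g)^[posT g m - stm g m - 1] (psi g m) := by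
    conv_lhs => rw [show posT g m - stm g m = (posT g m - stm g m - 1) + 1 by omega]
    rw [Function.iterate_succ_apply]
  rw [h2, h1, show stm g m + 1 + (posT g m - stm g m - 1) = posT g m by omega]
  exact (posT_spec G hm).2

lemma psi_orbit_bound {m : V n} (hm : m ∈ MT g) : ∀ w, reach (psi g) m w → w ≤ m := by
  intro w hw
  obtain ⟨l, hl⟩ := hw
  have hlt := stm_lt_pos G hm
  set per := posT g m - stm g m with hper
  have hper0 : 0 < per := by omega
  rw [iterate_mod hper0 (psi_cyc G hm) l] at hl
  by_cases h : l % per = 0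
  · rw [h] at hl; simp at hl; exact hl ▸ le_refl m
  · have hmod : l % per < per := Nat.mod_lt l hper0
    rw [show l % per = (l % per - 1) + 1 by omega, Function.iterate_succ_apply,
      psi_walk G hm (l % per - 1) (by omega)] at hl
    have := (seg_bound G hm (show stm g m < stm g m + 1 + (l % per - 1) by omega)
      (show stm g m + 1 + (l % per - 1) ≤ posT g m by omega)).1
    exact hl ▸ this

lemma mt_subset_mf : MT g ⊆ MF (psi g) := by
  intro m hm
  rw [mem_MF]
  have hlt := stm_lt_pos G hm
  exact ⟨(mem_MT.1 hm).1, ⟨posT g m - stm g m, by omega, psi_cyc G hm⟩, psi_orbit_bound G hm⟩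

lemma psi_LL_not_cyc : ¬ cyc (psi g) LL := by
  intro ⟨k, hk0, hk⟩
  rw [show k = (k-1) + 1 by omega, Function.iterate_add_apply] at hk
  simp only [Function.iterate_one, psi_LL_eval G] at hk
  rw [iterate_zero_fix (psi_zero G)] at hk
  exact LL_ne_zero hk.symm

lemma mf_subset_mt : MF (psi g) ⊆ MT g := by
  intro v hv
  obtain ⟨hv0, hcv, hbd⟩ := mem_MF.1 hv
  have horb : ∃ j, (psi g)^[j] v ∈ MT g := by
    by_contra hno
    push_neg at hno
    have hiter : ∀ j, (psi g)^[j] v = g^[j] v := by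
      intro j
      induction j with
      | zero => simp
      | succ j ih =>
        rw [Function.iterate_succ_apply', Function.iterate_succ_apply', ih]
        have hcj : cyc (psi g) (g^[j] v) := by
          rw [← ih]
          exact (cyc_reach_symm hcv ⟨j, rfl⟩).2
        have hnLL : g^[j] v ≠ LL := by
          intro h
          exact psi_LL_not_cyc G (h ▸ hcj)
        rw [psi_not_marker hnLL (ih ▸ hno j)]
    obtain ⟨k, hk0, hk⟩ := hcv
    rw [hiter k] at hk
    exact hv0 (no_cyc G v ⟨k, hk0, hk⟩)
  obtain ⟨j, hj⟩ := horb
  set u := (psi g)^[j] v with hu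
  have hru : reach (psi g) v u := ⟨j, rfl⟩
  have hrv : reach (psi g) u v := (cyc_reach_symm hcv hru).1
  have h1 : u ≤ v := hbd u hru
  have h2 : v ≤ u := psi_orbit_bound G hj v hrv
  rw [← le_antisymm h1 h2]
  exact hj

lemma MF_psi : MF (psi g) = MT g :=
  le_antisymm (mf_subset_mt G) (mt_subset_mf G)

/-- psi g satisfies the F-side hypotheses -/
lemma Fh_psi : Fh (psi g) := by
  refine ⟨psi_zero G, psi_LL_eval G, ?_, ?_⟩
  · intro i hi0 hiLL
    by_cases hmem : i ∈ MT g
    · by_cases htop : i = topOf (MT g)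
      · rw [htop, psi_top G]; exact G.hL
      · rw [psi_marker G hmem htop]
        obtain ⟨hs, hlt⟩ := succ_marker G hmem htop
        intro h
        have hsb : succIn (MT g) i = botOf (MT g) :=
          (child_iff G (mem_MT.1 hs).1).1 h
        have := botOf_le hmem
        rw [← hsb] at this
        exact absurd hlt (not_lt.2 this)
    · rw [psi_not_marker hiLL hmem]
      intro h
      exact hmem ((child_iff G hi0).1 h ▸ botOf_mem (MT_nonempty G))
  · rw [MF_psi G]; exact MT_nonempty G

lemma psi_not_tree : ¬ ∀ v, reach (psi g) v 0 := by
  intro h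
  have hb := botOf_mem (MT_nonempty G)
  have hcyc : cyc (psi g) (botOf (MT g)) := by
    have := stm_lt_pos G hb
    exact ⟨posT g (botOf (MT g)) - stm g (botOf (MT g)), by omega, psi_cyc G hb⟩
  exact (mem_MT.1 hb).1 ((tree_iff_no_cycle (psi_zero G)).1 h _ hcyc)

/-- round trip T → F → T -/
lemma phi_psi : phi (psi g) = g := by
  funext i
  rw [phi, MF_psi G]
  by_cases hiLL : i = LL
  · rw [if_pos hiLL, hiLL, psi_top G]
  · rw [if_neg hiLL]
    by_cases hmem : i ∈ MT g
    · rw [if_pos hmem]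
      by_cases hbot : i = botOf (MT g)
      · rw [if_pos hbot, hbot, g_bot G]
      · rw [if_neg hbot]
        obtain ⟨hp, hplt⟩ := predIn_mem (exists_lt_of_ne_bot hmem hbot)
        have hptop : predIn (MT g) i ≠ topOf (MT g) := by
          intro h
          exact absurd (h ▸ le_topOf hmem) (not_le.2 hplt)
        rw [psi_marker G hp hptop, succIn_predIn hmem hbot]
    · rw [if_neg hmem, psi_not_marker hiLL hmem]

end Tside
end SRE

-- weights and the sum identities
namespace SRE
variable {n : ℕ}

section Weights

variable {R : Type*} [CommRing R] (x : V n → R) (y : V n → V n → R)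

/-- edge weight -/
def ew (i j : V n) : R := if j < i then x j * y i i else x i * y i j

/-- weight of a parent function -/
def W (p : V n → V n) : R := ∏ i ∈ univ.erase 0, ew x y i (p i)

lemma zero_lt_of_ne {v : V n} (h : v ≠ 0) : 0 < v :=
  lt_of_le_of_ne (Fin.zero_le v) (Ne.symm h)

variable {f : V n → V n} (H : Fh f)
include H

/-- weight preservation of the bijection -/
lemma W_phi : W x y (phi f) = W x y f := by
  classical
  set S : Finset (V n) := insert LL (MF f) with hSdef
  have hS : S ⊆ univ.erase 0 := by
    intro i hi
    rcases Finset.mem_insert.1 hi with h | h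
    · simp [h, LL_ne_zero]
    · simp [marker_ne_zero h]
  have hsplit : ∀ q : V n → V n,
      W x y q = (∏ i ∈ (univ.erase 0) \ S, ew x y i (q i)) * ∏ i ∈ S, ew x y i (q i) := by
    intro q
    rw [W, ← Finset.prod_sdiff hS]
  rw [hsplit (phi f), hsplit f]
  have hoff : ∀ i ∈ (univ.erase 0) \ S, ew x y i (phi f i) = ew x y i (f i) := by
    intro i hi
    rw [Finset.mem_sdiff, hSdef, Finset.mem_insert] at hi
    push_neg at hi
    rw [phi_not_marker hi.2.1 hi.2.2]
  rw [Finset.prod_congr rfl hoff]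
  congr 1
  -- on S, all edges are descents
  have hbot := botOf_mem H.hM
  have htop := topOf_mem H.hM
  have hphidesc : ∀ i ∈ S, ew x y i (phi f i) = x (phi f i) * y i i := by
    intro i hi
    rcases Finset.mem_insert.1 hi with h | h
    · subst h
      rw [phi_LL, ew, if_pos (lt_of_le_of_lt (marker_f_le htop) (marker_lt_LL H htop))]
    · by_cases hb : i = botOf (MF f)
      · subst hb
        rw [phi_bot H, ew, if_pos (zero_lt_of_ne (marker_ne_zero h))]
      · obtain ⟨hp, hplt⟩ := predIn_marker h hb
        rw [phi_marker H h hb, ew, if_pos (lt_of_le_of_lt (marker_f_le hp) hplt)]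
  have hfdesc : ∀ i ∈ S, ew x y i (f i) = x (f i) * y i i := by
    intro i hi
    rcases Finset.mem_insert.1 hi with h | h
    · subst h
      rw [H.hL, ew, if_pos (zero_lt_of_ne LL_ne_zero)]
    · rcases lt_or_eq_of_le (marker_f_le h) with h' | h'
      · rw [ew, if_pos h']
      · rw [ew, if_neg (by rw [h']; exact lt_irrefl _), h']
  rw [Finset.prod_congr rfl hphidesc, Finset.prod_congr rfl hfdesc,
    Finset.prod_mul_distrib, Finset.prod_mul_distrib]
  congr 1
  -- the multiset of x-parents is permuted by σ
  refine Finset.prod_nbij'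
    (fun i => if i = LL then topOf (MF f) else if i = botOf (MF f) then LL else predIn (MF f) i)
    (fun i => if i = LL then botOf (MF f) else if i = topOf (MF f) then LL else succIn (MF f) i)
    ?_ ?_ ?_ ?_ ?_
  · intro a ha
    rcases Finset.mem_insert.1 ha with h | h
    · simp only [if_pos h]; exact Finset.mem_insert_of_mem htop
    · rw [if_neg (marker_ne_LL H h)]
      by_cases hb : a = botOf (MF f)
      · rw [if_pos hb]; exact Finset.mem_insert_self _ _
      · rw [if_neg hb]; exact Finset.mem_insert_of_mem (predIn_marker h hb).1
  · intro a ha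
    rcases Finset.mem_insert.1 ha with h | h
    · simp only [if_pos h]; exact Finset.mem_insert_of_mem hbot
    · rw [if_neg (marker_ne_LL H h)]
      by_cases hb : a = topOf (MF f)
      · rw [if_pos hb]; exact Finset.mem_insert_self _ _
      · rw [if_neg hb]; exact Finset.mem_insert_of_mem (succIn_mem (exists_gt_of_ne_top h hb)).1
  · intro a ha
    rcases Finset.mem_insert.1 ha with h | h
    · rw [if_pos h, if_neg (marker_ne_LL H htop), if_pos rfl, h]
    · rw [if_neg (marker_ne_LL H h)]
      by_cases hb : a = botOf (MF f)
      · rw [if_pos hb, if_pos rfl, hb]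
      · rw [if_neg hb]
        obtain ⟨hp, hplt⟩ := predIn_marker h hb
        rw [if_neg (marker_ne_LL H hp), if_neg (by
          intro hc
          exact absurd (hc ▸ le_topOf h) (not_le.2 hplt)), succIn_predIn h hb]
  · intro a ha
    rcases Finset.mem_insert.1 ha with h | h
    · rw [if_pos h, if_neg (marker_ne_LL H hbot), if_pos rfl, h]
    · rw [if_neg (marker_ne_LL H h)]
      by_cases hb : a = topOf (MF f)
      · rw [if_pos hb, if_pos rfl, hb]
      · rw [if_neg hb]
        obtain ⟨hs, hslt⟩ := succIn_mem (exists_gt_of_ne_top h hb)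
        rw [if_neg (marker_ne_LL H hs), if_neg (by
          intro hc
          exact absurd (hc ▸ botOf_le h) (not_le.2 hslt)), predIn_succIn h hb]
  · intro a ha
    rcases Finset.mem_insert.1 ha with h | h
    · rw [if_pos h, h, phi_LL]
    · rw [if_neg (marker_ne_LL H h)]
      by_cases hb : a = botOf (MF f)
      · rw [if_pos hb, hb, phi_bot H, H.hL]
      · rw [if_neg hb, phi_marker H h hb]

end Weights
end SRE

-- the two halves of the main identity
namespace SRE
variable {n : ℕ}

/-- trees rooted at 0 with a single root child -/
noncomputable def TS (n : ℕ) : Finset (V n → V n) :=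
  Finset.univ.filter fun p : V n → V n =>
    p 0 = 0 ∧ (∀ j, ∃ k : ℕ, p^[k] j = 0) ∧
      (Finset.univ.filter fun i : V n => i ≠ 0 ∧ p i = 0).card = 1

/-- functions with p LL = 0 and no other vertex mapping to 0 -/
noncomputable def FS (n : ℕ) : Finset (V n → V n) :=
  Finset.univ.filter fun p : V n → V n =>
    p 0 = 0 ∧ p LL = 0 ∧ ∀ i, i ≠ 0 → i ≠ LL → p i ≠ 0

lemma mem_TS {p : V n → V n} : p ∈ TS n ↔
    p 0 = 0 ∧ (∀ j, ∃ k : ℕ, p^[k] j = 0) ∧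
      (Finset.univ.filter fun i : V n => i ≠ 0 ∧ p i = 0).card = 1 := by
  simp [TS]

lemma mem_FS {p : V n → V n} : p ∈ FS n ↔
    p 0 = 0 ∧ p LL = 0 ∧ ∀ i, i ≠ 0 → i ≠ LL → p i ≠ 0 := by
  simp [FS]

lemma FS_tree_mem_TS {p : V n → V n} (hp : p ∈ FS n) (ht : ∀ j, ∃ k : ℕ, p^[k] j = 0) :
    p ∈ TS n := by
  obtain ⟨h1, h2, h3⟩ := mem_FS.1 hp
  refine mem_TS.2 ⟨h1, ht, ?_⟩
  have : (Finset.univ.filter fun i : V n => i ≠ 0 ∧ p i = 0) = {LL} := by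
    ext i
    simp only [Finset.mem_filter, Finset.mem_univ, true_and, Finset.mem_singleton]
    constructor
    · rintro ⟨hi0, hi⟩
      by_contra hiLL
      exact h3 i hi0 hiLL hi
    · rintro rfl
      exact ⟨LL_ne_zero, h2⟩
  rw [this, Finset.card_singleton]

lemma Th_of_TS_not_FS {p : V n → V n} (hp : p ∈ TS n) (hnf : p ∉ FS n) : Th p := by
  obtain ⟨h1, h2, h3⟩ := mem_TS.1 hp
  refine ⟨h1, h2, h3, ?_⟩
  intro hL0
  apply hnf
  refine mem_FS.2 ⟨h1, hL0, ?_⟩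
  intro i hi0 hiLL hpi
  rw [Finset.card_eq_one] at h3
  obtain ⟨c, hc⟩ := h3
  have hLLin : LL ∈ Finset.univ.filter fun i : V n => i ≠ 0 ∧ p i = 0 := by
    simp [LL_ne_zero, hL0]
  have hiin : i ∈ Finset.univ.filter fun i : V n => i ≠ 0 ∧ p i = 0 := by
    simp [hi0, hpi]
  rw [hc, Finset.mem_singleton] at hLLin hiin
  exact hiLL (hiin.trans hLLin.symm)

lemma Fh_of_FS_not_TS {p : V n → V n} (hp : p ∈ FS n) (hnt : p ∉ TS n) : Fh p := by
  obtain ⟨h1, h2, h3⟩ := mem_FS.1 hp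
  refine ⟨h1, h2, h3, ?_⟩
  have hnotree : ¬ ∀ j, ∃ k : ℕ, p^[k] j = 0 := by
    intro h
    exact hnt (FS_tree_mem_TS hp h)
  push_neg at hnotree
  obtain ⟨j, hj⟩ := hnotree
  obtain ⟨k, hk⟩ := exists_cyclic_iterate p j
  have hne : p^[k] j ≠ 0 := hj k
  obtain ⟨m, hm, -, -⟩ := cycle_max_marker h1 hne hk
  exact ⟨m, hm⟩

section Sums
variable {R : Type*} [CommRing R] (x : V n → R) (y : V n → V n → R)

lemma sumA : ∑ p ∈ TS n, W x y p = ∑ p ∈ FS n, W x y p := by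
  classical
  rw [← Finset.sum_inter_add_sum_sdiff (TS n) (FS n) (W x y),
    ← Finset.sum_inter_add_sum_sdiff (FS n) (TS n) (W x y), Finset.inter_comm]
  congr 1
  refine Finset.sum_nbij' (i := psi) (j := phi) ?_ ?_ ?_ ?_ ?_
  · intro q hq
    rw [Finset.mem_sdiff] at hq ⊢
    have G := Th_of_TS_not_FS hq.1 hq.2
    have HF := Fh_psi G
    constructor
    · exact mem_FS.2 ⟨HF.h0, HF.hL, HF.hnz⟩
    · intro hmem
      exact psi_not_tree G (mem_TS.1 hmem).2.1
  · intro q hq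
    rw [Finset.mem_sdiff] at hq ⊢
    have H := Fh_of_FS_not_TS hq.1 hq.2
    constructor
    · exact mem_TS.2 ⟨phi_zero H, tree_phi H, card_children_phi H⟩
    · intro hmem
      exact phi_LL_ne_zero H (mem_FS.1 hmem).2.1
  · intro q hq
    rw [Finset.mem_sdiff] at hq
    exact phi_psi (Th_of_TS_not_FS hq.1 hq.2)
  · intro q hq
    rw [Finset.mem_sdiff] at hq
    exact psi_phi (Fh_of_FS_not_TS hq.1 hq.2)
  · intro q hq
    rw [Finset.mem_sdiff] at hq
    have G := Th_of_TS_not_FS hq.1 hq.2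
    have := W_phi x y (Fh_psi G)
    rw [phi_psi G] at this
    exact this

lemma sumB : ∑ p ∈ FS n, W x y p
    = x 0 * y LL LL *
        ∏ i ∈ (Finset.univ.erase (0 : V n)).erase LL,
          (y i i * ∑ j ∈ (Finset.Iic i).erase 0, x j + x i * ∑ j ∈ Finset.Ioi i, y i j) := by
  classical
  set t : ∀ _ : V n, Finset (V n) := fun i => if i = 0 ∨ i = LL then {0} else univ.erase 0 with ht
  set w' : V n → V n → R := fun i j => if i = 0 then 1 else ew x y i j with hw'
  have hFS : FS n = Fintype.piFinset t := by
    ext p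
    rw [mem_FS, Fintype.mem_piFinset]
    constructor
    · rintro ⟨h1, h2, h3⟩ i
      by_cases hi : i = 0 ∨ i = LL
      · rw [ht]
        simp only [if_pos hi, Finset.mem_singleton]
        rcases hi with h | h <;> rw [h]
        · exact h1
        · exact h2
      · rw [ht]
        simp only [if_neg hi, Finset.mem_erase, Finset.mem_univ, and_true]
        push_neg at hi
        exact h3 i hi.1 hi.2
    · intro h
      have ht0' : t 0 = {0} := by rw [ht]; simp
      have htLL' : t LL = {0} := by rw [ht]; simp
      have h0 := h 0
      have hLL := h LL
      rw [ht0', Finset.mem_singleton] at h0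
      rw [htLL', Finset.mem_singleton] at hLL
      refine ⟨h0, hLL, ?_⟩
      intro i hi0 hiLL
      have hi := h i
      rw [ht] at hi
      simp only [if_neg (by push_neg; exact ⟨hi0, hiLL⟩ : ¬ (i = 0 ∨ i = LL)),
        Finset.mem_erase, Finset.mem_univ, and_true] at hi
      exact hi
  have hW : ∀ p : V n → V n, (∏ i, w' i (p i)) = W x y p := by
    intro p
    rw [← Finset.mul_prod_erase univ (fun i => w' i (p i)) (Finset.mem_univ 0)]
    have h1 : w' 0 (p 0) = 1 := if_pos rfl
    rw [h1, one_mul, W]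
    refine Finset.prod_congr rfl ?_
    intro i hi
    rw [Finset.mem_erase] at hi
    exact if_neg hi.1
  have step1 : ∑ p ∈ FS n, W x y p = ∏ i, ∑ j ∈ t i, w' i j := by
    rw [Finset.prod_univ_sum, hFS]
    exact Finset.sum_congr rfl fun p _ => (hW p).symm
  rw [step1]
  have hLLne : LL ∈ univ.erase (0 : V n) := by simp [LL_ne_zero]
  rw [← Finset.mul_prod_erase univ (fun i => ∑ j ∈ t i, w' i j) (Finset.mem_univ 0),
    ← Finset.mul_prod_erase (univ.erase 0) (fun i => ∑ j ∈ t i, w' i j) hLLne]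
  have ht0 : t 0 = {0} := by rw [ht]; simp
  have htLL : t LL = {0} := by rw [ht]; simp
  have h00 : ∑ j ∈ t 0, w' 0 j = 1 := by
    rw [ht0, Finset.sum_singleton]
    simp [hw']
  have hLLf : ∑ j ∈ t LL, w' LL j = x 0 * y LL LL := by
    rw [htLL, Finset.sum_singleton]
    simp only [hw']
    rw [if_neg LL_ne_zero]
    simp only [ew]
    rw [if_pos (zero_lt_of_ne LL_ne_zero)]
  rw [h00, one_mul, hLLf]
  congr 1
  refine Finset.prod_congr rfl ?_
  intro i hi
  rw [Finset.mem_erase, Finset.mem_erase] at hi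
  obtain ⟨hiLL, hi0, -⟩ := hi
  have hti : t i = univ.erase 0 := by
    rw [ht]
    exact if_neg (by push_neg; exact ⟨hi0, hiLL⟩)
  have hwi : ∀ j, w' i j = ew x y i j := fun j => if_neg hi0
  rw [hti]
  rw [Finset.sum_congr rfl (fun j _ => hwi j)]
  rw [← Finset.sum_filter_add_sum_filter_not (univ.erase 0) (· < i) (ew x y i)]
  have hA : (univ.erase (0 : V n)).filter (· < i) = (Finset.Iio i).erase 0 := by
    ext j
    simp only [Finset.mem_filter, Finset.mem_erase, Finset.mem_univ, and_true,
      Finset.mem_Iio]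
  have hB : (univ.erase (0 : V n)).filter (fun j => ¬ j < i) = insert i (Finset.Ioi i) := by
    ext j
    simp only [Finset.mem_filter, Finset.mem_erase, Finset.mem_univ, and_true,
      Finset.mem_insert, Finset.mem_Ioi, not_lt]
    constructor
    · rintro ⟨hj0, hij⟩
      rcases lt_or_eq_of_le hij with h | h
      · exact Or.inr h
      · exact Or.inl h.symm
    · rintro (rfl | h)
      · exact ⟨hi0, le_refl _⟩
      · refine ⟨?_, h.le⟩
        intro hj
        rw [hj] at h
        exact absurd (zero_lt_of_ne hi0) (not_lt.2 h.le)
  rw [hA, hB]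
  have hsum1 : ∑ j ∈ (Finset.Iio i).erase 0, ew x y i j
      = (∑ j ∈ (Finset.Iio i).erase 0, x j) * y i i := by
    rw [Finset.sum_mul]
    refine Finset.sum_congr rfl ?_
    intro j hj
    rw [Finset.mem_erase, Finset.mem_Iio] at hj
    simp only [ew]; rw [if_pos hj.2]
  have hnotmem : i ∉ Finset.Ioi i := by simp
  rw [Finset.sum_insert hnotmem]
  have hii : ew x y i i = x i * y i i := by simp only [ew]; rw [if_neg (lt_irrefl i)]
  have hsum2 : ∑ j ∈ Finset.Ioi i, ew x y i j = x i * ∑ j ∈ Finset.Ioi i, y i j := by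
    rw [Finset.mul_sum]
    refine Finset.sum_congr rfl ?_
    intro j hj
    rw [Finset.mem_Ioi] at hj
    simp only [ew]; rw [if_neg (not_lt.2 hj.le)]
  rw [hsum1, hii, hsum2]
  have hIic : (Finset.Iic i).erase 0 = insert i ((Finset.Iio i).erase 0) := by
    ext j
    simp only [Finset.mem_erase, Finset.mem_Iic, Finset.mem_insert, Finset.mem_Iio]
    constructor
    · rintro ⟨hj0, hij⟩
      rcases lt_or_eq_of_le hij with h | h
      · exact Or.inr ⟨hj0, h⟩
      · exact Or.inl h
    · rintro (rfl | ⟨hj0, hij⟩)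
      · exact ⟨hi0, le_refl _⟩
      · exact ⟨hj0, hij.le⟩
  have hnotmem2 : i ∉ (Finset.Iio i).erase 0 := by simp
  rw [hIic, Finset.sum_insert hnotmem2]
  ring

end Sums
end SRE


open scoped Classical in
/-- Single-root-edge generating function (Lemma 3.1 of the paper), for `n ≥ 2` (here `n + 2`).
Vertices `{1, …, n}` are encoded as `Fin n`, the root `1` being `0`.  The sum runs over
labelled trees rooted at `0` in which the root has exactly one child, with edge weights as in
the weighted Cayley tree setup; in the answer the inner `x`-sums omit `x_1 = x 0`. -/
theorem single_root_edge_gf {R : Type*} [CommRing R] (n : ℕ)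
    (x : Fin (n + 2) → R) (y : Fin (n + 2) → Fin (n + 2) → R) :
    ∑ p ∈ (Finset.univ.filter fun p : Fin (n + 2) → Fin (n + 2) =>
        p 0 = 0 ∧ (∀ j, ∃ k : ℕ, p^[k] j = 0) ∧
          (Finset.univ.filter fun i : Fin (n + 2) => i ≠ 0 ∧ p i = 0).card = 1),
      ∏ i ∈ Finset.univ.erase (0 : Fin (n + 2)),
        (if p i < i then x (p i) * y i i else x i * y i (p i))
    = x 0 * y (Fin.last (n + 1)) (Fin.last (n + 1)) *
        ∏ i ∈ (Finset.univ.erase (0 : Fin (n + 2))).erase (Fin.last (n + 1)),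
          (y i i * ∑ j ∈ (Finset.Iic i).erase 0, x j + x i * ∑ j ∈ Finset.Ioi i, y i j) := by
  have hA := SRE.sumA (n := n) x y
  have hB := SRE.sumB (n := n) x y
  have hTS : (Finset.univ.filter fun p : Fin (n + 2) → Fin (n + 2) =>
        p 0 = 0 ∧ (∀ j, ∃ k : ℕ, p^[k] j = 0) ∧
          (Finset.univ.filter fun i : Fin (n + 2) => i ≠ 0 ∧ p i = 0).card = 1) = SRE.TS n := by
    rw [SRE.TS]
  have hW : ∀ p : Fin (n + 2) → Fin (n + 2),
      (∏ i ∈ Finset.univ.erase (0 : Fin (n + 2)),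
        (if p i < i then x (p i) * y i i else x i * y i (p i))) = SRE.W x y p := by
    intro p
    rfl
  have h1 : (∑ p ∈ (Finset.univ.filter fun p : Fin (n + 2) → Fin (n + 2) =>
        p 0 = 0 ∧ (∀ j, ∃ k : ℕ, p^[k] j = 0) ∧
          (Finset.univ.filter fun i : Fin (n + 2) => i ≠ 0 ∧ p i = 0).card = 1),
      ∏ i ∈ Finset.univ.erase (0 : Fin (n + 2)),
        (if p i < i then x (p i) * y i i else x i * y i (p i)))
      = ∑ p ∈ SRE.TS n, SRE.W x y p :=
    Finset.sum_congr hTS fun p _ => hW p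
  rw [h1, hA, hB]
  rfl
end
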